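/- arXiv:2105.09032 — 8 statements merged into one kernel-verified Lean document; each statement's English description precedes it below -/
import Mathlib

section
/- Let p be an m×n random matrix of p-values whose columns p_{·1},...,p_{·n} are mutually independent, and suppose each column p_{·j} is PRDS on the subset of its coordinates corresponding to true null hypotheses. Then the vector of all mn p-values is PRDS on the subset of coordinates corresponding to true null hypotheses. -/
open MeasureTheory ProbabilityTheory
open scoped ENNReal NNReal

noncomputable section

/-- `κ` is a version of the conditional probability of event `E` given `Z`. -/
def IsCondProbVersion {Ω γ : Type*} [MeasurableSpace Ω] [MeasurableSpace γ]
    (μ : Measure Ω) (Z : Ω → γ) (E : Set Ω) (κ : γ → ℝ) : Prop :=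
  ∀ s : Set γ, MeasurableSet s →
    ∫ x in s, κ x ∂(μ.map Z) = (μ (E ∩ Z ⁻¹' s)).toReal

/-- The random vector `X` is PRDS on the subset `I0` of its coordinates. -/
def PRDSOn {Ω ι : Type*} [MeasurableSpace Ω] (μ : Measure Ω)
    (X : Ω → ι → ℝ) (I0 : Set ι) : Prop :=
  ∀ D : Set (ι → ℝ), MeasurableSet D → IsUpperSet D → ∀ i ∈ I0,
    ∃ κ : ℝ → ℝ, Monotone κ ∧
      IsCondProbVersion μ (fun ω => X ω i) {ω | X ω ∈ D} κ

/-- The "monotone likelihood ratio" type condition characterizing existence of a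
monotone density of `ρ` with respect to `ν`. -/
def MyCond (ρ ν : Measure ℝ) : Prop :=
  ∀ x : ℝ, ∀ A B : Set ℝ, MeasurableSet A → MeasurableSet B →
    A ⊆ Set.Iic x → B ⊆ Set.Ici x → ρ A * ν B ≤ ρ B * ν A

lemma null_of_null_inter_Iic (ν : Measure ℝ) (N : Set ℝ)
    (h : ∀ x ∈ N, ν (N ∩ Set.Iic x) = 0) : ν N = 0 := by
  classical
  by_cases hmax : ∃ y ∈ N, ∀ x ∈ N, x ≤ y
  · obtain ⟨y, hy, hall⟩ := hmax
    exact measure_mono_null (Set.subset_inter Set.Subset.rfl hall) (h y hy)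
  · push_neg at hmax
    have cover : N ⊆ ⋃ r : ℚ,
        (if ∃ x ∈ N, (r : ℝ) ≤ x then N ∩ Set.Iic (r : ℝ) else ∅) := by
      intro y hy
      obtain ⟨x, hx, hyx⟩ := hmax y hy
      obtain ⟨r, hr1, hr2⟩ := exists_rat_btwn hyx
      refine Set.mem_iUnion.2 ⟨r, ?_⟩
      rw [if_pos ⟨x, hx, hr2.le⟩]
      exact ⟨hy, hr1.le⟩
    refine measure_mono_null cover (measure_iUnion_null fun r => ?_)
    by_cases hr : ∃ x ∈ N, (r : ℝ) ≤ x
    · rw [if_pos hr]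
      obtain ⟨x, hx, hrx⟩ := hr
      exact measure_mono_null
        (Set.inter_subset_inter_right _ (Set.Iic_subset_Iic.2 hrx)) (h x hx)
    · rw [if_neg hr]; simp

lemma null_of_null_inter_Ici (ν : Measure ℝ) (N : Set ℝ)
    (h : ∀ x ∈ N, ν (N ∩ Set.Ici x) = 0) : ν N = 0 := by
  classical
  by_cases hmin : ∃ y ∈ N, ∀ x ∈ N, y ≤ x
  · obtain ⟨y, hy, hall⟩ := hmin
    exact measure_mono_null (Set.subset_inter Set.Subset.rfl hall) (h y hy)
  · push_neg at hmin
    have cover : N ⊆ ⋃ r : ℚ,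
        (if ∃ x ∈ N, x ≤ (r : ℝ) then N ∩ Set.Ici (r : ℝ) else ∅) := by
      intro y hy
      obtain ⟨x, hx, hyx⟩ := hmin y hy
      obtain ⟨r, hr1, hr2⟩ := exists_rat_btwn hyx
      refine Set.mem_iUnion.2 ⟨r, ?_⟩
      rw [if_pos ⟨x, hx, hr1.le⟩]
      exact ⟨hy, hr2.le⟩
    refine measure_mono_null cover (measure_iUnion_null fun r => ?_)
    by_cases hr : ∃ x ∈ N, x ≤ (r : ℝ)
    · rw [if_pos hr]
      obtain ⟨x, hx, hrx⟩ := hr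
      exact measure_mono_null
        (Set.inter_subset_inter_right _ (Set.Ici_subset_Ici.2 hrx)) (h x hx)
    · rw [if_neg hr]; simp

lemma myCond_of_version (ρ ν : Measure ℝ) [IsFiniteMeasure ρ] [IsFiniteMeasure ν]
    {κ : ℝ → ℝ} (hmono : Monotone κ)
    (h : ∀ s : Set ℝ, MeasurableSet s → ∫ x in s, κ x ∂ν = (ρ s).toReal) :
    MyCond ρ ν := by
  intro x A B hA hB hAx hBx
  have hκm : Measurable κ := hmono.measurable
  -- A side
  have h1 : (ρ A).toReal ≤ κ x * (ν A).toReal := by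
    set An : ℕ → Set ℝ := fun n => A ∩ κ ⁻¹' Set.Ici (-(n : ℝ)) with hAn
    have hAnm : ∀ n, MeasurableSet (An n) := fun n => hA.inter (hκm measurableSet_Ici)
    have hAnmono : Monotone An := by
      intro a b hab z hz
      exact ⟨hz.1, Set.mem_preimage.2 (Set.mem_Ici.2 (le_trans (neg_le_neg (Nat.cast_le.2 hab)) (Set.mem_Ici.1 (Set.mem_preimage.1 hz.2))))⟩
    have hAun : ⋃ n, An n = A := by
      ext z
      simp only [hAn, Set.mem_iUnion, Set.mem_inter_iff, Set.mem_preimage, Set.mem_Ici]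
      constructor
      · rintro ⟨n, hz, _⟩; exact hz
      · intro hz
        obtain ⟨n, hn⟩ := exists_nat_ge (-κ z)
        exact ⟨n, hz, by linarith⟩
    have key : ∀ n : ℕ, (ρ (An n)).toReal ≤ κ x * (ν (An n)).toReal := by
      intro n
      have hint : IntegrableOn κ (An n) ν := by
        refine Measure.integrableOn_of_bounded (measure_ne_top _ _)
          hκm.aestronglyMeasurable (M := max |κ x| n) ?_
        refine (ae_restrict_iff' (hAnm n)).2 (Filter.Eventually.of_forall ?_)
        intro a ha
        rw [Real.norm_eq_abs, abs_le]
        constructor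
        · have : -(n : ℝ) ≤ κ a := ha.2
          have : -(max |κ x| n) ≤ -(n : ℝ) := neg_le_neg (le_max_right _ _)
          linarith [ha.2]
        · exact le_trans (hmono (hAx ha.1)) (le_trans (le_abs_self _) (le_max_left _ _))
      have := setIntegral_mono_on hint (integrableOn_const (measure_ne_top _ _))
        (hAnm n) (fun a ha => hmono (hAx ha.1) : ∀ a ∈ An n, κ a ≤ κ x)
      rw [h (An n) (hAnm n), setIntegral_const] at this
      simpa [smul_eq_mul, mul_comm, Measure.real] using this
    have t1 : Filter.Tendsto (fun n => (ρ (An n)).toReal) Filter.atTop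
        (nhds ((ρ A).toReal)) := by
      have := tendsto_measure_iUnion_atTop (μ := ρ) hAnmono
      rw [hAun] at this
      exact (ENNReal.tendsto_toReal (measure_ne_top _ _)).comp this
    have t2 : Filter.Tendsto (fun n => κ x * (ν (An n)).toReal) Filter.atTop
        (nhds (κ x * (ν A).toReal)) := by
      have := tendsto_measure_iUnion_atTop (μ := ν) hAnmono
      rw [hAun] at this
      exact ((ENNReal.tendsto_toReal (measure_ne_top _ _)).comp this).const_mul _
    exact le_of_tendsto_of_tendsto' t1 t2 key
  -- B side
  have h2 : κ x * (ν B).toReal ≤ (ρ B).toReal := by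
    set Bn : ℕ → Set ℝ := fun n => B ∩ κ ⁻¹' Set.Iic (n : ℝ) with hBn
    have hBnm : ∀ n, MeasurableSet (Bn n) := fun n => hB.inter (hκm measurableSet_Iic)
    have hBnmono : Monotone Bn := by
      intro a b hab z hz
      exact ⟨hz.1, Set.mem_preimage.2 (Set.mem_Iic.2 (le_trans (Set.mem_Iic.1 (Set.mem_preimage.1 hz.2)) (Nat.cast_le.2 hab)))⟩
    have hBun : ⋃ n, Bn n = B := by
      ext z
      simp only [hBn, Set.mem_iUnion, Set.mem_inter_iff, Set.mem_preimage, Set.mem_Iic]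
      constructor
      · rintro ⟨n, hz, _⟩; exact hz
      · intro hz
        obtain ⟨n, hn⟩ := exists_nat_ge (κ z)
        exact ⟨n, hz, hn⟩
    have key : ∀ n : ℕ, κ x * (ν (Bn n)).toReal ≤ (ρ (Bn n)).toReal := by
      intro n
      have hint : IntegrableOn κ (Bn n) ν := by
        refine Measure.integrableOn_of_bounded (measure_ne_top _ _)
          hκm.aestronglyMeasurable (M := max |κ x| n) ?_
        refine (ae_restrict_iff' (hBnm n)).2 (Filter.Eventually.of_forall ?_)
        intro a ha
        rw [Real.norm_eq_abs, abs_le]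
        constructor
        · have h1' : κ x ≤ κ a := hmono (hBx ha.1)
          have h2' : -(max |κ x| n) ≤ -|κ x| := neg_le_neg (le_max_left _ _)
          have := neg_abs_le (κ x)
          linarith
        · exact le_trans ha.2 (le_max_right _ _)
      have := setIntegral_mono_on (integrableOn_const (measure_ne_top _ _)) hint
        (hBnm n) (fun a ha => hmono (hBx ha.1) : ∀ a ∈ Bn n, κ x ≤ κ a)
      rw [h (Bn n) (hBnm n), setIntegral_const] at this
      simpa [smul_eq_mul, mul_comm, Measure.real] using this
    have t1 : Filter.Tendsto (fun n => (ρ (Bn n)).toReal) Filter.atTop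
        (nhds ((ρ B).toReal)) := by
      have := tendsto_measure_iUnion_atTop (μ := ρ) hBnmono
      rw [hBun] at this
      exact (ENNReal.tendsto_toReal (measure_ne_top _ _)).comp this
    have t2 : Filter.Tendsto (fun n => κ x * (ν (Bn n)).toReal) Filter.atTop
        (nhds (κ x * (ν B).toReal)) := by
      have := tendsto_measure_iUnion_atTop (μ := ν) hBnmono
      rw [hBun] at this
      exact ((ENNReal.tendsto_toReal (measure_ne_top _ _)).comp this).const_mul _
    exact le_of_tendsto_of_tendsto' t2 t1 key
  have hreal : (ρ A * ν B).toReal ≤ (ρ B * ν A).toReal := by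
    rw [ENNReal.toReal_mul, ENNReal.toReal_mul]
    calc (ρ A).toReal * (ν B).toReal
        ≤ (κ x * (ν A).toReal) * (ν B).toReal :=
          mul_le_mul_of_nonneg_right h1 ENNReal.toReal_nonneg
      _ = (κ x * (ν B).toReal) * (ν A).toReal := by ring
      _ ≤ (ρ B).toReal * (ν A).toReal :=
          mul_le_mul_of_nonneg_right h2 ENNReal.toReal_nonneg
  exact (ENNReal.toReal_le_toReal
    (ENNReal.mul_ne_top (measure_ne_top _ _) (measure_ne_top _ _))
    (ENNReal.mul_ne_top (measure_ne_top _ _) (measure_ne_top _ _))).1 hreal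

lemma version_of_myCond (ρ ν : Measure ℝ) [IsFiniteMeasure ρ] [IsFiniteMeasure ν]
    (hle : ρ ≤ ν) (hc : MyCond ρ ν) :
    ∃ κ : ℝ → ℝ, Monotone κ ∧
      ∀ s : Set ℝ, MeasurableSet s → ∫ x in s, κ x ∂ν = (ρ s).toReal := by
  classical
  have hle' : ∀ s : Set ℝ, ρ s ≤ ν s := Measure.le_iff'.1 hle
  have hac : ρ ≪ ν := Measure.absolutelyContinuous_of_le hle
  set f : ℝ → ℝ≥0∞ := ρ.rnDeriv ν with hf
  have hfm : Measurable f := Measure.measurable_rnDeriv ρ ν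
  have hρs : ∀ s : Set ℝ, MeasurableSet s → ρ s = ∫⁻ a in s, f a ∂ν := by
    intro s hs
    conv_lhs => rw [← Measure.withDensity_rnDeriv_eq ρ ν hac]
    rw [withDensity_apply _ hs]
  set g : ℝ → ℝ≥0∞ := fun x =>
    ⨆ (A : Set ℝ) (_ : MeasurableSet A) (_ : A ⊆ Set.Iic x), ρ A / ν A with hg
  have hg1 : ∀ x, g x ≤ 1 := by
    intro x
    refine iSup_le fun A => iSup_le fun _ => iSup_le fun _ => ?_
    exact ENNReal.div_le_of_le_mul (by simpa using hle' A)
  have hgmono : Monotone g := by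
    intro a b hab
    refine iSup_le fun A => iSup_le fun hA => iSup_le fun hAa => ?_
    exact le_iSup_of_le A (le_iSup_of_le hA
      (le_iSup_of_le (hAa.trans (Set.Iic_subset_Iic.2 hab)) le_rfl))
  have hratio_le : ∀ x, ∀ A : Set ℝ, MeasurableSet A → A ⊆ Set.Iic x →
      ρ A / ν A ≤ g x := by
    intro x A hA hAx
    exact le_iSup_of_le A (le_iSup_of_le hA (le_iSup_of_le hAx le_rfl))
  -- N1: g < q < f is null
  have hN1 : ∀ q : ℚ, ν {z | g z < (Real.toNNReal q : ℝ≥0∞) ∧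
      (Real.toNNReal q : ℝ≥0∞) < f z} = 0 := by
    intro q
    set c : ℝ≥0∞ := (Real.toNNReal q : ℝ≥0∞) with hcdef
    set N := {z | g z < c ∧ c < f z} with hN
    by_contra hne
    obtain ⟨x, hxN, hpos⟩ : ∃ x ∈ N, ν (N ∩ Set.Iic x) ≠ 0 := by
      by_contra hcon
      push_neg at hcon
      exact hne (null_of_null_inter_Iic ν N fun x hx => hcon x hx)
    set A : Set ℝ := Set.Iic x ∩ f ⁻¹' Set.Ioi c with hAdef
    have hAmeas : MeasurableSet A := measurableSet_Iic.inter (hfm measurableSet_Ioi)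
    have hAsub : A ⊆ Set.Iic x := Set.inter_subset_left
    have hνA : ν A ≠ 0 := by
      intro h0
      refine hpos (measure_mono_null ?_ h0)
      intro z hz
      exact ⟨hz.2, Set.mem_preimage.2 (Set.mem_Ioi.2 hz.1.2)⟩
    -- upper bound: ρ A < c * ν A
    have hub : ρ A < c * ν A := by
      have h1 : ρ A / ν A < c := lt_of_le_of_lt (hratio_le x A hAmeas hAsub) hxN.1
      exact (ENNReal.div_lt_iff (Or.inl hνA) (Or.inl (measure_ne_top _ _))).1 h1
    -- lower bound: c * ν A ≤ ρ A
    have hlb : c * ν A ≤ ρ A := by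
      rw [hρs A hAmeas]
      calc c * ν A = ∫⁻ _ in A, c ∂ν := (setLIntegral_const A c).symm
        _ ≤ ∫⁻ a in A, f a ∂ν :=
          setLIntegral_mono hfm (fun a ha => (Set.mem_Ioi.1 (Set.mem_preimage.1 ha.2)).le)
    exact absurd hub (not_lt_of_ge hlb)
  -- N2: f < q < g is null
  have hN2 : ∀ q : ℚ, ν {z | f z < (Real.toNNReal q : ℝ≥0∞) ∧
      (Real.toNNReal q : ℝ≥0∞) < g z} = 0 := by
    intro q
    set c : ℝ≥0∞ := (Real.toNNReal q : ℝ≥0∞) with hcdef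
    set N := {z | f z < c ∧ c < g z} with hN
    by_contra hne
    obtain ⟨x, hxN, hpos⟩ : ∃ x ∈ N, ν (N ∩ Set.Ici x) ≠ 0 := by
      by_contra hcon
      push_neg at hcon
      exact hne (null_of_null_inter_Ici ν N fun x hx => hcon x hx)
    set B : Set ℝ := Set.Ici x ∩ f ⁻¹' Set.Iio c with hBdef
    have hBmeas : MeasurableSet B := measurableSet_Ici.inter (hfm measurableSet_Iio)
    have hBsub : B ⊆ Set.Ici x := Set.inter_subset_left
    have hνB : ν B ≠ 0 := by
      intro h0
      refine hpos (measure_mono_null ?_ h0)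
      intro z hz
      exact ⟨hz.2, Set.mem_preimage.2 (Set.mem_Iio.2 hz.1.1)⟩
    -- from c < g x extract a witness A
    obtain ⟨A, hA, hAx, hAgt⟩ : ∃ A : Set ℝ, MeasurableSet A ∧ A ⊆ Set.Iic x ∧
        c < ρ A / ν A := by
      have := hxN.2
      rw [hg] at this
      simp only [lt_iSup_iff] at this
      obtain ⟨A, hA, hAx, hgt⟩ := this
      exact ⟨A, hA, hAx, hgt⟩
    have hνA : ν A ≠ 0 := by
      intro h0
      have hρA : ρ A = 0 := le_antisymm (h0 ▸ hle' A) zero_le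
      rw [hρA, h0] at hAgt
      simp at hAgt
    have hρAgt : c * ν A < ρ A :=
      (ENNReal.lt_div_iff_mul_lt (Or.inl hνA) (Or.inl (measure_ne_top _ _))).1 hAgt
    have hρBle : ρ B ≤ c * ν B := by
      rw [hρs B hBmeas]
      calc ∫⁻ a in B, f a ∂ν ≤ ∫⁻ _ in B, c ∂ν :=
            setLIntegral_mono measurable_const
              (fun a ha => (Set.mem_Iio.1 (Set.mem_preimage.1 ha.2)).le)
        _ = c * ν B := setLIntegral_const B c
    have hCond := hc x A B hA hBmeas hAx hBsub
    have : c * ν A * ν B < c * ν A * ν B := by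
      calc c * ν A * ν B < ρ A * ν B :=
            by have := (ENNReal.mul_lt_mul_right hνB (measure_ne_top _ _)) hρAgt; rwa [mul_comm (ν B), mul_comm (ν B)] at this
        _ ≤ ρ B * ν A := hCond
        _ ≤ c * ν B * ν A := mul_le_mul_left hρBle _
        _ = c * ν A * ν B := by ring
    exact absurd this (lt_irrefl _)
  -- a.e. equality of g and f
  have hcover : {z | g z ≠ f z} ⊆ ⋃ q : ℚ,
      ({z | g z < (Real.toNNReal q : ℝ≥0∞) ∧ (Real.toNNReal q : ℝ≥0∞) < f z} ∪
       {z | f z < (Real.toNNReal q : ℝ≥0∞) ∧ (Real.toNNReal q : ℝ≥0∞) < g z}) := by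
    intro z hz
    rcases lt_or_gt_of_ne hz with h | h
    · obtain ⟨q, _, h1, h2⟩ := ENNReal.lt_iff_exists_rat_btwn.1 h
      exact Set.mem_iUnion.2 ⟨q, Or.inl ⟨h1, h2⟩⟩
    · obtain ⟨q, _, h1, h2⟩ := ENNReal.lt_iff_exists_rat_btwn.1 h
      exact Set.mem_iUnion.2 ⟨q, Or.inr ⟨h1, h2⟩⟩
  have hnull : ν {z | g z ≠ f z} = 0 :=
    measure_mono_null hcover
      (measure_iUnion_null fun q => measure_union_null (hN1 q) (hN2 q))
  have hae : (fun z => (g z).toReal) =ᵐ[ν] (fun z => (f z).toReal) := by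
    have : ∀ᵐ z ∂ν, g z = f z := by
      rw [ae_iff]
      exact hnull
    exact this.mono fun z hz => by simp only [hz]
  refine ⟨fun z => (g z).toReal, ?_, ?_⟩
  · intro a b hab
    exact ENNReal.toReal_mono (((hg1 b).trans_lt ENNReal.one_lt_top).ne) (hgmono hab)
  · intro s hs
    rw [setIntegral_congr_ae hs (hae.mono fun z hz _ => hz)]
    exact Measure.setIntegral_toReal_rnDeriv' hac hs

/-- If the columns of an `m × n` matrix of p-values are mutually independent and each
column is PRDS on its true-null coordinates, then the whole vector of `m·n` p-values is
PRDS on the set of all true-null coordinates. -/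
theorem stmt1 {Ω : Type*} [MeasurableSpace Ω] (μ : Measure Ω) [IsProbabilityMeasure μ]
    {m n : ℕ} (p : Ω → Fin m × Fin n → ℝ) (hp : Measurable p)
    (hrange : ∀ ω ij, p ω ij ∈ Set.Icc (0:ℝ) 1)
    (T : Set (Fin m × Fin n))  -- indices of true null hypotheses
    (hcolindep : iIndepFun
      (fun (j : Fin n) (ω : Ω) => fun i : Fin m => p ω (i, j)) μ)
    (hcolPRDS : ∀ j : Fin n,
      PRDSOn μ (fun ω (i : Fin m) => p ω (i, j)) {i : Fin m | (i, j) ∈ T}) :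
    PRDSOn μ (fun ω => p ω) T := by
  classical
  intro D hD hDup ij hij
  obtain ⟨i, j⟩ := ij
  set X : Ω → Fin m → ℝ := fun ω => fun i' : Fin m => p ω (i', j) with hXdef
  have hXm : Measurable X :=
    measurable_pi_lambda _ fun i' => (measurable_pi_apply _).comp hp
  set Y : Ω → ({j' : Fin n // j' ≠ j} → Fin m → ℝ) :=
    fun ω => fun j' => fun i' : Fin m => p ω (i', j'.1) with hYdef
  have hYm : Measurable Y :=
    measurable_pi_lambda _ fun j' =>
      measurable_pi_lambda _ fun i' => (measurable_pi_apply _).comp hp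
  set F : (({j' : Fin n // j' ≠ j} → Fin m → ℝ) × (Fin m → ℝ)) → (Fin m × Fin n → ℝ) :=
    fun q => fun ab => if h : ab.2 = j then q.2 ab.1 else q.1 ⟨ab.2, h⟩ ab.1 with hFdef
  have hFm : Measurable F := by
    refine measurable_pi_lambda _ fun ab => ?_
    by_cases h : ab.2 = j
    · simp only [hFdef, dif_pos h]
      exact (measurable_pi_apply ab.1).comp measurable_snd
    · simp only [hFdef, dif_neg h]
      exact (measurable_pi_apply ab.1).comp
        ((measurable_pi_apply (⟨ab.2, h⟩ : {j' : Fin n // j' ≠ j})).comp measurable_fst)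
  have hFp : ∀ ω, F (Y ω, X ω) = p ω := by
    intro ω; funext ab
    rcases ab with ⟨a, b⟩
    by_cases h : b = j
    · subst h; simp [hFdef, hXdef]
    · simp [hFdef, hYdef, h]
  have hFmono : ∀ y (v v' : Fin m → ℝ), v ≤ v' → F (y, v) ≤ F (y, v') := by
    intro y v v' hvv' ab
    by_cases h : ab.2 = j
    · simp only [hFdef, dif_pos h]; exact hvv' ab.1
    · simp only [hFdef, dif_neg h]; exact le_rfl
  -- independence of Y and X
  have hindep : IndepFun Y X μ := by
    have h_le : ∀ j' : Fin n, MeasurableSpace.comap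
        (fun ω => fun i' : Fin m => p ω (i', j')) MeasurableSpace.pi ≤
        (inferInstance : MeasurableSpace Ω) :=
      fun j' => (measurable_pi_lambda _ fun i' =>
        (measurable_pi_apply _).comp hp).comap_le
    have hdisj : Disjoint {j' : Fin n | j' ≠ j} ({j} : Set (Fin n)) :=
      Set.disjoint_singleton_right.2 (by simp)
    have hI := indep_iSup_of_disjoint h_le hcolindep hdisj
    set M : MeasurableSpace Ω :=
      ⨆ j' ∈ {j' : Fin n | j' ≠ j}, MeasurableSpace.comap
        (fun ω => fun i' : Fin m => p ω (i', j')) MeasurableSpace.pi with hMdef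
    have hYle : MeasurableSpace.comap Y MeasurableSpace.pi ≤ M := by
      have hmeas : @Measurable Ω _ M _ Y := by
        refine @measurable_pi_lambda Ω _ _ M _ Y fun j' => ?_
        refine @Measurable.mono Ω _ (MeasurableSpace.comap
          (fun ω => fun i' : Fin m => p ω (i', j'.1)) MeasurableSpace.pi) M _ _ _
          (Measurable.of_comap_le le_rfl) ?_ le_rfl
        exact le_iSup₂ (f := fun (j'' : Fin n) (_ : j'' ∈ {j' : Fin n | j' ≠ j}) =>
          MeasurableSpace.comap (fun ω => fun i' : Fin m => p ω (i', j''))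
            MeasurableSpace.pi) j'.1 j'.2
      exact (@measurable_iff_comap_le Ω _ M _ Y).1 hmeas
    have hXle : MeasurableSpace.comap X MeasurableSpace.pi ≤
        ⨆ j' ∈ ({j} : Set (Fin n)), MeasurableSpace.comap
          (fun ω => fun i' : Fin m => p ω (i', j')) MeasurableSpace.pi := by
      exact le_iSup₂ (f := fun (j'' : Fin n) (_ : j'' ∈ ({j} : Set (Fin n))) =>
        MeasurableSpace.comap (fun ω => fun i' : Fin m => p ω (i', j''))
          MeasurableSpace.pi) j rfl
    exact indep_of_indep_of_le_right (indep_of_indep_of_le_left hI hYle) hXle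
  have hmap : μ.map (fun ω => (Y ω, X ω)) = (μ.map Y).prod (μ.map X) :=
    (indepFun_iff_map_prod_eq_prod_map_map hYm.aemeasurable hXm.aemeasurable).1 hindep
  set Z : Ω → ℝ := fun ω => p ω (i, j) with hZdef
  have hZm : Measurable Z := (measurable_pi_apply (i, j)).comp hp
  set νX : Measure (Fin m → ℝ) := μ.map X with hνXdef
  set νY : Measure ({j' : Fin n // j' ≠ j} → Fin m → ℝ) := μ.map Y with hνYdef
  haveI : IsProbabilityMeasure νX := Measure.isProbabilityMeasure_map hXm.aemeasurable
  haveI : IsProbabilityMeasure νY := Measure.isProbabilityMeasure_map hYm.aemeasurable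
  set lam : Measure ℝ := μ.map Z with hlamdef
  haveI : IsProbabilityMeasure lam := Measure.isProbabilityMeasure_map hZm.aemeasurable
  set E : Set Ω := {ω | p ω ∈ D} with hEdef
  have hEm : MeasurableSet E := hp hD
  set ρ : Measure ℝ := (μ.restrict E).map Z with hρdef
  haveI : IsFiniteMeasure ρ := Measure.isFiniteMeasure_map _ _
  have hρle : ρ ≤ lam := Measure.map_mono Measure.restrict_le_self hZm
  set Dy : ({j' : Fin n // j' ≠ j} → Fin m → ℝ) → Set (Fin m → ℝ) :=
    fun y => {v | F (y, v) ∈ D} with hDydef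
  have hDym : ∀ y, MeasurableSet (Dy y) :=
    fun y => (hFm.comp measurable_prodMk_left) hD
  set ρy : ({j' : Fin n // j' ≠ j} → Fin m → ℝ) → Measure ℝ :=
    fun y => (νX.restrict (Dy y)).map (fun v => v i) with hρydef
  haveI : ∀ y, IsFiniteMeasure (ρy y) := fun y => Measure.isFiniteMeasure_map _ _
  have hρyapp : ∀ y, ∀ s : Set ℝ, MeasurableSet s →
      ρy y s = νX ((fun v : Fin m → ℝ => v i) ⁻¹' s ∩ Dy y) := by
    intro y s hs
    rw [hρydef]
    rw [Measure.map_apply (measurable_pi_apply i) hs,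
      Measure.restrict_apply (measurable_pi_apply i hs)]
  -- per-y condition
  have hcondy : ∀ y, MyCond (ρy y) lam := by
    intro y
    have hup : IsUpperSet (Dy y) := fun v v' hvv' hv => hDup (hFmono y v v' hvv') hv
    obtain ⟨κy, hκymono, hκyver⟩ := hcolPRDS j (Dy y) (hDym y) hup i hij
    refine myCond_of_version (ρy y) lam hκymono ?_
    intro s hs
    have h1 := hκyver s hs
    have hZX : (fun ω => X ω i) = Z := rfl
    rw [hZX] at h1
    rw [← hlamdef] at h1
    rw [h1, hρyapp y s hs]
    congr 1
    rw [hνXdef, Measure.map_apply hXm (((measurable_pi_apply i) hs).inter (hDym y))]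
    congr 1
    ext ω
    simp only [Set.mem_inter_iff, Set.mem_preimage, Set.mem_setOf_eq]
    tauto
  -- mixture identity
  have hmix : ∀ s : Set ℝ, MeasurableSet s → ρ s = ∫⁻ y, ρy y s ∂νY := by
    intro s hs
    have hSm : MeasurableSet {q : ({j' : Fin n // j' ≠ j} → Fin m → ℝ) × (Fin m → ℝ) |
        F q ∈ D ∧ q.2 i ∈ s} :=
      (hFm hD).inter (((measurable_pi_apply i).comp measurable_snd) hs)
    have step1 : ρ s = μ (E ∩ Z ⁻¹' s) := by
      rw [hρdef, Measure.map_apply hZm hs, Measure.restrict_apply (hZm hs), Set.inter_comm]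
    have step2 : E ∩ Z ⁻¹' s = (fun ω => (Y ω, X ω)) ⁻¹'
        {q : ({j' : Fin n // j' ≠ j} → Fin m → ℝ) × (Fin m → ℝ) | F q ∈ D ∧ q.2 i ∈ s} := by
      ext ω
      simp only [hEdef, Set.mem_inter_iff, Set.mem_setOf_eq, Set.mem_preimage, hFp ω]
      exact Iff.rfl
    rw [step1, step2, ← Measure.map_apply (hYm.prodMk hXm) hSm, hmap,
      Measure.prod_apply hSm]
    congr 1
    funext y
    have : Prod.mk y ⁻¹'
        {q : ({j' : Fin n // j' ≠ j} → Fin m → ℝ) × (Fin m → ℝ) | F q ∈ D ∧ q.2 i ∈ s} =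
        (fun v : Fin m → ℝ => v i) ⁻¹' s ∩ Dy y := by
      ext v
      simp only [Set.mem_preimage, Set.mem_setOf_eq, Set.mem_inter_iff, hDydef]
      tauto
    rw [this, hρyapp y s hs]
  -- global condition and conclusion
  have hcond : MyCond ρ lam := by
    intro x A B hA hB hAx hBx
    rw [hmix A hA, hmix B hB]
    calc (∫⁻ y, ρy y A ∂νY) * lam B = ∫⁻ y, ρy y A * lam B ∂νY :=
          (lintegral_mul_const' _ _ (measure_ne_top _ _)).symm
      _ ≤ ∫⁻ y, ρy y B * lam A ∂νY :=
          lintegral_mono fun y => hcondy y x A B hA hB hAx hBx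
      _ = (∫⁻ y, ρy y B ∂νY) * lam A := lintegral_mul_const' _ _ (measure_ne_top _ _)
  obtain ⟨κ, hκmono, hκint⟩ := version_of_myCond ρ lam hρle hcond
  refine ⟨κ, hκmono, ?_⟩
  intro s hs
  rw [show μ.map (fun ω => p ω (i, j)) = lam from rfl, hκint s hs]
  congr 1
  rw [hρdef, Measure.map_apply hZm hs, Measure.restrict_apply (hZm hs), Set.inter_comm]
end
end

section
/- Let p be an m×n random matrix of p-values with mutually independent columns, each column PRDS on its true-null coordinates, and assume in addition that within each row i the entries p_{i1},...,p_{in} are mutually independent. Fix a row i and a column j such that H_{ij} is a true null. Then for every nondecreasing set D ⊆ [0,1]^{mn} and every vector y ∈ [0,1]^{n-1}, the map x ↦ P(p ∈ D | p_{ij} = x, p_{i(-j)} = y) is nondecreasing in x, where p_{i(-j)} denotes the entries of row i excluding column j. -/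
open MeasureTheory ProbabilityTheory

noncomputable section

open Set
open scoped ENNReal


lemma aux_J_null (α : Measure ℝ) [IsFiniteMeasure α] :
    α {x | α {x} = 0 ∧ ∃ q : ℚ, x < (q:ℝ) ∧ α (Ioo x q) = 0} = 0 := by
  have hsub : {x | α {x} = 0 ∧ ∃ q : ℚ, x < (q:ℝ) ∧ α (Ioo x q) = 0} ⊆
      ⋃ q : ℚ, {x | α {x} = 0 ∧ x < (q:ℝ) ∧ α (Ioo x (q:ℝ)) = 0} := by
    intro x hx
    rcases hx.2 with ⟨q, h1, h2⟩
    exact mem_iUnion.2 ⟨q, hx.1, h1, h2⟩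
  refine measure_mono_null hsub (measure_iUnion_null fun q => ?_)
  set A := {x | α {x} = 0 ∧ x < (q:ℝ) ∧ α (Ioo x (q:ℝ)) = 0} with hA
  have hsub2 : A ⊆ {x | IsLeast A x} ∪ ⋃ r : {r : ℚ // α (Ioo (r:ℝ) (q:ℝ)) = 0}, Ioo (r:ℝ) (q:ℝ) := by
    intro a ha
    by_cases hleast : IsLeast A a
    · exact Or.inl hleast
    · have hex : ∃ x ∈ A, x < a := by
        by_contra hc
        push_neg at hc
        exact hleast ⟨ha, fun b hb => le_of_not_gt fun h => absurd h (not_lt.2 (hc b hb))⟩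
      obtain ⟨x, hx, hxa⟩ := hex
      obtain ⟨r, hr1, hr2⟩ := exists_rat_btwn hxa
      refine Or.inr (mem_iUnion.2 ⟨⟨r, measure_mono_null (Ioo_subset_Ioo_left hr1.le) hx.2.2⟩,
        ⟨hr2, ha.2.1⟩⟩)
  refine measure_mono_null hsub2 (measure_union_null ?_ (measure_iUnion_null fun r => r.2))
  rcases eq_empty_or_nonempty {x | IsLeast A x} with h | ⟨a, ha⟩
  · simp [h]
  · have hs : {x | IsLeast A x} ⊆ {a} := fun b hb =>
      mem_singleton_iff.2 (le_antisymm (hb.2 ha.1) (ha.2 hb.1))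
    exact measure_mono_null hs ha.1.1

lemma exists_mono_version {Y : Type*} [MeasurableSpace Y]
    (α : Measure ℝ) [IsFiniteMeasure α] (β : Measure Y) [IsFiniteMeasure β]
    (H : ℝ × Y → ℝ) (hH : Measurable H) (h01 : ∀ z, H z ∈ Icc (0:ℝ) 1)
    (hae : ∀ᵐ y ∂β, ∀ᵐ z ∂(α.prod α), z.1 ≤ z.2 → H (z.1, y) ≤ H (z.2, y)) :
    ∃ G : ℝ × Y → ℝ, (∀ y, Monotone fun x => G (x, y)) ∧ G =ᵐ[α.prod β] H := by
  classical
  -- the "bad pair relative to z" set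
  set N : Set (ℝ × (ℝ × Y)) := {w | (w.2.1 ≤ w.1 ∧ ¬ H (w.2.1, w.2.2) ≤ H (w.1, w.2.2)) ∨
      (w.1 ≤ w.2.1 ∧ ¬ H (w.1, w.2.2) ≤ H (w.2.1, w.2.2))} with hNdef
  have hNmeas : MeasurableSet N := by
    have h1 : Measurable fun w : ℝ × (ℝ × Y) => H (w.2.1, w.2.2) := hH.comp (by fun_prop)
    have h2 : Measurable fun w : ℝ × (ℝ × Y) => H (w.1, w.2.2) := hH.comp (by fun_prop)
    refine MeasurableSet.union ?_ ?_
    · exact (measurableSet_le (measurable_fst.comp measurable_snd) measurable_fst).inter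
        (measurableSet_le h1 h2).compl
    · exact (measurableSet_le measurable_fst (measurable_fst.comp measurable_snd)).inter
        (measurableSet_le h2 h1).compl
  set S : Set (ℝ × Y) := {z | α ((fun x => (x, z)) ⁻¹' N) = 0} with hSdef
  have hSmeas : MeasurableSet S := by
    have := measurable_measure_prodMk_right (μ := α) hNmeas
    exact this (measurableSet_singleton 0)
  set J : Set ℝ := {x | α {x} = 0 ∧ ∃ q : ℚ, x < (q:ℝ) ∧ α (Ioo x (q:ℝ)) = 0} with hJdef
  -- E of good x's for fixed y
  set E : Y → Set ℝ := fun y => {x | (x, y) ∈ S ∧ x ∉ J} with hEdef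
  -- monotonicity of H on E y
  have hmonoE : ∀ y, ∀ x1 ∈ E y, ∀ x2 ∈ E y, x1 ≤ x2 → H (x1, y) ≤ H (x2, y) := by
    intro y x1 hx1 x2 hx2 hle
    rcases eq_or_lt_of_le hle with rfl | hlt
    · exact le_rfl
    by_cases hatom : α {x1} = 0
    · obtain ⟨q, hq1, hq2⟩ := exists_rat_btwn hlt
      have hpos : α (Ioo x1 (q:ℝ)) ≠ 0 := fun h => hx1.2 ⟨hatom, q, hq1, h⟩
      have hnull : α (((fun x => (x, (x1, y))) ⁻¹' N) ∪ ((fun x => (x, (x2, y))) ⁻¹' N)) = 0 :=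
        measure_union_null hx1.1 hx2.1
      have hnsub : ¬ (Ioo x1 (q:ℝ) ⊆ ((fun x => (x, (x1, y))) ⁻¹' N) ∪
          ((fun x => (x, (x2, y))) ⁻¹' N)) := fun hsub => hpos (measure_mono_null hsub hnull)
      obtain ⟨x', hx'I, hx'N⟩ := not_subset.1 hnsub
      have h1 : H (x1, y) ≤ H (x', y) := by
        by_contra hc
        exact hx'N (Or.inl (Or.inl ⟨hx'I.1.le, hc⟩))
      have h2 : H (x', y) ≤ H (x2, y) := by
        by_contra hc
        exact hx'N (Or.inr (Or.inr ⟨(hx'I.2.trans hq2).le, hc⟩))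
      exact h1.trans h2
    · by_contra hcon
      have hmem : {x1} ⊆ (fun x => (x, (x2, y))) ⁻¹' N :=
        singleton_subset_iff.2 (Or.inr ⟨hle, hcon⟩)
      exact hatom (measure_mono_null hmem hx2.1)
  -- define G
  set G : ℝ × Y → ℝ := fun z => sSup (insert 0 ((fun x' => H (x', z.2)) '' (E z.2 ∩ Iic z.1)))
    with hGdef
  have hbdd : ∀ z : ℝ × Y, (insert (0:ℝ) ((fun x' => H (x', z.2)) '' (E z.2 ∩ Iic z.1))) ⊆
      Iic (1:ℝ) := by
    rintro z b (rfl | ⟨x', _, rfl⟩)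
    · exact mem_Iic.2 zero_le_one
    · exact (h01 _).2
  have hGmono : ∀ y, Monotone fun x => G (x, y) := by
    intro y a b hab
    refine csSup_le_csSup (bddAbove_Iic.mono (hbdd (b, y))) ⟨0, mem_insert _ _⟩ ?_
    exact insert_subset_insert (image_mono (inter_subset_inter_right _ (Iic_subset_Iic.2 hab)))
  have hGE : ∀ y, ∀ x ∈ E y, G (x, y) = H (x, y) := by
    intro y x hx
    refine le_antisymm ?_ ?_
    · refine csSup_le ⟨0, mem_insert _ _⟩ ?_
      rintro b (rfl | ⟨x', ⟨hx'E, hx'le⟩, rfl⟩)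
      · exact (h01 _).1
      · exact hmonoE y x' hx'E x hx hx'le
    · exact le_csSup (bddAbove_Iic.mono (hbdd (x, y))) (Or.inr ⟨x, ⟨hx, mem_Iic.2 le_rfl⟩, rfl⟩)
  refine ⟨G, hGmono, ?_⟩
  -- null sets
  obtain ⟨Jm, hJJm, hJmmeas, hJm0⟩ := exists_measurable_superset_of_null (aux_J_null α)
  have hScnull : (α.prod β) Sᶜ = 0 := by
    rw [Measure.prod_apply_symm hSmeas.compl]
    have hmeas : Measurable fun y => α ((fun x => (x, y)) ⁻¹' Sᶜ) :=
      measurable_measure_prodMk_right hSmeas.compl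
    rw [lintegral_eq_zero_iff hmeas]
    filter_upwards [hae] with y hy
    -- bad pairs for this y
    set Pb : Set (ℝ × ℝ) := {z | ¬ (z.1 ≤ z.2 → H (z.1, y) ≤ H (z.2, y))} with hPbdef
    have hPbmeas : MeasurableSet Pb := by
      have h1 : Measurable fun z : ℝ × ℝ => H (z.1, y) := hH.comp (by fun_prop)
      have h2 : Measurable fun z : ℝ × ℝ => H (z.2, y) := hH.comp (by fun_prop)
      have : Pb = {z : ℝ × ℝ | z.1 ≤ z.2} ∩ {z | ¬ H (z.1, y) ≤ H (z.2, y)} := by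
        ext z; by_cases h : z.1 ≤ z.2 <;> simp [hPbdef, h]
      rw [this]
      exact (measurableSet_le measurable_fst measurable_snd).inter (measurableSet_le h1 h2).compl
    have hPbnull : (α.prod α) Pb = 0 := ae_iff.1 hy
    have hQnull : (α.prod α) (Prod.swap ⁻¹' Pb) = 0 := by
      have : (α.prod α) (Prod.swap ⁻¹' Pb) = ((α.prod α).map Prod.swap) Pb :=
        (Measure.map_apply measurable_swap hPbmeas).symm
      rw [this, Measure.prod_swap]
      exact hPbnull
    have hunion : (α.prod α) (Pb ∪ Prod.swap ⁻¹' Pb) = 0 :=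
      measure_union_null hPbnull hQnull
    have hsec := (Measure.measure_prod_null (hPbmeas.union (measurable_swap hPbmeas))).1 hunion
    have hae2 : ∀ᵐ x ∂α, (x, y) ∈ S := by
      filter_upwards [hsec] with x hx
      refine measure_mono_null ?_ hx
      intro x' hx'
      rcases hx' with ⟨h1, h2⟩ | ⟨h1, h2⟩
      · exact Or.inl (fun h => h2 (h h1))
      · exact Or.inr (fun h => h2 (h h1))
    exact ae_iff.1 hae2
  have hbadsub : {z : ℝ × Y | G z ≠ H z} ⊆ Sᶜ ∪ (Jm ×ˢ (univ : Set Y)) := by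
    intro z hz
    by_cases h1 : z ∈ S
    · by_cases h2 : z.1 ∈ Jm
      · exact Or.inr ⟨h2, mem_univ _⟩
      · exact absurd (hGE z.2 z.1 ⟨h1, fun hJ => h2 (hJJm hJ)⟩) hz
    · exact Or.inl h1
  have hnull : (α.prod β) {z | G z ≠ H z} = 0 := by
    refine measure_mono_null hbadsub (measure_union_null hScnull ?_)
    rw [Measure.prod_prod, hJm0, zero_mul]
  exact ae_iff.2 hnull


lemma version_lemma {Ω V W Y : Type*} [MeasurableSpace Ω] [MeasurableSpace V] [MeasurableSpace W]
    [MeasurableSpace Y] [StandardBorelSpace V] [Nonempty V] [StandardBorelSpace W] [Nonempty W]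
    (μ : Measure Ω) [IsProbabilityMeasure μ]
    (Xc : Ω → V) (Wf : Ω → W) (hXc : Measurable Xc) (hWf : Measurable Wf)
    (u : V → ℝ) (hu : Measurable u) (v : W → Y) (hv : Measurable v)
    (hindep : IndepFun Xc Wf μ)
    (Dt : Set (V × W)) (hDt : MeasurableSet Dt) :
    (μ.restrict ((fun ω => (Xc ω, Wf ω)) ⁻¹' Dt)).map (fun ω => (u (Xc ω), v (Wf ω))) =
      ((μ.map (fun ω => u (Xc ω))).prod (μ.map (fun ω => v (Wf ω)))).withDensity
        (fun z => ((condDistrib Xc (fun ω => u (Xc ω)) μ z.1).prod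
          (condDistrib Wf (fun ω => v (Wf ω)) μ z.2)) Dt) := by
  set U : Ω → ℝ := fun ω => u (Xc ω) with hUdef
  set Vf : Ω → Y := fun ω => v (Wf ω) with hVfdef
  have hUm : Measurable U := hu.comp hXc
  have hVm : Measurable Vf := hv.comp hWf
  set η := condDistrib Xc U μ with hηdef
  set ξ := condDistrib Wf Vf μ with hξdef
  set lawA := μ.map (fun ω => (U ω, Xc ω)) with hlawA
  set lawB := μ.map (fun ω => (Vf ω, Wf ω)) with hlawB
  haveI : IsProbabilityMeasure lawA := Measure.isProbabilityMeasure_map (hUm.prodMk hXc).aemeasurable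
  haveI : IsProbabilityMeasure lawB := Measure.isProbabilityMeasure_map (hVm.prodMk hWf).aemeasurable
  have hA : (μ.map U) ⊗ₘ η = lawA := by
    have h1 : lawA.fst = μ.map U := Measure.fst_map_prodMk hXc
    have h2 : η = lawA.condKernel := by rw [hηdef, condDistrib]
    rw [h2, ← h1]
    exact Measure.disintegrate lawA lawA.condKernel
  have hB : (μ.map Vf) ⊗ₘ ξ = lawB := by
    have h1 : lawB.fst = μ.map Vf := Measure.fst_map_prodMk hWf
    have h2 : ξ = lawB.condKernel := by rw [hξdef, condDistrib]
    rw [h2, ← h1]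
    exact Measure.disintegrate lawB lawB.condKernel
  set Gd : ℝ × Y → ℝ≥0∞ := fun z => ((η z.1).prod (ξ z.2)) Dt with hGddef
  have hGdmeas : Measurable Gd := by
    have h := Kernel.measurable_coe
      ((η.comap Prod.fst measurable_fst) ×ₖ (ξ.comap Prod.snd measurable_snd)) hDt
    simpa [Kernel.prod_apply, Kernel.comap_apply] using h
  have hGdle : ∀ z, Gd z ≤ 1 := by
    intro z
    haveI : IsProbabilityMeasure ((η z.1).prod (ξ z.2)) := by infer_instance
    exact prob_le_one
  -- the function g
  have hpair : μ.map (fun ω => ((U ω, Xc ω), (Vf ω, Wf ω))) = lawA.prod lawB := by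
    have hcomp : IndepFun (fun ω => (U ω, Xc ω)) (fun ω => (Vf ω, Wf ω)) μ :=
      hindep.comp (hu.prodMk measurable_id) (hv.prodMk measurable_id)
    exact (indepFun_iff_map_prod_eq_prod_map_map (hUm.prodMk hXc).aemeasurable
      (hVm.prodMk hWf).aemeasurable).1 hcomp
  -- rectangles
  have hrect : ∀ s1 : Set ℝ, MeasurableSet s1 → ∀ s2 : Set Y, MeasurableSet s2 →
      ((μ.restrict ((fun ω => (Xc ω, Wf ω)) ⁻¹' Dt)).map (fun ω => (U ω, Vf ω))) (s1 ×ˢ s2) =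
      (((μ.map U).prod (μ.map Vf)).withDensity Gd) (s1 ×ˢ s2) := by
    intro s1 hs1 s2 hs2
    set g : V → ℝ≥0∞ := fun xv => lawB (s2 ×ˢ {wv | (xv, wv) ∈ Dt}) with hgdef
    have hgm : Measurable g := by
      have hT : MeasurableSet {q : V × (Y × W) | q.2.1 ∈ s2 ∧ (q.1, q.2.2) ∈ Dt} :=
        ((hs2.preimage (measurable_fst.comp measurable_snd)).inter
          (hDt.preimage (measurable_fst.prodMk (measurable_snd.comp measurable_snd))))
      have h := measurable_measure_prodMk_left (ν := lawB) hT
      have heq : g = fun xv => lawB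
          (Prod.mk xv ⁻¹' {q : V × (Y × W) | q.2.1 ∈ s2 ∧ (q.1, q.2.2) ∈ Dt}) := by
        funext xv
        rfl
      rw [heq]
      exact h
    -- LHS
    have hsec : ∀ xv : V, MeasurableSet {wv | (xv, wv) ∈ Dt} :=
      fun xv => hDt.preimage measurable_prodMk_left
    set R : Set ((ℝ × V) × (Y × W)) := ((s1 ×ˢ (univ : Set V)) ×ˢ (s2 ×ˢ (univ : Set W))) ∩
      ((fun q : (ℝ × V) × (Y × W) => (q.1.2, q.2.2)) ⁻¹' Dt) with hRdef
    have hRmeas : MeasurableSet R :=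
      (((hs1.prod MeasurableSet.univ)).prod (hs2.prod MeasurableSet.univ)).inter
        (hDt.preimage ((measurable_snd.comp measurable_fst).prodMk
          (measurable_snd.comp measurable_snd)))
    have hpre : (fun ω => ((U ω, Xc ω), (Vf ω, Wf ω))) ⁻¹' R =
        (fun ω => (U ω, Vf ω)) ⁻¹' (s1 ×ˢ s2) ∩ (fun ω => (Xc ω, Wf ω)) ⁻¹' Dt := by
      ext ω
      simp only [hRdef, mem_preimage, mem_inter_iff, mem_prod, mem_univ, and_true]
    have hLHS1 : ((μ.restrict ((fun ω => (Xc ω, Wf ω)) ⁻¹' Dt)).map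
        (fun ω => (U ω, Vf ω))) (s1 ×ˢ s2) = (lawA.prod lawB) R := by
      rw [Measure.map_apply (hUm.prodMk hVm) (hs1.prod hs2),
        Measure.restrict_apply ((hs1.prod hs2).preimage (hUm.prodMk hVm)),
        ← hpre, ← hpair, Measure.map_apply ((hUm.prodMk hXc).prodMk (hVm.prodMk hWf)) hRmeas]
    have hind : ∀ a : ℝ × V, lawB (Prod.mk a ⁻¹' R) =
        Set.indicator (s1 ×ˢ (univ : Set V)) (fun a => g a.2) a := by
      intro a
      by_cases h : a.1 ∈ s1
      · have hset : Prod.mk a ⁻¹' R = s2 ×ˢ {wv | (a.2, wv) ∈ Dt} := by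
          ext ⟨y, wv⟩
          simp [hRdef, mem_prod, h]
        rw [hset, Set.indicator_of_mem (mem_prod.2 ⟨h, mem_univ _⟩)]
      · have hset : Prod.mk a ⁻¹' R = ∅ := by
          ext ⟨y, wv⟩
          simp [hRdef, mem_prod, h]
        rw [hset, Set.indicator_of_notMem (fun hmem => h hmem.1)]
        simp
    have hLHS2 : (lawA.prod lawB) R = ∫⁻ x in s1, ∫⁻ xv, g xv ∂(η x) ∂(μ.map U) := by
      rw [Measure.prod_apply hRmeas, lintegral_congr hind,
        lintegral_indicator (hs1.prod MeasurableSet.univ), ← hA,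
        Measure.setLIntegral_compProd (show Measurable fun a : ℝ × V => g a.2 from hgm.comp measurable_snd) hs1 MeasurableSet.univ]
      simp [Measure.restrict_univ]
    have hRHS : (((μ.map U).prod (μ.map Vf)).withDensity Gd) (s1 ×ˢ s2) =
        ∫⁻ x in s1, ∫⁻ xv, g xv ∂(η x) ∂(μ.map U) := by
      rw [withDensity_apply _ (hs1.prod hs2), ← Measure.prod_restrict,
        lintegral_prod _ hGdmeas.aemeasurable]
      refine lintegral_congr fun x => ?_
      have h1 : ∀ y, Gd (x, y) = ∫⁻ xv, ξ y {wv | (xv, wv) ∈ Dt} ∂(η x) := by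
        intro y
        exact Measure.prod_apply hDt
      rw [lintegral_congr h1, lintegral_lintegral_swap ?_]
      · refine lintegral_congr fun xv => ?_
        have hcp := Measure.compProd_apply_prod (μ := μ.map Vf) (κ := ξ) hs2 (hsec xv)
        rw [hB] at hcp
        exact hcp.symm
      · have hT : MeasurableSet {q : (Y × V) × W | (q.1.2, q.2) ∈ Dt} :=
          hDt.preimage ((measurable_snd.comp measurable_fst).prodMk measurable_snd)
        have h2 := Kernel.measurable_kernel_prodMk_left
          (κ := ξ.comap (Prod.fst : Y × V → Y) measurable_fst) hT
        simp only [Kernel.comap_apply] at h2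
        exact (h2.comp measurable_id).aemeasurable
    exact hLHS1.trans (hLHS2.trans hRHS.symm)
  haveI hfin1 : IsFiniteMeasure
      ((μ.restrict ((fun ω => (Xc ω, Wf ω)) ⁻¹' Dt)).map (fun ω => (U ω, Vf ω))) := by
    refine ⟨?_⟩
    rw [Measure.map_apply (hUm.prodMk hVm) MeasurableSet.univ]
    exact measure_lt_top _ _
  haveI : IsProbabilityMeasure (μ.map U) := Measure.isProbabilityMeasure_map hUm.aemeasurable
  haveI : IsProbabilityMeasure (μ.map Vf) := Measure.isProbabilityMeasure_map hVm.aemeasurable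
  haveI hfin2 : IsFiniteMeasure (((μ.map U).prod (μ.map Vf)).withDensity Gd) := by
    refine isFiniteMeasure_withDensity ?_
    refine ne_top_of_le_ne_top ?_ (lintegral_mono hGdle)
    simp
  refine MeasureTheory.ext_of_generate_finite _ generateFrom_prod.symm isPiSystem_prod ?_ ?_
  · rintro s ⟨s1, hs1, s2, hs2, rfl⟩
    exact hrect s1 hs1 s2 hs2
  · have h := hrect univ MeasurableSet.univ univ MeasurableSet.univ
    simpa [univ_prod_univ] using h


/-- Matrix of p-values with independent columns, each column PRDS on its true-null
coordinates, and independent entries within each row.  For a true-null entry `(i,j)`,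
conditionally on the rest of row `i`, the conditional probability of any upper set `D`
given `p_{ij} = x` is nondecreasing in `x`: there is a version
`κ(x, y)` of `P(p ∈ D | p_{ij} = x, p_{i(-j)} = y)` monotone in `x` for every `y`. -/
theorem stmt2 {Ω : Type*} [MeasurableSpace Ω] (μ : Measure Ω) [IsProbabilityMeasure μ]
    {m n : ℕ} (p : Ω → Fin m × Fin n → ℝ) (hp : Measurable p)
    (hrange : ∀ ω ij, p ω ij ∈ Set.Icc (0:ℝ) 1)
    (T : Set (Fin m × Fin n))  -- indices of true null hypotheses
    (hcolindep : iIndepFun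
      (fun (j : Fin n) (ω : Ω) => fun i : Fin m => p ω (i, j)) μ)
    (hcolPRDS : ∀ j : Fin n,
      PRDSOn μ (fun ω (i : Fin m) => p ω (i, j)) {i : Fin m | (i, j) ∈ T})
    (i : Fin m) (j : Fin n) (hnull : (i, j) ∈ T)
    (hrowindep : iIndepFun
      (fun (j' : Fin n) (ω : Ω) => p ω (i, j')) μ)
    (D : Set (Fin m × Fin n → ℝ)) (hD : MeasurableSet D) (hup : IsUpperSet D) :
    ∃ κ : ℝ × ({j' : Fin n // j' ≠ j} → ℝ) → ℝ,
      (∀ y : {j' : Fin n // j' ≠ j} → ℝ, Monotone fun x => κ (x, y)) ∧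
      IsCondProbVersion μ
        (fun ω => (p ω (i, j), fun j' : {j' : Fin n // j' ≠ j} => p ω (i, j'.1)))
        {ω | (fun ij => p ω ij) ∈ D} κ := by
  classical
  classical
  -- basic objects
  set Xc : Ω → (Fin m → ℝ) := fun ω => fun i' : Fin m => p ω (i', j) with hXcdef
  set Wf : Ω → ({j' : Fin n // j' ≠ j} → Fin m → ℝ) :=
    fun ω => fun j' => fun i' : Fin m => p ω (i', j'.1) with hWfdef
  set u : (Fin m → ℝ) → ℝ := fun xv => xv i with hudef
  set v : ({j' : Fin n // j' ≠ j} → Fin m → ℝ) → ({j' : Fin n // j' ≠ j} → ℝ) :=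
    fun wv => fun j' => wv j' i with hvdef
  have hXcm : Measurable Xc := measurable_pi_lambda _ fun i' => (measurable_pi_apply _).comp hp
  have hWfm : Measurable Wf := measurable_pi_lambda _ fun j' =>
    measurable_pi_lambda _ fun i' => (measurable_pi_apply _).comp hp
  have hum : Measurable u := measurable_pi_apply i
  have hvm : Measurable v := measurable_pi_lambda _ fun j' =>
    (measurable_pi_apply i).comp (measurable_pi_apply j')
  set U : Ω → ℝ := fun ω => u (Xc ω) with hUdef
  set Vf : Ω → ({j' : Fin n // j' ≠ j} → ℝ) := fun ω => v (Wf ω) with hVfdef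
  have hUm : Measurable U := hum.comp hXcm
  have hVm : Measurable Vf := hvm.comp hWfm
  -- recombination map
  set e : (Fin m → ℝ) × ({j' : Fin n // j' ≠ j} → Fin m → ℝ) → (Fin m × Fin n → ℝ) :=
    fun vw => fun ij' => if h : ij'.2 = j then vw.1 ij'.1 else vw.2 ⟨ij'.2, h⟩ ij'.1 with hedef
  have hem : Measurable e := by
    refine measurable_pi_lambda _ fun ij' => ?_
    by_cases h : ij'.2 = j
    · simp only [hedef, dif_pos h]
      exact (measurable_pi_apply _).comp measurable_fst
    · simp only [hedef, dif_neg h]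
      exact (measurable_pi_apply _).comp ((measurable_pi_apply _).comp measurable_snd)
  have hemono : Monotone e := by
    intro a b hab ij'
    simp only [hedef]
    by_cases h : ij'.2 = j
    · simp only [dif_pos h]
      exact hab.1 ij'.1
    · simp only [dif_neg h]
      exact hab.2 ⟨ij'.2, h⟩ ij'.1
  set Dt : Set ((Fin m → ℝ) × ({j' : Fin n // j' ≠ j} → Fin m → ℝ)) := e ⁻¹' D with hDtdef
  have hDtm : MeasurableSet Dt := hD.preimage hem
  have hDtup : IsUpperSet Dt := hup.preimage hemono
  have hpe : ∀ ω, e (Xc ω, Wf ω) = p ω := by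
    intro ω
    funext ij'
    rcases ij' with ⟨i', j'⟩
    by_cases h : j' = j
    · subst h
      simp only [hedef, hXcdef, dif_pos]
    · simp only [hedef, hWfdef, dif_neg h]
  have hEeq : (fun ω => (Xc ω, Wf ω)) ⁻¹' Dt = {ω | (fun ij => p ω ij) ∈ D} := by
    ext ω
    simp only [hDtdef, mem_preimage, mem_setOf_eq, hpe ω]
  -- independence of column j and the other columns
  have hcolmeas : ∀ k : Fin n, Measurable fun ω => fun i' : Fin m => p ω (i', k) :=
    fun k => measurable_pi_lambda _ fun i' => (measurable_pi_apply _).comp hp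
  have hindepCol : IndepFun Xc Wf μ := by
    have h1 := hcolindep.indepFun_finset {j} {j}ᶜ disjoint_compl_right hcolmeas
    have hφ : Measurable fun g : (({j} : Finset (Fin n)) → Fin m → ℝ) =>
        g ⟨j, Finset.mem_singleton_self j⟩ := measurable_pi_apply _
    have hψ : Measurable fun g : ((({j}ᶜ : Finset (Fin n))) → Fin m → ℝ) =>
        (fun j' : {j' : Fin n // j' ≠ j} =>
          g ⟨j'.1, Finset.mem_compl.2 (Finset.notMem_singleton.2 j'.2)⟩) :=
      measurable_pi_lambda _ fun j' => measurable_pi_apply _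
    exact h1.comp hφ hψ
  have hrowmeas : ∀ k : Fin n, Measurable fun ω => p ω (i, k) :=
    fun k => (measurable_pi_apply _).comp hp
  have hindepRow : IndepFun U Vf μ := by
    have h1 := hrowindep.indepFun_finset {j} {j}ᶜ disjoint_compl_right hrowmeas
    have hφ : Measurable fun g : (({j} : Finset (Fin n)) → ℝ) =>
        g ⟨j, Finset.mem_singleton_self j⟩ := measurable_pi_apply _
    have hψ : Measurable fun g : ((({j}ᶜ : Finset (Fin n))) → ℝ) =>
        (fun j' : {j' : Fin n // j' ≠ j} =>
          g ⟨j'.1, Finset.mem_compl.2 (Finset.notMem_singleton.2 j'.2)⟩) :=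
      measurable_pi_lambda _ fun j' => measurable_pi_apply _
    exact h1.comp hφ hψ
  have hmapZ : μ.map (fun ω => (p ω (i, j), fun j' : {j' : Fin n // j' ≠ j} => p ω (i, j'.1)))
      = (μ.map U).prod (μ.map Vf) :=
    (indepFun_iff_map_prod_eq_prod_map_map hUm.aemeasurable hVm.aemeasurable).1 hindepRow
  -- conditional distributions
  set η := condDistrib Xc U μ with hηdef
  set ξ := condDistrib Wf Vf μ with hξdef
  have hA : (μ.map U) ⊗ₘ η = μ.map (fun ω => (U ω, Xc ω)) := by
    have h1 : (μ.map (fun ω => (U ω, Xc ω))).fst = μ.map U := Measure.fst_map_prodMk hXcm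
    rw [hηdef, condDistrib, ← h1]
    exact (μ.map (fun ω => (U ω, Xc ω))).disintegrate _
  have hB : (μ.map Vf) ⊗ₘ ξ = μ.map (fun ω => (Vf ω, Wf ω)) := by
    have h1 : (μ.map (fun ω => (Vf ω, Wf ω))).fst = μ.map Vf := Measure.fst_map_prodMk hWfm
    rw [hξdef, condDistrib, ← h1]
    exact (μ.map (fun ω => (Vf ω, Wf ω))).disintegrate _
  set Gd : ℝ × ({j' : Fin n // j' ≠ j} → ℝ) → ℝ≥0∞ :=
    fun z => ((η z.1).prod (ξ z.2)) Dt with hGddef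
  have hGdmeas : Measurable Gd := by
    have h := Kernel.measurable_coe
      ((η.comap Prod.fst measurable_fst) ×ₖ (ξ.comap Prod.snd measurable_snd)) hDtm
    simpa [Kernel.prod_apply, Kernel.comap_apply] using h
  have hGdle : ∀ z, Gd z ≤ 1 := by
    intro z
    haveI : IsProbabilityMeasure ((η z.1).prod (ξ z.2)) := by infer_instance
    exact prob_le_one
  set H : ℝ × ({j' : Fin n // j' ≠ j} → ℝ) → ℝ := fun z => (Gd z).toReal with hHdef
  have hHm : Measurable H := hGdmeas.ennreal_toReal
  have hH01 : ∀ z, H z ∈ Icc (0:ℝ) 1 :=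
    fun z => ⟨ENNReal.toReal_nonneg, ENNReal.toReal_le_of_le_ofReal zero_le_one
      (by simpa using hGdle z)⟩
  have hver : (μ.restrict ((fun ω => (Xc ω, Wf ω)) ⁻¹' Dt)).map (fun ω => (U ω, Vf ω)) =
      ((μ.map U).prod (μ.map Vf)).withDensity Gd :=
    version_lemma μ Xc Wf hXcm hWfm u hum v hvm hindepCol Dt hDtm
  haveI hαprob : IsProbabilityMeasure (μ.map U) := Measure.isProbabilityMeasure_map hUm.aemeasurable
  haveI hβprob : IsProbabilityMeasure (μ.map Vf) := Measure.isProbabilityMeasure_map hVm.aemeasurable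
  have hsecm : ∀ w, MeasurableSet {xv : Fin m → ℝ | (xv, w) ∈ Dt} :=
    fun w => hDtm.preimage (measurable_id.prodMk measurable_const)
  have hsecup : ∀ w, IsUpperSet {xv : Fin m → ℝ | (xv, w) ∈ Dt} :=
    fun w xv xv' hle hmem => hDtup (Prod.mk_le_mk.2 ⟨hle, le_rfl⟩) hmem
  have hαIcc : ∀ᵐ x ∂(μ.map U), x ∈ Icc (0:ℝ) 1 := by
    exact (ae_map_iff hUm.aemeasurable measurableSet_Icc).2
      (ae_of_all _ fun ω => hrange ω (i, j))
  have hpairs : ∀ w, ∀ᵐ z ∂((μ.map U).prod (μ.map U)),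
      z.1 ≤ z.2 → η z.1 {xv | (xv, w) ∈ Dt} ≤ η z.2 {xv | (xv, w) ∈ Dt} := by
    intro w
    obtain ⟨κw, hκmono, hκver⟩ := hcolPRDS j _ (hsecm w) (hsecup w) i hnull
    have hfv : ∀ s : Set ℝ, MeasurableSet s →
        ∫ x in s, (η x {xv | (xv, w) ∈ Dt}).toReal ∂(μ.map U) =
          (μ ({ω | Xc ω ∈ {xv | (xv, w) ∈ Dt}} ∩ U ⁻¹' s)).toReal := by
      intro s hs
      have h1 : (μ.map U ⊗ₘ η) (s ×ˢ {xv | (xv, w) ∈ Dt}) =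
          ∫⁻ x in s, η x {xv | (xv, w) ∈ Dt} ∂(μ.map U) :=
        Measure.compProd_apply_prod hs (hsecm w)
      have h2 : (μ.map U ⊗ₘ η) (s ×ˢ {xv | (xv, w) ∈ Dt}) =
          μ ({ω | Xc ω ∈ {xv | (xv, w) ∈ Dt}} ∩ U ⁻¹' s) := by
        rw [hA, Measure.map_apply (hUm.prodMk hXcm) (hs.prod (hsecm w))]
        congr 1
        ext ω
        simp only [mem_preimage, mem_prod, mem_inter_iff, mem_setOf_eq]
        tauto
      rw [integral_toReal ((Kernel.measurable_coe η (hsecm w)).aemeasurable)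
        (ae_of_all _ fun x => lt_of_le_of_lt prob_le_one ENNReal.one_lt_top), ← h1, h2]
    have hκint : Integrable κw (μ.map U) := by
      refine ⟨hκmono.measurable.aestronglyMeasurable,
        HasFiniteIntegral.of_bounded (C := max |κw 0| |κw 1|) ?_⟩
      filter_upwards [hαIcc] with x hx
      rw [Real.norm_eq_abs, abs_le]
      constructor
      · calc -(max |κw 0| |κw 1|) ≤ -|κw 0| := neg_le_neg (le_max_left _ _)
          _ ≤ κw 0 := neg_abs_le _
          _ ≤ κw x := hκmono hx.1
      · exact (hκmono hx.2).trans ((le_abs_self _).trans (le_max_right _ _))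
    have hfint : Integrable (fun x => (η x {xv | (xv, w) ∈ Dt}).toReal) (μ.map U) := by
      refine ⟨(Kernel.measurable_coe η (hsecm w)).ennreal_toReal.aestronglyMeasurable,
        HasFiniteIntegral.of_bounded (C := 1) (ae_of_all _ fun x => ?_)⟩
      rw [Real.norm_eq_abs, abs_of_nonneg ENNReal.toReal_nonneg]
      exact ENNReal.toReal_le_of_le_ofReal zero_le_one (by simpa using (prob_le_one (μ := η x)))
    have haeeq : (fun x => (η x {xv | (xv, w) ∈ Dt}).toReal) =ᵐ[μ.map U] κw := by
      refine ae_eq_of_forall_setIntegral_eq_of_sigmaFinite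
        (fun s _ _ => hfint.integrableOn) (fun s _ _ => hκint.integrableOn) ?_
      intro s hs _
      exact (hfv s hs).trans (hκver s hs).symm
    set N : Set ℝ := {x | (η x {xv | (xv, w) ∈ Dt}).toReal ≠ κw x} with hNdef
    have hNm : MeasurableSet N :=
      (measurableSet_eq_fun (Kernel.measurable_coe η (hsecm w)).ennreal_toReal
        hκmono.measurable).compl
    have hN0 : (μ.map U) N = 0 := ae_iff.1 haeeq
    rw [ae_iff]
    refine measure_mono_null (?_ :
        _ ⊆ (N ×ˢ (univ : Set ℝ)) ∪ ((univ : Set ℝ) ×ˢ N)) ?_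
    · intro z hz
      by_cases h1 : z.1 ∈ N
      · exact Or.inl ⟨h1, mem_univ _⟩
      by_cases h2 : z.2 ∈ N
      · exact Or.inr ⟨mem_univ _, h2⟩
      exfalso
      apply hz
      intro hle
      have e1 : (η z.1 {xv | (xv, w) ∈ Dt}).toReal = κw z.1 := not_not.1 h1
      have e2 : (η z.2 {xv | (xv, w) ∈ Dt}).toReal = κw z.2 := not_not.1 h2
      have h3 : (η z.1 {xv | (xv, w) ∈ Dt}).toReal ≤ (η z.2 {xv | (xv, w) ∈ Dt}).toReal := by
        rw [e1, e2]; exact hκmono hle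
      exact (ENNReal.toReal_le_toReal
        (ne_of_lt (lt_of_le_of_lt prob_le_one ENNReal.one_lt_top))
        (ne_of_lt (lt_of_le_of_lt prob_le_one ENNReal.one_lt_top))).1 h3
    · refine measure_union_null ?_ ?_
      · rw [Measure.prod_prod, hN0, zero_mul]
      · rw [Measure.prod_prod, hN0, mul_zero]
  -- joint measurability of (x,w) ↦ η x (section w)
  have hηw : Measurable fun zw : ℝ × ({j' : Fin n // j' ≠ j} → Fin m → ℝ) =>
      η zw.1 {xv | (xv, zw.2) ∈ Dt} := by
    have hT : MeasurableSet {q : (ℝ × ({j' : Fin n // j' ≠ j} → Fin m → ℝ)) × (Fin m → ℝ) |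
        (q.2, q.1.2) ∈ Dt} :=
      hDtm.preimage (measurable_snd.prodMk (measurable_snd.comp measurable_fst))
    have h := Kernel.measurable_kernel_prodMk_left (κ := η.comap Prod.fst measurable_fst) hT
    simpa [Kernel.comap_apply] using h
  set Bad : Set ((ℝ × ℝ) × ({j' : Fin n // j' ≠ j} → Fin m → ℝ)) :=
    {q | q.1.1 ≤ q.1.2 ∧ ¬ η q.1.1 {xv | (xv, q.2) ∈ Dt} ≤ η q.1.2 {xv | (xv, q.2) ∈ Dt}}
    with hBaddef
  have hBadm : MeasurableSet Bad := by
    have h1 : Measurable fun q : (ℝ × ℝ) × ({j' : Fin n // j' ≠ j} → Fin m → ℝ) =>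
        η q.1.1 {xv | (xv, q.2) ∈ Dt} :=
      hηw.comp ((measurable_fst.comp measurable_fst).prodMk measurable_snd)
    have h2 : Measurable fun q : (ℝ × ℝ) × ({j' : Fin n // j' ≠ j} → Fin m → ℝ) =>
        η q.1.2 {xv | (xv, q.2) ∈ Dt} :=
      hηw.comp ((measurable_snd.comp measurable_fst).prodMk measurable_snd)
    exact ((measurableSet_le (measurable_fst.comp measurable_fst)
      (measurable_snd.comp measurable_fst)).inter (measurableSet_le h1 h2).compl)
  have hBad0 : (((μ.map U).prod (μ.map U)).prod (μ.map Wf)) Bad = 0 := by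
    rw [Measure.prod_apply_symm hBadm]
    have hzero : ∀ w, ((μ.map U).prod (μ.map U)) ((fun z => (z, w)) ⁻¹' Bad) = 0 := by
      intro w
      refine measure_mono_null ?_ (ae_iff.1 (hpairs w))
      intro z hz
      exact fun hcon => hz.2 (hcon hz.1)
    rw [lintegral_congr hzero]
    simp
  have hsecBad : ∀ᵐ z ∂((μ.map U).prod (μ.map U)), (μ.map Wf) (Prod.mk z ⁻¹' Bad) = 0 := by
    have h := (Measure.measure_prod_null hBadm).1 hBad0
    filter_upwards [h] with z hz using hz
  have hρ : ∀ Nn : Set ({j' : Fin n // j' ≠ j} → Fin m → ℝ), MeasurableSet Nn →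
      (μ.map Wf) Nn = ∫⁻ y, ξ y Nn ∂(μ.map Vf) := by
    intro Nn hNn
    have h1 : (μ.map Vf ⊗ₘ ξ) ((univ : Set ({j' : Fin n // j' ≠ j} → ℝ)) ×ˢ Nn) =
        ∫⁻ y in univ, ξ y Nn ∂(μ.map Vf) :=
      Measure.compProd_apply_prod MeasurableSet.univ hNn
    rw [Measure.restrict_univ] at h1
    rw [← h1, hB, Measure.map_apply (hVm.prodMk hWfm) (MeasurableSet.univ.prod hNn),
      Measure.map_apply hWfm hNn]
    congr 1
    ext ω
    simp [mem_prod]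
  have hmono2 : ∀ᵐ z ∂((μ.map U).prod (μ.map U)), ∀ᵐ y ∂(μ.map Vf),
      z.1 ≤ z.2 → H (z.1, y) ≤ H (z.2, y) := by
    filter_upwards [hsecBad] with z hz
    rw [hρ _ (hBadm.preimage measurable_prodMk_left)] at hz
    have hz' : ∀ᵐ y ∂(μ.map Vf), ξ y (Prod.mk z ⁻¹' Bad) = 0 :=
      (lintegral_eq_zero_iff (Kernel.measurable_coe ξ
        (hBadm.preimage measurable_prodMk_left))).1 hz
    filter_upwards [hz'] with y hy
    intro hle
    have hweak : ∀ᵐ w ∂(ξ y), η z.1 {xv | (xv, w) ∈ Dt} ≤ η z.2 {xv | (xv, w) ∈ Dt} := by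
      rw [ae_iff]
      refine measure_mono_null ?_ hy
      intro w hw
      exact ⟨hle, hw⟩
    have hli : ((η z.1).prod (ξ y)) Dt ≤ ((η z.2).prod (ξ y)) Dt := by
      rw [Measure.prod_apply_symm hDtm, Measure.prod_apply_symm hDtm]
      exact lintegral_mono_ae hweak
    exact ENNReal.toReal_mono (ne_of_lt (lt_of_le_of_lt prob_le_one ENNReal.one_lt_top)) hli
  have hmeasP : MeasurableSet {q : (ℝ × ℝ) × ({j' : Fin n // j' ≠ j} → ℝ) |
      q.1.1 ≤ q.1.2 → H (q.1.1, q.2) ≤ H (q.1.2, q.2)} := by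
    have h1 : Measurable fun q : (ℝ × ℝ) × ({j' : Fin n // j' ≠ j} → ℝ) => H (q.1.1, q.2) :=
      hHm.comp ((measurable_fst.comp measurable_fst).prodMk measurable_snd)
    have h2 : Measurable fun q : (ℝ × ℝ) × ({j' : Fin n // j' ≠ j} → ℝ) => H (q.1.2, q.2) :=
      hHm.comp ((measurable_snd.comp measurable_fst).prodMk measurable_snd)
    have heq2 : {q : (ℝ × ℝ) × ({j' : Fin n // j' ≠ j} → ℝ) |
        q.1.1 ≤ q.1.2 → H (q.1.1, q.2) ≤ H (q.1.2, q.2)} =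
        {q : (ℝ × ℝ) × ({j' : Fin n // j' ≠ j} → ℝ) | q.1.1 ≤ q.1.2}ᶜ ∪
        {q | H (q.1.1, q.2) ≤ H (q.1.2, q.2)} := by
      ext q
      by_cases hq : q.1.1 ≤ q.1.2 <;> simp [hq]
    rw [heq2]
    exact ((measurableSet_le (measurable_fst.comp measurable_fst)
      (measurable_snd.comp measurable_fst)).compl).union (measurableSet_le h1 h2)
  have hmono3 : ∀ᵐ y ∂(μ.map Vf), ∀ᵐ z ∂((μ.map U).prod (μ.map U)),
      z.1 ≤ z.2 → H (z.1, y) ≤ H (z.2, y) :=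
    (Measure.ae_ae_comm hmeasP).1 hmono2
  obtain ⟨G, hGmono, hGae⟩ := exists_mono_version (μ.map U) (μ.map Vf) H hHm hH01 hmono3
  refine ⟨G, hGmono, ?_⟩
  intro s hs
  rw [hmapZ, integral_congr_ae (ae_restrict_of_ae hGae)]
  simp only [hHdef]
  rw [integral_toReal hGdmeas.aemeasurable
      (ae_of_all _ fun z => lt_of_le_of_lt (hGdle z) ENNReal.one_lt_top),
    ← withDensity_apply _ hs, ← hver,
    Measure.map_apply (hUm.prodMk hVm) hs,
    Measure.restrict_apply (hs.preimage (hUm.prodMk hVm)), hEeq, inter_comm]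
end
end

section
/- Let U and V be nonnegative random variables with U stochastically lower bounded by a uniform on [0,1] (P(U ≤ t) ≤ t for t ∈ [0,1]). Suppose that for every r ≥ 0 the function u ↦ P(V < r | U ≤ u) is nondecreasing on the set of u with P(U ≤ u) > 0. Then for every c > 0, E[1(U ≤ cV)/V] ≤ c, i.e., the pair (U, V) satisfies the dependency control condition with the identity shape function. -/
open MeasureTheory ProbabilityTheory
open scoped ENNReal NNReal

noncomputable section

theorem tele_nat (g : ℕ → ℝ≥0∞) (hg : Monotone g) :
    ∀ n, ∑ i ∈ Finset.range n, (g (i + 1) - g i) ≤ g n := by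
  intro n
  induction n with
  | zero => simp
  | succ n ih =>
    rw [Finset.sum_range_succ]
    calc ∑ i ∈ Finset.range n, (g (i + 1) - g i) + (g (n + 1) - g n)
        ≤ g n + (g (n + 1) - g n) := add_le_add_left ih _
      _ = g (n + 1) := by rw [add_comm, tsub_add_cancel_of_le (hg (Nat.le_succ n))]

theorem tele_aux (a : ℤ → ℝ≥0∞) (hmono : Monotone a) (hle : ∀ k, a k ≤ 1) :
    ∑' k : ℤ, (a (k + 1) - a k) ≤ 1 := by
  rw [ENNReal.tsum_eq_iSup_sum]
  refine iSup_le fun fs => ?_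
  set N := fs.sup (·.natAbs) with hN
  have hsub : fs ⊆ Finset.image (fun i : ℕ => -(N : ℤ) + i) (Finset.range (2 * N + 2)) := by
    intro k hk
    have h1 : k.natAbs ≤ N := Finset.le_sup (f := (·.natAbs)) hk
    refine Finset.mem_image.2 ⟨(k + N).toNat, Finset.mem_range.2 (by omega), by omega⟩
  calc ∑ k ∈ fs, (a (k + 1) - a k)
      ≤ ∑ k ∈ Finset.image (fun i : ℕ => -(N : ℤ) + i) (Finset.range (2 * N + 2)),
          (a (k + 1) - a k) := Finset.sum_le_sum_of_subset hsub
    _ = ∑ i ∈ Finset.range (2 * N + 2), (a (-(N : ℤ) + i + 1) - a (-(N : ℤ) + i)) :=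
        Finset.sum_image (by intro x _ y _ h; have h' : -(N : ℤ) + x = -(N : ℤ) + y := h; omega)
    _ = ∑ i ∈ Finset.range (2 * N + 2),
          ((fun i : ℕ => a (-(N : ℤ) + i)) (i + 1) - (fun i : ℕ => a (-(N : ℤ) + i)) i) := by
        refine Finset.sum_congr rfl fun i _ => ?_
        show a (-(N : ℤ) + i + 1) - a (-(N : ℤ) + i) = a (-(N : ℤ) + (i + 1 : ℕ)) - a (-(N : ℤ) + i)
        congr 2
        push_cast
        ring
    _ ≤ (fun i : ℕ => a (-(N : ℤ) + i)) (2 * N + 2) :=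
        tele_nat (fun i : ℕ => a (-(N : ℤ) + i)) (by intro i j hij; exact hmono (by omega)) (2 * N + 2)
    _ ≤ 1 := hle _

/-- If `U` is stochastically lower bounded by a uniform on `[0,1]` and for each `r ≥ 0`
the conditional probability `P(V < r | U ≤ u)` is nondecreasing in `u` (over those `u`
with `P(U ≤ u) > 0`), then `(U, V)` satisfies the dependency control condition with the
identity shape function. -/
theorem stmt5 {Ω : Type*} [MeasurableSpace Ω] (μ : Measure Ω) [IsProbabilityMeasure μ]
    (U V : Ω → ℝ) (hUm : Measurable U) (hVm : Measurable V)
    (hU0 : ∀ ω, 0 ≤ U ω) (hV0 : ∀ ω, 0 ≤ V ω)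
    (hsuper : ∀ t ∈ Set.Icc (0:ℝ) 1, μ {ω | U ω ≤ t} ≤ ENNReal.ofReal t)
    (hmono : ∀ r : ℝ, 0 ≤ r → ∀ u₁ u₂ : ℝ, u₁ ≤ u₂ → μ {ω | U ω ≤ u₁} ≠ 0 →
      (ProbabilityTheory.cond μ {ω | U ω ≤ u₁}) {ω | V ω < r} ≤
        (ProbabilityTheory.cond μ {ω | U ω ≤ u₂}) {ω | V ω < r}) :
    ∀ c : ℝ, 0 < c → ∫ ω, (if U ω ≤ c * V ω then (V ω)⁻¹ else 0) ∂μ ≤ c := by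
  intro c hc
  have hsm : ∀ x : ℝ, MeasurableSet {ω | U ω ≤ x} := fun x => measurableSet_le hUm measurable_const
  have hfm : Measurable fun ω => if U ω ≤ c * V ω then (V ω)⁻¹ else 0 :=
    Measurable.ite (measurableSet_le hUm (hVm.const_mul c)) hVm.inv measurable_const
  have hf0 : 0 ≤ᵐ[μ] fun ω => if U ω ≤ c * V ω then (V ω)⁻¹ else 0 := by
    refine Filter.Eventually.of_forall fun ω => ?_
    dsimp only
    split
    · exact inv_nonneg.2 (hV0 ω)
    · exact le_rfl
  rw [MeasureTheory.integral_eq_lintegral_of_nonneg_ae hf0 hfm.aestronglyMeasurable]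
  have key : ∀ ρ : ℝ, 1 < ρ →
      ∫⁻ ω, ENNReal.ofReal (if U ω ≤ c * V ω then (V ω)⁻¹ else 0) ∂μ ≤
        ENNReal.ofReal (c * ρ) := by
    intro ρ hρ
    have hρ0 : (0:ℝ) < ρ := lt_trans one_pos hρ
    have htpos : ∀ k : ℤ, (0:ℝ) < ρ ^ k := fun k => zpow_pos hρ0 k
    have htmono : ∀ k : ℤ, (ρ:ℝ) ^ k ≤ ρ ^ (k + 1) := fun k =>
      zpow_le_zpow_right₀ hρ.le (by omega)
    set S : ℤ → Set Ω := fun k =>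
      ({ω | U ω ≤ c * V ω} ∩ {ω | ρ ^ k ≤ V ω}) ∩ {ω | V ω < ρ ^ (k + 1)} with hS
    have hSm : ∀ k, MeasurableSet (S k) := fun k =>
      ((measurableSet_le hUm (hVm.const_mul c)).inter
        (measurableSet_le measurable_const hVm)).inter
        (measurableSet_lt hVm measurable_const)
    set a : ℤ → ℝ≥0∞ := fun k =>
      (ProbabilityTheory.cond μ {ω | U ω ≤ c * ρ ^ k}) {ω | V ω < ρ ^ k} with ha
    have ha_zero : ∀ k : ℤ, μ {ω | U ω ≤ c * ρ ^ k} = 0 → a k = 0 := by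
      intro k h0
      rw [ha]
      dsimp only
      rw [ProbabilityTheory.cond_apply (hsm _),
        measure_mono_null Set.inter_subset_left h0, mul_zero]
    have ha_le1 : ∀ k, a k ≤ 1 := by
      intro k
      rcases eq_or_ne (μ {ω | U ω ≤ c * ρ ^ k}) 0 with h0 | h0
      · rw [ha_zero k h0]; exact zero_le_one
      · rw [ha]
        dsimp only
        rw [ProbabilityTheory.cond_apply (hsm _)]
        calc (μ {ω | U ω ≤ c * ρ ^ k})⁻¹ * μ ({ω | U ω ≤ c * ρ ^ k} ∩ {ω | V ω < ρ ^ k})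
            ≤ (μ {ω | U ω ≤ c * ρ ^ k})⁻¹ * μ {ω | U ω ≤ c * ρ ^ k} :=
              mul_le_mul_right (measure_mono Set.inter_subset_left) _
          _ = 1 := ENNReal.inv_mul_cancel h0 (measure_ne_top μ _)
    have hcc : ∀ k : ℤ, c * ρ ^ k ≤ c * ρ ^ (k + 1) := fun k =>
      mul_le_mul_of_nonneg_left (htmono k) hc.le
    have ha_succ : ∀ k : ℤ, a k ≤ a (k + 1) := by
      intro k
      rcases eq_or_ne (μ {ω | U ω ≤ c * ρ ^ k}) 0 with h0 | h0
      · rw [ha_zero k h0]; exact zero_le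
      · have h1 : a k ≤ (ProbabilityTheory.cond μ {ω | U ω ≤ c * ρ ^ (k + 1)}) {ω | V ω < ρ ^ k} :=
          hmono (ρ ^ k) (htpos k).le (c * ρ ^ k) (c * ρ ^ (k + 1)) (hcc k) h0
        refine h1.trans (measure_mono fun ω hω => ?_)
        exact lt_of_lt_of_le hω (htmono k)
    have ha_mono : Monotone a := monotone_int_of_le_succ ha_succ
    have hterm : ∀ k : ℤ, ENNReal.ofReal ((ρ ^ k)⁻¹) * μ (S k) ≤
        ENNReal.ofReal (c * ρ) * (a (k + 1) - a k) := by
      intro k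
      have hWsub : {ω | V ω < ρ ^ k} ⊆ {ω | V ω < ρ ^ (k + 1)} := fun ω hω =>
        lt_of_lt_of_le hω (htmono k)
      have hsub1 : S k ⊆ {ω | U ω ≤ c * ρ ^ (k + 1)} ∩ {ω | V ω < ρ ^ (k + 1)} := by
        rintro ω ⟨⟨h1, h2⟩, h3⟩
        exact ⟨le_trans h1 (mul_le_mul_of_nonneg_left (le_of_lt h3) hc.le), h3⟩
      have hdisj : Disjoint (S k) ({ω | U ω ≤ c * ρ ^ (k + 1)} ∩ {ω | V ω < ρ ^ k}) := by
        rw [Set.disjoint_left]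
        rintro ω ⟨⟨h1, h2⟩, h3⟩ ⟨h4, h5⟩
        simp only [Set.mem_setOf_eq] at h5
        exact absurd h5 (not_lt.2 h2)
      have hBA : μ (S k) + μ ({ω | U ω ≤ c * ρ ^ (k + 1)} ∩ {ω | V ω < ρ ^ k}) ≤
          μ ({ω | U ω ≤ c * ρ ^ (k + 1)} ∩ {ω | V ω < ρ ^ (k + 1)}) := by
        rw [← measure_union hdisj ((hsm _).inter (measurableSet_lt hVm measurable_const))]
        exact measure_mono (Set.union_subset hsub1
          (Set.inter_subset_inter_right _ hWsub))
      rcases eq_or_ne (μ {ω | U ω ≤ c * ρ ^ (k + 1)}) 0 with hF | hF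
      · have h0 : μ (S k) = 0 :=
          measure_mono_null hsub1 (measure_mono_null Set.inter_subset_left hF)
        rw [h0, mul_zero]
        exact zero_le
      · have hFt : μ {ω | U ω ≤ c * ρ ^ (k + 1)} ≠ ∞ := measure_ne_top μ _
        have hAk : μ {ω | U ω ≤ c * ρ ^ (k + 1)} * a k ≤
            μ ({ω | U ω ≤ c * ρ ^ (k + 1)} ∩ {ω | V ω < ρ ^ k}) := by
          rcases eq_or_ne (μ {ω | U ω ≤ c * ρ ^ k}) 0 with h0 | h0
          · rw [ha_zero k h0, mul_zero]; exact zero_le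
          · have h1 : a k ≤ (ProbabilityTheory.cond μ {ω | U ω ≤ c * ρ ^ (k + 1)})
                {ω | V ω < ρ ^ k} :=
              hmono (ρ ^ k) (htpos k).le (c * ρ ^ k) (c * ρ ^ (k + 1)) (hcc k) h0
            have h2 : (ProbabilityTheory.cond μ {ω | U ω ≤ c * ρ ^ (k + 1)})
                {ω | V ω < ρ ^ k} = (μ {ω | U ω ≤ c * ρ ^ (k + 1)})⁻¹ *
                μ ({ω | U ω ≤ c * ρ ^ (k + 1)} ∩ {ω | V ω < ρ ^ k}) :=
              ProbabilityTheory.cond_apply (hsm _) μ _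
            calc μ {ω | U ω ≤ c * ρ ^ (k + 1)} * a k
                ≤ μ {ω | U ω ≤ c * ρ ^ (k + 1)} * ((μ {ω | U ω ≤ c * ρ ^ (k + 1)})⁻¹ *
                  μ ({ω | U ω ≤ c * ρ ^ (k + 1)} ∩ {ω | V ω < ρ ^ k})) :=
                  mul_le_mul_right (h1.trans_eq h2) _
              _ = μ ({ω | U ω ≤ c * ρ ^ (k + 1)} ∩ {ω | V ω < ρ ^ k}) := by
                  rw [← mul_assoc, ENNReal.mul_inv_cancel hF hFt, one_mul]
        have hBk : μ ({ω | U ω ≤ c * ρ ^ (k + 1)} ∩ {ω | V ω < ρ ^ (k + 1)}) =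
            μ {ω | U ω ≤ c * ρ ^ (k + 1)} * a (k + 1) := by
          rw [ha]
          dsimp only
          rw [ProbabilityTheory.cond_apply (hsm _), ← mul_assoc,
            ENNReal.mul_inv_cancel hF hFt, one_mul]
        have hSk : μ (S k) ≤ μ {ω | U ω ≤ c * ρ ^ (k + 1)} * (a (k + 1) - a k) := by
          have h3 : μ (S k) + μ ({ω | U ω ≤ c * ρ ^ (k + 1)} ∩ {ω | V ω < ρ ^ k}) ≤
              μ {ω | U ω ≤ c * ρ ^ (k + 1)} * (a (k + 1) - a k) +
              μ ({ω | U ω ≤ c * ρ ^ (k + 1)} ∩ {ω | V ω < ρ ^ k}) :=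
            calc μ (S k) + μ ({ω | U ω ≤ c * ρ ^ (k + 1)} ∩ {ω | V ω < ρ ^ k})
                ≤ μ ({ω | U ω ≤ c * ρ ^ (k + 1)} ∩ {ω | V ω < ρ ^ (k + 1)}) := hBA
              _ = μ {ω | U ω ≤ c * ρ ^ (k + 1)} * a (k + 1) := hBk
              _ ≤ μ {ω | U ω ≤ c * ρ ^ (k + 1)} * ((a (k + 1) - a k) + a k) :=
                  mul_le_mul_right le_tsub_add _
              _ = μ {ω | U ω ≤ c * ρ ^ (k + 1)} * (a (k + 1) - a k) +
                  μ {ω | U ω ≤ c * ρ ^ (k + 1)} * a k := by rw [mul_add]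
              _ ≤ _ := add_le_add_right hAk _
          exact (ENNReal.add_le_add_iff_right (measure_ne_top μ _)).1 h3
        have hmul : ENNReal.ofReal ((ρ ^ k)⁻¹) * μ {ω | U ω ≤ c * ρ ^ (k + 1)} ≤
            ENNReal.ofReal (c * ρ) := by
          by_cases h1 : c * ρ ^ (k + 1) ≤ 1
          · have hs := hsuper (c * ρ ^ (k + 1)) ⟨by positivity, h1⟩
            calc ENNReal.ofReal ((ρ ^ k)⁻¹) * μ {ω | U ω ≤ c * ρ ^ (k + 1)}
                ≤ ENNReal.ofReal ((ρ ^ k)⁻¹) * ENNReal.ofReal (c * ρ ^ (k + 1)) :=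
                  mul_le_mul_right hs _
              _ = ENNReal.ofReal ((ρ ^ k)⁻¹ * (c * ρ ^ (k + 1))) :=
                  (ENNReal.ofReal_mul (by positivity)).symm
              _ = ENNReal.ofReal (c * ρ) := by
                  congr 1
                  rw [zpow_add_one₀ (ne_of_gt hρ0)]
                  field_simp
          · push_neg at h1
            have h2 : (ρ ^ k : ℝ)⁻¹ ≤ c * ρ := by
              rw [inv_eq_one_div, div_le_iff₀ (htpos k)]
              have h3 := zpow_add_one₀ (ne_of_gt hρ0) k
              nlinarith [htpos k]
            calc ENNReal.ofReal ((ρ ^ k)⁻¹) * μ {ω | U ω ≤ c * ρ ^ (k + 1)}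
                ≤ ENNReal.ofReal ((ρ ^ k)⁻¹) * 1 := mul_le_mul_right prob_le_one _
              _ = ENNReal.ofReal ((ρ ^ k)⁻¹) := mul_one _
              _ ≤ ENNReal.ofReal (c * ρ) := ENNReal.ofReal_le_ofReal h2
        calc ENNReal.ofReal ((ρ ^ k)⁻¹) * μ (S k)
            ≤ ENNReal.ofReal ((ρ ^ k)⁻¹) *
              (μ {ω | U ω ≤ c * ρ ^ (k + 1)} * (a (k + 1) - a k)) := mul_le_mul_right hSk _
          _ = (ENNReal.ofReal ((ρ ^ k)⁻¹) * μ {ω | U ω ≤ c * ρ ^ (k + 1)}) *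
              (a (k + 1) - a k) := by rw [mul_assoc]
          _ ≤ ENNReal.ofReal (c * ρ) * (a (k + 1) - a k) := mul_le_mul_left hmul _
    have hpt : ∀ ω, ENNReal.ofReal (if U ω ≤ c * V ω then (V ω)⁻¹ else 0) ≤
        ∑' k : ℤ, (S k).indicator (fun _ => ENNReal.ofReal ((ρ ^ k)⁻¹)) ω := by
      intro ω
      by_cases hU : U ω ≤ c * V ω
      · rcases eq_or_lt_of_le (hV0 ω) with hV | hV
        · simp [hU, ← hV]
        · obtain ⟨k, hk1, hk2⟩ := exists_mem_Ico_zpow hV hρ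
          have hmem : ω ∈ S k := ⟨⟨hU, hk1⟩, hk2⟩
          calc ENNReal.ofReal (if U ω ≤ c * V ω then (V ω)⁻¹ else 0)
              = ENNReal.ofReal ((V ω)⁻¹) := by rw [if_pos hU]
            _ ≤ ENNReal.ofReal ((ρ ^ k)⁻¹) :=
                ENNReal.ofReal_le_ofReal (inv_anti₀ (htpos k) hk1)
            _ = (S k).indicator (fun _ => ENNReal.ofReal ((ρ ^ k)⁻¹)) ω :=
                (Set.indicator_of_mem hmem (fun _ => ENNReal.ofReal ((ρ ^ k)⁻¹))).symm
            _ ≤ ∑' k : ℤ, (S k).indicator (fun _ => ENNReal.ofReal ((ρ ^ k)⁻¹)) ω :=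
                ENNReal.le_tsum k
      · simp [hU]
    calc ∫⁻ ω, ENNReal.ofReal (if U ω ≤ c * V ω then (V ω)⁻¹ else 0) ∂μ
        ≤ ∫⁻ ω, ∑' k : ℤ, (S k).indicator (fun _ => ENNReal.ofReal ((ρ ^ k)⁻¹)) ω ∂μ :=
          lintegral_mono hpt
      _ = ∑' k : ℤ, ∫⁻ ω, (S k).indicator (fun _ => ENNReal.ofReal ((ρ ^ k)⁻¹)) ω ∂μ :=
          lintegral_tsum fun k => (measurable_const.indicator (hSm k)).aemeasurable
      _ = ∑' k : ℤ, ENNReal.ofReal ((ρ ^ k)⁻¹) * μ (S k) := by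
          refine tsum_congr fun k => ?_
          rw [lintegral_indicator (hSm k), setLIntegral_const]
      _ ≤ ∑' k : ℤ, ENNReal.ofReal (c * ρ) * (a (k + 1) - a k) := ENNReal.tsum_le_tsum hterm
      _ = ENNReal.ofReal (c * ρ) * ∑' k : ℤ, (a (k + 1) - a k) := ENNReal.tsum_mul_left
      _ ≤ ENNReal.ofReal (c * ρ) * 1 := mul_le_mul_right (tele_aux a ha_mono ha_le1) _
      _ = ENNReal.ofReal (c * ρ) := mul_one _
  have hL : ∫⁻ ω, ENNReal.ofReal (if U ω ≤ c * V ω then (V ω)⁻¹ else 0) ∂μ ≤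
      ENNReal.ofReal c := by
    refine ENNReal.le_of_forall_pos_le_add fun ε hε _ => ?_
    have hεpos : (0:ℝ) < ε := hε
    have h1 : (1:ℝ) < 1 + ε / c := lt_add_of_pos_right _ (div_pos hεpos hc)
    calc ∫⁻ ω, ENNReal.ofReal (if U ω ≤ c * V ω then (V ω)⁻¹ else 0) ∂μ
        ≤ ENNReal.ofReal (c * (1 + ε / c)) := key _ h1
      _ = ENNReal.ofReal (c + ε) := by rw [mul_add, mul_one, mul_div_cancel₀ _ (ne_of_gt hc)]
      _ = ENNReal.ofReal c + ENNReal.ofReal ε := ENNReal.ofReal_add hc.le hεpos.le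
      _ = ENNReal.ofReal c + ε := by rw [ENNReal.ofReal_coe_nnreal]
  exact ENNReal.toReal_le_of_le_ofReal hc.le hL
end
end

section
/- Let U be a nonnegative random variable stochastically lower bounded by a uniform on [0,1], V an arbitrary nonnegative random variable, and ν a probability distribution on (0,∞). Define the shape function β_ν(r) = ∫_0^r x dν(x). Then for every c > 0, E[1(U ≤ c·β_ν(V))/V] ≤ c; that is, (U, V) satisfies the dependency control condition with shape function β_ν, regardless of the joint dependence between U and V. -/
open MeasureTheory ProbabilityTheory
open scoped ENNReal

noncomputable section

/-- `∫_{(v,∞)} x⁻² dx = v⁻¹` in `ℝ≥0∞` form. -/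
lemma lintegral_Ioi_inv_sq {v : ℝ} (hv : 0 < v) :
    ∫⁻ x in Set.Ioi v, ENNReal.ofReal ((x * x)⁻¹) = ENNReal.ofReal v⁻¹ := by
  have heq : Set.EqOn (fun x : ℝ => x ^ (-2 : ℝ)) (fun x : ℝ => (x * x)⁻¹) (Set.Ioi v) := by
    intro x hx
    have hx0 : (0:ℝ) < x := hv.trans hx
    show x ^ (-2:ℝ) = (x * x)⁻¹
    rw [Real.rpow_neg hx0.le, show (2:ℝ) = ((2:ℕ):ℝ) by norm_num, Real.rpow_natCast, pow_two]
  have hint : IntegrableOn (fun x : ℝ => (x * x)⁻¹) (Set.Ioi v) :=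
    (integrableOn_Ioi_rpow_of_lt (by norm_num : (-2:ℝ) < -1) hv).congr_fun heq measurableSet_Ioi
  rw [← ofReal_integral_eq_lintegral_ofReal hint
    (Filter.Eventually.of_forall fun x => inv_nonneg.mpr (mul_self_nonneg x))]
  congr 1
  rw [← setIntegral_congr_fun measurableSet_Ioi heq,
    integral_Ioi_rpow_of_lt (by norm_num : (-2:ℝ) < -1) hv]
  norm_num [Real.rpow_neg_one]

/-- Let `ν` be a probability distribution on `(0, ∞)` and `β_ν(r) = ∫_0^r x dν(x)`.
If `U` is stochastically lower bounded by a uniform on `[0,1]` and `V` is an arbitrary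
nonnegative random variable, then `(U, V)` satisfies the dependency control condition
with shape function `β_ν`, regardless of the joint dependence of `U` and `V`. -/
theorem stmt6 {Ω : Type*} [MeasurableSpace Ω] (μ : Measure Ω) [IsProbabilityMeasure μ]
    (U V : Ω → ℝ) (hUm : Measurable U) (hVm : Measurable V)
    (hU0 : ∀ ω, 0 ≤ U ω) (hV0 : ∀ ω, 0 ≤ V ω)
    (hsuper : ∀ t ∈ Set.Icc (0:ℝ) 1, μ {ω | U ω ≤ t} ≤ ENNReal.ofReal t)
    (ν : Measure ℝ) [IsProbabilityMeasure ν] (hν : ν (Set.Iic 0) = 0) :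
    ∀ c : ℝ, 0 < c →
      ∫ ω, (if U ω ≤ c * (∫ x in Set.Ioc 0 (V ω), x ∂ν) then (V ω)⁻¹ else 0) ∂μ ≤ c := by
  intro c hc
  set β : ℝ → ℝ := fun v => ∫ x in Set.Ioc 0 v, x ∂ν with hβdef
  -- basic properties of β
  have hβint : ∀ v : ℝ, IntegrableOn (fun x : ℝ => x) (Set.Ioc 0 v) ν := by
    intro v
    apply Measure.integrableOn_of_bounded (M := |v|) (measure_ne_top ν _)
      measurable_id.aestronglyMeasurable
    filter_upwards [ae_restrict_mem measurableSet_Ioc] with x hx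
    simp only [id_eq, Real.norm_eq_abs]
    rw [abs_of_nonneg hx.1.le]
    exact le_trans hx.2 (le_abs_self v)
  have hβ0 : ∀ v, 0 ≤ β v := fun v =>
    setIntegral_nonneg measurableSet_Ioc (fun x hx => hx.1.le)
  have hβmono : Monotone β := by
    intro a b hab
    exact setIntegral_mono_set (hβint b)
      ((ae_restrict_mem measurableSet_Ioc).mono fun x hx => hx.1.le)
      (HasSubset.Subset.eventuallyLE (Set.Ioc_subset_Ioc_right hab))
  have hβmeas : Measurable β := hβmono.measurable
  -- superuniformity for all nonnegative thresholds
  have hsuper' : ∀ t : ℝ, 0 ≤ t → μ {ω | U ω ≤ t} ≤ ENNReal.ofReal t := by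
    intro t ht
    rcases le_or_gt t 1 with h | h
    · exact hsuper t ⟨ht, h⟩
    · refine le_trans prob_le_one ?_
      rw [← ENNReal.ofReal_one]
      exact ENNReal.ofReal_le_ofReal h.le
  -- the integrand
  set F : Ω → ℝ := fun ω => if U ω ≤ c * β (V ω) then (V ω)⁻¹ else 0 with hFdef
  have hF0 : ∀ ω, 0 ≤ F ω := by
    intro ω
    simp only [hFdef]
    split
    · exact inv_nonneg.mpr (hV0 ω)
    · exact le_refl 0
  have hFmeas : Measurable F := by
    exact Measurable.ite
      (measurableSet_le hUm ((hβmeas.comp hVm).const_mul c))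
      hVm.inv measurable_const
  -- kernel
  set k : ℝ → ℝ≥0∞ := fun x => ENNReal.ofReal ((x * x)⁻¹) with hkdef
  have hkmeas : Measurable k := (measurable_id.mul measurable_id).inv.ennreal_ofReal
  -- Step A : pointwise bound
  have stepA : ∀ ω, ENNReal.ofReal (F ω) ≤
      ∫⁻ x in Set.Ioi (0:ℝ), (if U ω ≤ c * β x then k x else 0) := by
    intro ω
    by_cases h : U ω ≤ c * β (V ω)
    · rcases eq_or_lt_of_le (hV0 ω) with hV | hV
      · simp only [hFdef, if_pos h, ← hV, inv_zero, ENNReal.ofReal_zero]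
        exact zero_le
      · have h1 : ENNReal.ofReal (F ω) = ENNReal.ofReal (V ω)⁻¹ := by
          simp [hFdef, if_pos h]
        rw [h1]
        calc ENNReal.ofReal (V ω)⁻¹ = ∫⁻ x in Set.Ioi (V ω), k x := (lintegral_Ioi_inv_sq hV).symm
          _ = ∫⁻ x in Set.Ioi (V ω), (if U ω ≤ c * β x then k x else 0) := by
              refine (setLIntegral_congr_fun measurableSet_Ioi ?_).symm
              intro x hx
              exact if_pos (h.trans (mul_le_mul_of_nonneg_left (hβmono hx.le) hc.le))
          _ ≤ _ := lintegral_mono_set (Set.Ioi_subset_Ioi (hV0 ω))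
    · simp only [hFdef, if_neg h, ENNReal.ofReal_zero]
      exact zero_le
  -- Step B : Tonelli
  have hmeasK : Measurable (Function.uncurry fun (ω : Ω) (x : ℝ) =>
      (if U ω ≤ c * β x then k x else 0)) := by
    refine Measurable.ite ?_ (hkmeas.comp measurable_snd) measurable_const
    exact measurableSet_le (hUm.comp measurable_fst)
      ((hβmeas.comp measurable_snd).const_mul c)
  have stepB : ∫⁻ ω, (∫⁻ x in Set.Ioi (0:ℝ), (if U ω ≤ c * β x then k x else 0)) ∂μ
      = ∫⁻ x in Set.Ioi (0:ℝ), μ {ω | U ω ≤ c * β x} * k x := by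
    rw [lintegral_lintegral_swap hmeasK.aemeasurable]
    refine lintegral_congr fun x => ?_
    have : ∫⁻ ω, (if U ω ≤ c * β x then k x else 0) ∂μ
        = ∫⁻ ω, {ω | U ω ≤ c * β x}.indicator (fun _ => k x) ω ∂μ :=
      lintegral_congr fun ω => by simp [Set.indicator_apply]
    rw [this, lintegral_indicator_const (measurableSet_le hUm measurable_const), mul_comm]
  -- Step C : superuniformity bound
  have stepC : ∫⁻ x in Set.Ioi (0:ℝ), μ {ω | U ω ≤ c * β x} * k x
      ≤ ∫⁻ x in Set.Ioi (0:ℝ), ENNReal.ofReal c * (ENNReal.ofReal (β x) * k x) := by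
    refine lintegral_mono fun x => ?_
    rw [← mul_assoc, ← ENNReal.ofReal_mul hc.le]
    exact mul_le_mul_left (hsuper' _ (mul_nonneg hc.le (hβ0 x))) _
  -- Step D : second Tonelli
  have hβl : ∀ x : ℝ, ENNReal.ofReal (β x) = ∫⁻ z in Set.Ioc 0 x, ENNReal.ofReal z ∂ν := by
    intro x
    exact ofReal_integral_eq_lintegral_ofReal (hβint x)
      ((ae_restrict_mem measurableSet_Ioc).mono fun z hz => hz.1.le)
  have hνpos : ∀ᵐ z ∂ν, (0:ℝ) < z := by
    rw [ae_iff]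
    refine measure_mono_null (fun z hz => ?_) hν
    simpa using hz
  have stepD : ∫⁻ x in Set.Ioi (0:ℝ), ENNReal.ofReal (β x) * k x ≤ 1 := by
    have e1 : ∫⁻ x in Set.Ioi (0:ℝ), ENNReal.ofReal (β x) * k x
        = ∫⁻ x in Set.Ioi (0:ℝ), ∫⁻ z, (if 0 < z ∧ z ≤ x then ENNReal.ofReal z * k x else 0) ∂ν := by
      refine lintegral_congr fun x => ?_
      rw [hβl x, ← lintegral_indicator measurableSet_Ioc, ← lintegral_mul_const' _ _ (by simp [hkdef])]
      · refine lintegral_congr fun z => ?_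
        simp [Set.indicator_apply, Set.mem_Ioc, ite_mul]
    have hmeas2 : Measurable (Function.uncurry fun (x z : ℝ) =>
        (if 0 < z ∧ z ≤ x then ENNReal.ofReal z * k x else 0)) := by
      refine Measurable.ite ?_
        ((measurable_snd.ennreal_ofReal).mul (hkmeas.comp measurable_fst)) measurable_const
      exact (measurableSet_lt measurable_const measurable_snd).inter
        (measurableSet_le measurable_snd measurable_fst)
    have e2 : ∫⁻ x in Set.Ioi (0:ℝ), ∫⁻ z, (if 0 < z ∧ z ≤ x then ENNReal.ofReal z * k x else 0) ∂ν
        = ∫⁻ z, (∫⁻ x in Set.Ioi (0:ℝ), (if 0 < z ∧ z ≤ x then ENNReal.ofReal z * k x else 0)) ∂ν :=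
      lintegral_lintegral_swap hmeas2.aemeasurable
    have e3 : ∫⁻ z, (∫⁻ x in Set.Ioi (0:ℝ), (if 0 < z ∧ z ≤ x then ENNReal.ofReal z * k x else 0)) ∂ν
        ≤ ∫⁻ _, 1 ∂ν := by
      refine lintegral_mono_ae ?_
      filter_upwards [hνpos] with z hz
      have hind : ∀ x : ℝ, (if 0 < z ∧ z ≤ x then ENNReal.ofReal z * k x else 0)
          = (Set.Ici z).indicator (fun x => ENNReal.ofReal z * k x) x := by
        intro x
        simp [Set.indicator_apply, Set.mem_Ici, hz]
      refine le_of_eq ?_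
      calc ∫⁻ x in Set.Ioi (0:ℝ), (if 0 < z ∧ z ≤ x then ENNReal.ofReal z * k x else 0)
          = ∫⁻ x in Set.Ici z ∩ Set.Ioi 0, ENNReal.ofReal z * k x := by
            rw [← Measure.restrict_restrict measurableSet_Ici]
            rw [← lintegral_indicator measurableSet_Ici]
            exact lintegral_congr fun x => hind x
        _ = ∫⁻ x in Set.Ioi z, ENNReal.ofReal z * k x := by
            have hss : Set.Ici z ∩ Set.Ioi 0 = Set.Ici z :=
              Set.inter_eq_left.mpr fun x hx => hz.trans_le hx
            rw [hss, ← Measure.restrict_congr_set Ioi_ae_eq_Ici]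
        _ = ENNReal.ofReal z * ENNReal.ofReal z⁻¹ := by
            rw [lintegral_const_mul _ hkmeas, lintegral_Ioi_inv_sq hz]
        _ = 1 := by
            rw [← ENNReal.ofReal_mul hz.le, mul_inv_cancel₀ hz.ne', ENNReal.ofReal_one]
    calc _ = _ := e1
      _ = _ := e2
      _ ≤ ∫⁻ _, 1 ∂ν := e3
      _ = 1 := by simp
  -- put it together
  have key : ∫⁻ ω, ENNReal.ofReal (F ω) ∂μ ≤ ENNReal.ofReal c := by
    calc ∫⁻ ω, ENNReal.ofReal (F ω) ∂μ
        ≤ ∫⁻ ω, (∫⁻ x in Set.Ioi (0:ℝ), (if U ω ≤ c * β x then k x else 0)) ∂μ :=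
          lintegral_mono stepA
      _ = ∫⁻ x in Set.Ioi (0:ℝ), μ {ω | U ω ≤ c * β x} * k x := stepB
      _ ≤ ∫⁻ x in Set.Ioi (0:ℝ), ENNReal.ofReal c * (ENNReal.ofReal (β x) * k x) := stepC
      _ = ENNReal.ofReal c * ∫⁻ x in Set.Ioi (0:ℝ), ENNReal.ofReal (β x) * k x := by
          exact lintegral_const_mul _ (hβmeas.ennreal_ofReal.mul hkmeas)
      _ ≤ ENNReal.ofReal c * 1 := mul_le_mul_right stepD _
      _ = ENNReal.ofReal c := mul_one _
  have : ∫ ω, F ω ∂μ = (∫⁻ ω, ENNReal.ofReal (F ω) ∂μ).toReal :=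
    integral_eq_lintegral_of_nonneg_ae (ae_of_all μ hF0) hFmeas.aestronglyMeasurable
  rw [this]
  exact ENNReal.toReal_le_of_le_ofReal hc.le key
end
end

section
/- Let p_1,...,p_m be p-values for hypotheses H_1,...,H_m of which k are false nulls, and let u ∈ {1,...,m} with k < u (so the partial conjunction null H_0^{u/m}: 'fewer than u false nulls' is true). Let f: [0,1]^{m-u+1} → [0,1] be nondecreasing in each coordinate and a valid global null combining function for every subset A ⊆ {1,...,m} of size m−u+1 consisting only of true nulls (i.e., P(f(p_A) ≤ x) ≤ x for all x ∈ (0,1) for such A). Then P^{u/m} := max{ f(p_A) : A ⊆ {1,...,m}, |A| = m−u+1 } satisfies P(P^{u/m} ≤ x) ≤ x for all x ∈ (0,1); equivalently, P^{u/m} equals f applied to the m−u+1 largest p-values and is a valid p-value for H_0^{u/m}. -/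
open MeasureTheory ProbabilityTheory

noncomputable section

/-- Benjamini–Heller construction of partial conjunction p-values: if `f` is a
coordinatewise nondecreasing combining function that is a valid global null p-value on
every all-null subset of size `m − u + 1`, and the number `k` of false nulls satisfies
`k < u`, then `P^{u/m} = max{f(p_A) : |A| = m − u + 1}` is a valid p-value for the
partial conjunction null. -/
theorem stmt10 {Ω : Type*} [MeasurableSpace Ω] (μ : Measure Ω) [IsProbabilityMeasure μ]
    {m u : ℕ} (hu1 : 1 ≤ u) (hum : u ≤ m)
    (p : Ω → Fin m → ℝ) (hp : Measurable p)
    (hrange : ∀ ω i, p ω i ∈ Set.Icc (0:ℝ) 1)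
    (falseNulls : Finset (Fin m)) (hk : falseNulls.card < u)
    (F : Finset (Fin m) → (Fin m → ℝ) → ℝ)  -- F A q represents f(q_A)
    (hdep : ∀ A : Finset (Fin m), ∀ q q' : Fin m → ℝ,
      (∀ i ∈ A, q i = q' i) → F A q = F A q')
    (hmono : ∀ A : Finset (Fin m), ∀ q q' : Fin m → ℝ, q ≤ q' → F A q ≤ F A q')
    (hvalid : ∀ A : Finset (Fin m), A.card = m - u + 1 → (∀ i ∈ A, i ∉ falseNulls) →
      ∀ x ∈ Set.Ioo (0:ℝ) 1, μ {ω | F A (p ω) ≤ x} ≤ ENNReal.ofReal x) :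
    ∀ x ∈ Set.Ioo (0:ℝ) 1,
      μ {ω | (⨆ A : {A : Finset (Fin m) // A.card = m - u + 1}, F A.1 (p ω)) ≤ x}
        ≤ ENNReal.ofReal x := by
  intro x hx
  -- find an all-null subset of size m - u + 1
  have hcompl : m - u + 1 ≤ falseNullsᶜ.card := by
    have := Finset.card_compl (s := falseNulls)
    rw [this, Fintype.card_fin]
    omega
  obtain ⟨A, hAsub, hAcard⟩ := Finset.exists_subset_card_eq hcompl
  have hAnull : ∀ i ∈ A, i ∉ falseNulls := fun i hi =>
    Finset.mem_compl.mp (hAsub hi)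
  have hsub : {ω | (⨆ A : {A : Finset (Fin m) // A.card = m - u + 1}, F A.1 (p ω)) ≤ x}
      ⊆ {ω | F A (p ω) ≤ x} := by
    intro ω hω
    have hbdd : BddAbove (Set.range fun B : {A : Finset (Fin m) // A.card = m - u + 1} =>
        F B.1 (p ω)) := Set.Finite.bddAbove (Set.finite_range _)
    exact le_trans (le_ciSup hbdd ⟨A, hAcard⟩) hω
  exact le_trans (measure_mono hsub) (hvalid A hAcard hAnull x hx)
end
end

section
/- Let p ∈ [0,1]^M be a PRDS vector on the subset of true nulls, let q = p_i be a true-null p-value with P(q ≤ t) ≤ t for all t, and let g: [0,1]^M → [0,∞) be a coordinatewise nonincreasing measurable function. Then E[ 1(p_i ≤ g(p)) / g(p) ] ≤ 1, where the quotient is defined to be 0 on the event {g(p) = 0}. -/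
open MeasureTheory ProbabilityTheory
open scoped ENNReal NNReal

noncomputable section

private lemma core_mono {ν : Measure ℝ} [IsFiniteMeasure ν] {κ : ℝ → ℝ}
    (hκ : Monotone κ) (hint : Integrable κ ν) {t t' : ℝ} (h : t ≤ t') :
    (∫ x in Set.Iio t, κ x ∂ν) * (ν (Set.Iio t')).toReal ≤
      (∫ x in Set.Iio t', κ x ∂ν) * (ν (Set.Iio t)).toReal := by
  have hdisj : Disjoint (Set.Iio t) (Set.Ico t t') :=
    Set.disjoint_left.2 fun x hx hx' => (not_lt.2 hx'.1) hx
  have hunion : Set.Iio t ∪ Set.Ico t t' = Set.Iio t' := Set.Iio_union_Ico_eq_Iio h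
  have hsplit : (∫ x in Set.Iio t', κ x ∂ν)
      = (∫ x in Set.Iio t, κ x ∂ν) + ∫ x in Set.Ico t t', κ x ∂ν := by
    rw [← hunion, setIntegral_union hdisj measurableSet_Ico hint.integrableOn hint.integrableOn]
  have hmeasplit : (ν (Set.Iio t')).toReal
      = (ν (Set.Iio t)).toReal + (ν (Set.Ico t t')).toReal := by
    rw [← hunion, measure_union hdisj measurableSet_Ico,
      ENNReal.toReal_add (measure_ne_top ν _) (measure_ne_top ν _)]
  have ha : 0 ≤ (ν (Set.Iio t)).toReal := ENNReal.toReal_nonneg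
  have hkey : (∫ x in Set.Iio t, κ x ∂ν) * (ν (Set.Ico t t')).toReal
      ≤ (∫ x in Set.Ico t t', κ x ∂ν) * (ν (Set.Iio t)).toReal := by
    have h1 : ∀ y ∈ Set.Ico t t', (∫ x in Set.Iio t, κ x ∂ν) ≤ κ y * (ν (Set.Iio t)).toReal := by
      intro y hy
      have h0 : (∫ x in Set.Iio t, κ x ∂ν) ≤ ∫ _x in Set.Iio t, κ y ∂ν := by
        refine setIntegral_mono_on hint.integrableOn
          (integrableOn_const (measure_ne_top ν _)) measurableSet_Iio ?_
        intro x hx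
        exact hκ (le_trans (le_of_lt hx) hy.1)
      simpa [setIntegral_const, smul_eq_mul, mul_comm, Measure.real] using h0
    have h2 : (∫ _y in Set.Ico t t', (∫ x in Set.Iio t, κ x ∂ν) ∂ν)
        ≤ ∫ y in Set.Ico t t', κ y * (ν (Set.Iio t)).toReal ∂ν :=
      setIntegral_mono_on (integrableOn_const (measure_ne_top ν _))
        (hint.integrableOn.mul_const _) measurableSet_Ico h1
    rw [setIntegral_const, integral_mul_const] at h2
    simpa [smul_eq_mul, mul_comm, Measure.real] using h2
  rw [hsplit, hmeasplit]
  nlinarith [hkey]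

private lemma sum_bound {N k0 : ℕ} (w z m : ℕ → ℝ) (ε : ℝ) (hε : 0 < ε)
    (hkε : ∀ k ∈ Finset.Icc k0 N, 1 ≤ ε * k)
    (hpos : ∀ k ∈ Finset.Icc k0 N, 0 < k)
    (hz0 : ∀ k, 0 ≤ z k) (hzw : ∀ k, z k ≤ w k) (hwm : ∀ k, w k ≤ m k)
    (hm0 : ∀ k, 0 ≤ m k) (hmm : ∀ k, m k ≤ m (k+1))
    (hkey : ∀ k, w (k+1) * m k ≤ z k * m (k+1))
    (hmb : ∀ k ∈ Finset.Icc k0 N, (N:ℝ) * m k ≤ (k:ℝ)+1) :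
    ∑ k ∈ Finset.Icc k0 N, ((N:ℝ)/k) * (w k - z k) ≤ 1 + ε := by
  classical
  set β : ℕ → ℝ := fun k => if m k = 0 then 1 else w k / m k with hβ
  have hw0 : ∀ k, 0 ≤ w k := fun k => le_trans (hz0 k) (hzw k)
  have hβ0 : ∀ k, 0 ≤ β k := by
    intro k; simp only [hβ]
    split
    · norm_num
    · exact div_nonneg (hw0 k) (hm0 k)
  have hβ1 : ∀ k, β k ≤ 1 := by
    intro k; simp only [hβ]
    split
    · exact le_refl 1
    · exact div_le_one_of_le₀ (hwm k) (hm0 k)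
  have hzβ : ∀ k, β (k+1) * m k ≤ z k := by
    intro k
    by_cases hmk : m k = 0
    · rw [hmk, mul_zero]; exact hz0 k
    · have hmk1 : m (k+1) ≠ 0 :=
        fun h => hmk (le_antisymm (h ▸ hmm k) (hm0 k))
      have hmk1p : 0 < m (k+1) := lt_of_le_of_ne (hm0 _) (Ne.symm hmk1)
      simp only [hβ, if_neg hmk1]
      rw [div_mul_eq_mul_div, div_le_iff₀ hmk1p]
      exact hkey k
  have hwβ : ∀ k, w k ≤ β k * m k := by
    intro k
    by_cases hmk : m k = 0
    · rw [hmk, mul_zero]; linarith [hwm k, hmk ▸ hwm k]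
    · simp only [hβ, if_neg hmk]
      rw [div_mul_cancel₀ _ hmk]
  have hββ : ∀ k, β (k+1) ≤ β k := by
    intro k
    by_cases hmk : m k = 0
    · have : β k = 1 := by simp only [hβ, if_pos hmk]
      rw [this]; exact hβ1 _
    · have hmkp : 0 < m k := lt_of_le_of_ne (hm0 _) (Ne.symm hmk)
      have h1 : β (k+1) ≤ z k / m k := (le_div_iff₀ hmkp).2 (hzβ k)
      have h2 : z k / m k ≤ w k / m k := by
        apply div_le_div_of_nonneg_right (hzw k) hmkp.le  -- may be wrong name
      have h3 : β k = w k / m k := by simp only [hβ, if_neg hmk]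
      linarith
  have hterm : ∀ k ∈ Finset.Icc k0 N, ((N:ℝ)/k) * (w k - z k) ≤ (1+ε) * (β k - β (k+1)) := by
    intro k hk
    have hkp : (0:ℝ) < k := by exact_mod_cast hpos k hk
    have hdiff0 : 0 ≤ w k - z k := by linarith [hzw k]
    have hβdiff0 : 0 ≤ β k - β (k+1) := by linarith [hββ k]
    have hstep1 : w k - z k ≤ (β k - β (k+1)) * m k := by
      have := hwβ k
      have := hzβ k
      nlinarith
    have hratio : (N:ℝ)/k ≤ (1+ε) * ((N:ℝ)/(k+1)) := by
      have h1 : 1 ≤ ε * k := hkε k hk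
      rw [div_le_iff₀ hkp]
      have hk1 : (0:ℝ) < (k:ℝ)+1 := by linarith
      rw [mul_comm (1+ε) _, mul_assoc, div_mul_eq_mul_div, le_div_iff₀ hk1]
      have hN0 : (0:ℝ) ≤ (N:ℝ) := Nat.cast_nonneg N
      nlinarith
    have hmbk : (N:ℝ)/((k:ℝ)+1) * m k ≤ 1 := by
      have hk1 : (0:ℝ) < (k:ℝ)+1 := by linarith
      rw [div_mul_eq_mul_div, div_le_one hk1]
      exact hmb k hk
    have hq0 : (0:ℝ) ≤ (N:ℝ)/((k:ℝ)+1) := div_nonneg (Nat.cast_nonneg N) (by linarith)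
    calc ((N:ℝ)/k) * (w k - z k) ≤ ((1+ε) * ((N:ℝ)/(k+1))) * (w k - z k) := by
          apply mul_le_mul_of_nonneg_right hratio hdiff0
      _ ≤ ((1+ε) * ((N:ℝ)/(k+1))) * ((β k - β (k+1)) * m k) := by
          apply mul_le_mul_of_nonneg_left hstep1
          positivity
      _ = (1+ε) * ((β k - β (k+1)) * ((N:ℝ)/((k:ℝ)+1) * m k)) := by push_cast; ring
      _ ≤ (1+ε) * ((β k - β (k+1)) * 1) := by
          apply mul_le_mul_of_nonneg_left _ (by linarith : (0:ℝ) ≤ 1+ε)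
          exact mul_le_mul_of_nonneg_left hmbk hβdiff0
      _ = (1+ε) * (β k - β (k+1)) := by ring
  calc ∑ k ∈ Finset.Icc k0 N, ((N:ℝ)/k) * (w k - z k)
      ≤ ∑ k ∈ Finset.Icc k0 N, (1+ε) * (β k - β (k+1)) := Finset.sum_le_sum hterm
    _ = (1+ε) * ∑ k ∈ Finset.Icc k0 N, (β k - β (k+1)) := by rw [Finset.mul_sum]
    _ ≤ (1+ε) * 1 := by
        apply mul_le_mul_of_nonneg_left _ (by linarith : (0:ℝ) ≤ 1+ε)
        by_cases hkN : k0 ≤ N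
        · have : ∑ k ∈ Finset.Icc k0 N, (β k - β (k+1)) = β k0 - β (N+1) := by
            have hicc : Finset.Icc k0 N = Finset.Ico k0 (N+1) := by
              rw [Finset.Ico_add_one_right_eq_Icc]
            rw [hicc, Finset.sum_Ico_eq_sum_range]
            have heq : ∀ i, β (k0 + i) - β (k0 + i + 1)
                = (fun j => β (k0 + j)) i - (fun j => β (k0 + j)) (i+1) := by
              intro i; simp [Nat.add_assoc]
            rw [Finset.sum_congr rfl (fun i _ => heq i), Finset.sum_range_sub' (fun j => β (k0 + j))]
            congr 2
            omega
          rw [this]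
          linarith [hβ1 k0, hβ0 (N+1)]
        · rw [Finset.Icc_eq_empty hkN, Finset.sum_empty]
          norm_num
    _ = 1 + ε := by ring

/-- Superuniformity lemma (Ramdas et al. 2017, item (b)): if `p` is PRDS on the true
nulls, `p_i` is a true-null p-value stochastically lower bounded by uniform, and `g` is
coordinatewise nonincreasing and nonnegative, then `E[1(p_i ≤ g(p))/g(p)] ≤ 1`, the
quotient being `0` on `{g(p) = 0}`. -/
theorem stmt13 {Ω : Type*} [MeasurableSpace Ω] (μ : Measure Ω) [IsProbabilityMeasure μ]
    {M : ℕ} (p : Ω → Fin M → ℝ) (hp : Measurable p)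
    (hrange : ∀ ω i, p ω i ∈ Set.Icc (0:ℝ) 1)
    (I0 : Set (Fin M)) (hPRDS : PRDSOn μ p I0)
    (i : Fin M) (hi : i ∈ I0)
    (hsuper : ∀ t ∈ Set.Icc (0:ℝ) 1, μ {ω | p ω i ≤ t} ≤ ENNReal.ofReal t)
    (g : (Fin M → ℝ) → ℝ) (hg : Antitone g) (hg0 : ∀ q, 0 ≤ g q)
    (hgm : Measurable g) :
    ∫ ω, (if p ω i ≤ g (p ω) then (g (p ω))⁻¹ else 0) ∂μ ≤ 1 := by
  classical
  -- superuniformity for strict inequality events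
  have hsup : ∀ t : ℝ, 0 ≤ t → (μ {ω | p ω i < t}).toReal ≤ t := by
    intro t ht
    have hle : μ {ω | p ω i < t} ≤ ENNReal.ofReal t := by
      rcases le_or_gt t 1 with h1 | h1
      · have hsub : {ω | p ω i < t} ⊆ {ω | p ω i ≤ t} :=
          fun ω hω => show p ω i ≤ t from le_of_lt hω
        exact le_trans (measure_mono hsub) (hsuper t ⟨ht, h1⟩)
      · calc μ {ω | p ω i < t} ≤ 1 := prob_le_one
          _ = ENNReal.ofReal 1 := by simp
          _ ≤ ENNReal.ofReal t := ENNReal.ofReal_le_ofReal h1.le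
    exact ENNReal.toReal_le_of_le_ofReal ht hle
  -- the key PRDS correlation inequality
  have key : ∀ c t t' : ℝ, t ≤ t' →
      (μ ({ω | c ≤ min (g (p ω)) 1} ∩ {ω | p ω i < t'})).toReal * (μ {ω | p ω i < t}).toReal ≤
        (μ ({ω | c ≤ min (g (p ω)) 1} ∩ {ω | p ω i < t})).toReal * (μ {ω | p ω i < t'}).toReal := by
    have hq : Measurable (fun ω => p ω i) := (measurable_pi_apply i).comp hp
    intro c t t' htt
    obtain ⟨κ, hκmono, hκver⟩ := hPRDS {x | min (g x) 1 < c}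
      (measurableSet_lt (hgm.min measurable_const) measurable_const)
      (fun x y hxy hx => lt_of_le_of_lt (min_le_min (hg hxy) le_rfl) hx) i hi
    haveI : IsProbabilityMeasure (μ.map (fun ω => p ω i)) :=
      Measure.isProbabilityMeasure_map hq.aemeasurable
    have hκint : Integrable κ (μ.map (fun ω => p ω i)) := by
      have hae : ∀ᵐ x ∂(μ.map (fun ω => p ω i)), x ∈ Set.Icc (0:ℝ) 1 :=
        (ae_map_iff hq.aemeasurable measurableSet_Icc).2
          (Filter.Eventually.of_forall fun ω => hrange ω i)
      refine (integrable_const (max |κ 0| |κ 1|)).mono'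
        (hκmono.measurable.aestronglyMeasurable) ?_
      filter_upwards [hae] with x hx
      rw [Real.norm_eq_abs, abs_le]
      constructor
      · have h1 := hκmono hx.1
        have h2 := neg_abs_le (κ 0)
        have h3 := le_max_left |κ 0| |κ 1|
        linarith
      · have h1 := hκmono hx.2
        have h2 := le_abs_self (κ 1)
        have h3 := le_max_right |κ 0| |κ 1|
        linarith
    have hvt := hκver (Set.Iio t) measurableSet_Iio
    have hvt' := hκver (Set.Iio t') measurableSet_Iio
    have hcm := core_mono hκmono hκint htt
    rw [hvt, hvt',
      Measure.map_apply hq (measurableSet_Iio (a := t)),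
      Measure.map_apply hq (measurableSet_Iio (a := t'))] at hcm
    have hDset : {ω | p ω ∈ {x | min (g x) 1 < c}} = {ω | min (g (p ω)) 1 < c} := rfl
    have hpre : ∀ s : ℝ, (fun ω => p ω i) ⁻¹' (Set.Iio s) = {ω | p ω i < s} := fun s => rfl
    rw [hDset, hpre, hpre] at hcm
    -- complement arithmetic
    have hDm : MeasurableSet {ω | min (g (p ω)) 1 < c} :=
      measurableSet_lt ((hgm.comp hp).min measurable_const) measurable_const
    have hsplit : ∀ s : ℝ, (μ ({ω | c ≤ min (g (p ω)) 1} ∩ {ω | p ω i < s})).toReal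
        + (μ ({ω | min (g (p ω)) 1 < c} ∩ {ω | p ω i < s})).toReal
        = (μ {ω | p ω i < s}).toReal := by
      intro s
      have h1 : μ ({ω | p ω i < s} ∩ {ω | min (g (p ω)) 1 < c})
          + μ ({ω | p ω i < s} \ {ω | min (g (p ω)) 1 < c}) = μ {ω | p ω i < s} :=
        measure_inter_add_diff _ hDm
      have h2 : {ω | p ω i < s} \ {ω | min (g (p ω)) 1 < c}
          = {ω | c ≤ min (g (p ω)) 1} ∩ {ω | p ω i < s} := by
        ext ω; simp [Set.mem_setOf_eq, not_lt, and_comm]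
      have h3 : {ω | p ω i < s} ∩ {ω | min (g (p ω)) 1 < c}
          = {ω | min (g (p ω)) 1 < c} ∩ {ω | p ω i < s} := Set.inter_comm _ _
      rw [h2, h3] at h1
      have := congrArg ENNReal.toReal h1
      rw [ENNReal.toReal_add (measure_ne_top μ _) (measure_ne_top μ _)] at this
      linarith
    have e1 := hsplit t
    have e2 := hsplit t'
    have hE1 : (μ ({ω | c ≤ min (g (p ω)) 1} ∩ {ω | p ω i < t})).toReal
        = (μ {ω | p ω i < t}).toReal - (μ ({ω | min (g (p ω)) 1 < c} ∩ {ω | p ω i < t})).toReal := by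
      linarith
    have hE2 : (μ ({ω | c ≤ min (g (p ω)) 1} ∩ {ω | p ω i < t'})).toReal
        = (μ {ω | p ω i < t'}).toReal - (μ ({ω | min (g (p ω)) 1 < c} ∩ {ω | p ω i < t'})).toReal := by
      linarith
    rw [hE1, hE2]
    nlinarith [hcm]
  -- the truncated lintegral bound
  have hj : ∀ j : ℕ, (∫⁻ ω, ENNReal.ofReal
      (if p ω i ≤ min (g (p ω)) 1 ∧ 1/((j:ℝ)+1) ≤ min (g (p ω)) 1
        then (min (g (p ω)) 1)⁻¹ else 0) ∂μ) ≤ 1 := by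
    intro j
    classical
    have hGm : Measurable fun ω => min (g (p ω)) 1 := (hgm.comp hp).min measurable_const
    refine ENNReal.le_of_forall_pos_le_add fun ε hεpos _ => ?_
    set εR : ℝ := (ε : ℝ) with hεRdef
    have hεR : 0 < εR := hεpos
    set K : ℕ := ⌈1/εR⌉₊ with hKdef
    set N : ℕ := (j+1)*(K+1) with hNdef
    set k0 : ℕ := K+1 with hk0def
    have hN0 : 0 < N := Nat.mul_pos (Nat.succ_pos j) (Nat.succ_pos K)
    have hNR : (0:ℝ) < (N:ℝ) := by exact_mod_cast hN0
    set Cset : ℕ → Set Ω := fun k =>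
      ({ω | ((k:ℝ)/N) ≤ min (g (p ω)) 1} \ {ω | (((k:ℝ)+1)/N) ≤ min (g (p ω)) 1})
        ∩ {ω | p ω i < ((k:ℝ)+1)/N} with hCdef
    have hCm : ∀ k, MeasurableSet (Cset k) := by
      intro k
      exact (((measurableSet_le measurable_const hGm)).diff
        (measurableSet_le measurable_const hGm)).inter
        (measurableSet_lt ((measurable_pi_apply i).comp hp) measurable_const)
    -- pointwise bound
    have hpt : ∀ ω, ENNReal.ofReal (if p ω i ≤ min (g (p ω)) 1 ∧ 1/((j:ℝ)+1) ≤ min (g (p ω)) 1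
        then (min (g (p ω)) 1)⁻¹ else 0)
        ≤ ∑ k ∈ Finset.Icc k0 N, (Cset k).indicator (fun _ => ENNReal.ofReal ((N:ℝ)/k)) ω := by
      intro ω
      by_cases hcond : p ω i ≤ min (g (p ω)) 1 ∧ 1/((j:ℝ)+1) ≤ min (g (p ω)) 1
      · obtain ⟨h1, h2⟩ := hcond
        rw [if_pos ⟨h1, h2⟩]
        have hj1 : (0:ℝ) < (j:ℝ)+1 := by positivity
        have hGpos : 0 < min (g (p ω)) 1 := lt_of_lt_of_le (by positivity) h2
        have hG1 : min (g (p ω)) 1 ≤ 1 := min_le_right _ _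
        set k : ℕ := ⌊(N:ℝ) * min (g (p ω)) 1⌋₊ with hkdef
        have hfl : ((k:ℝ)) ≤ (N:ℝ) * min (g (p ω)) 1 := Nat.floor_le (by positivity)
        have hfu : (N:ℝ) * min (g (p ω)) 1 < (k:ℝ)+1 := Nat.lt_floor_add_one _
        have hkN : k ≤ N := by
          have hle : (N:ℝ) * min (g (p ω)) 1 ≤ ((N:ℕ):ℝ) := by nlinarith
          calc k ≤ ⌊((N:ℕ):ℝ)⌋₊ := Nat.floor_mono hle
            _ = N := Nat.floor_natCast N
        have hNval : (N:ℝ) = ((j:ℝ)+1)*((K:ℝ)+1) := by rw [hNdef, hk0def]; push_cast; ring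
        have hk0k : k0 ≤ k := by
          apply Nat.le_floor
          have : (N:ℝ) * (1/((j:ℝ)+1)) ≤ (N:ℝ) * min (g (p ω)) 1 :=
            mul_le_mul_of_nonneg_left h2 (le_of_lt hNR)
          have heq : (N:ℝ) * (1/((j:ℝ)+1)) = (K:ℝ)+1 := by
            rw [hNval]; field_simp
          rw [hk0def]; push_cast
          linarith
        have hkpos : 0 < k := lt_of_lt_of_le (Nat.succ_pos K) hk0k
        have hkR : (0:ℝ) < (k:ℝ) := by exact_mod_cast hkpos
        have hmem : ω ∈ Cset k := by
          refine ⟨⟨?_, ?_⟩, ?_⟩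
          · show ((k:ℝ)/N) ≤ min (g (p ω)) 1
            rw [div_le_iff₀ hNR]
            nlinarith
          · show ¬ (((k:ℝ)+1)/N) ≤ min (g (p ω)) 1
            rw [not_le, lt_div_iff₀ hNR]
            nlinarith
          · show p ω i < ((k:ℝ)+1)/N
            have : min (g (p ω)) 1 < ((k:ℝ)+1)/N := by
              rw [lt_div_iff₀ hNR]; nlinarith
            linarith
        refine le_trans ?_ (Finset.single_le_sum (f := fun k =>
          (Cset k).indicator (fun _ => ENNReal.ofReal ((N:ℝ)/k)) ω)
          (fun _ _ => zero_le) (Finset.mem_Icc.2 ⟨hk0k, hkN⟩))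
        simp only [Set.indicator_of_mem hmem]
        apply ENNReal.ofReal_le_ofReal
        have hkN' : (0:ℝ) < (k:ℝ)/N := by positivity
        calc (min (g (p ω)) 1)⁻¹ ≤ ((k:ℝ)/N)⁻¹ := by
              apply inv_anti₀ hkN'
              rw [div_le_iff₀ hNR]; nlinarith
          _ = (N:ℝ)/k := by rw [inv_div]
      · rw [if_neg hcond]
        simp
    -- the real-valued w, z, m sequences
    set w : ℕ → ℝ := fun k =>
      (μ ({ω | ((k:ℝ)/N) ≤ min (g (p ω)) 1} ∩ {ω | p ω i < ((k:ℝ)+1)/N})).toReal with hwdef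
    set z : ℕ → ℝ := fun k =>
      (μ ({ω | (((k:ℝ)+1)/N) ≤ min (g (p ω)) 1} ∩ {ω | p ω i < ((k:ℝ)+1)/N})).toReal with hzdef
    set m : ℕ → ℝ := fun k => (μ {ω | p ω i < ((k:ℝ)+1)/N}).toReal with hmdef
    have hCtoReal : ∀ k : ℕ, (μ (Cset k)).toReal = w k - z k := by
      intro k
      have hCeq : Cset k = ({ω | ((k:ℝ)/N) ≤ min (g (p ω)) 1} ∩ {ω | p ω i < ((k:ℝ)+1)/N})
          \ ({ω | (((k:ℝ)+1)/N) ≤ min (g (p ω)) 1} ∩ {ω | p ω i < ((k:ℝ)+1)/N}) := by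
        rw [hCdef]
        ext ω
        simp only [Set.mem_inter_iff, Set.mem_diff, Set.mem_setOf_eq]
        have hck : ((k:ℝ)/N) ≤ ((k:ℝ)+1)/N := by
          exact div_le_div_of_nonneg_right (by linarith) hNR.le
        tauto
      have hsub : ({ω | (((k:ℝ)+1)/N) ≤ min (g (p ω)) 1} ∩ {ω | p ω i < ((k:ℝ)+1)/N})
          ⊆ ({ω | ((k:ℝ)/N) ≤ min (g (p ω)) 1} ∩ {ω | p ω i < ((k:ℝ)+1)/N}) := by
        intro ω hω
        refine ⟨?_, hω.2⟩
        have hck : ((k:ℝ)/N) ≤ ((k:ℝ)+1)/N := by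
          exact div_le_div_of_nonneg_right (by linarith) hNR.le
        exact le_trans hck hω.1
      rw [hCeq, measure_diff hsub (((measurableSet_le measurable_const hGm).inter
        (measurableSet_lt ((measurable_pi_apply i).comp hp) measurable_const)).nullMeasurableSet)
        (measure_ne_top μ _),
        ENNReal.toReal_sub_of_le (measure_mono hsub) (measure_ne_top μ _)]
    -- numeric side conditions
    have hkε : ∀ k ∈ Finset.Icc k0 N, 1 ≤ εR * k := by
      intro k hk
      have hkk : k0 ≤ k := (Finset.mem_Icc.1 hk).1
      have h1 : (1/εR : ℝ) ≤ (K:ℝ) := Nat.le_ceil _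
      have h2 : (k0:ℝ) ≤ (k:ℝ) := by exact_mod_cast hkk
      have h3 : ((K:ℝ)+1) ≤ (k:ℝ) := by rw [hk0def] at h2; push_cast at h2; linarith
      have h4 : εR * (1/εR) = 1 := by field_simp
      nlinarith
    have hposk : ∀ k ∈ Finset.Icc k0 N, 0 < k := fun k hk =>
      lt_of_lt_of_le (Nat.succ_pos K) (Finset.mem_Icc.1 hk).1
    have hz0 : ∀ k, 0 ≤ z k := fun k => ENNReal.toReal_nonneg
    have hzw : ∀ k, z k ≤ w k := by
      intro k
      apply ENNReal.toReal_mono (measure_ne_top μ _)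
      apply measure_mono
      intro ω hω
      refine ⟨?_, hω.2⟩
      have hck : ((k:ℝ)/N) ≤ ((k:ℝ)+1)/N := by
        exact div_le_div_of_nonneg_right (by linarith) hNR.le
      exact le_trans hck hω.1
    have hwm : ∀ k, w k ≤ m k := by
      intro k
      apply ENNReal.toReal_mono (measure_ne_top μ _)
      exact measure_mono fun ω hω => hω.2
    have hm0 : ∀ k, 0 ≤ m k := fun k => ENNReal.toReal_nonneg
    have hmm : ∀ k, m k ≤ m (k+1) := by
      intro k
      apply ENNReal.toReal_mono (measure_ne_top μ _)
      apply measure_mono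
      intro ω hω
      have : ((k:ℝ)+1)/N ≤ ((k:ℝ)+1+1)/N := by
        exact div_le_div_of_nonneg_right (by linarith) hNR.le
      show p ω i < ((((k+1):ℕ):ℝ)+1)/N
      push_cast
      calc p ω i < ((k:ℝ)+1)/N := hω
        _ ≤ ((k:ℝ)+1+1)/N := this
    have hkey2 : ∀ k, w (k+1) * m k ≤ z k * m (k+1) := by
      intro k
      have h := key (((k:ℝ)+1)/N) (((k:ℝ)+1)/N) (((k:ℝ)+1+1)/N) ?hle
      case hle =>
        exact div_le_div_of_nonneg_right (by linarith) hNR.le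
      rw [hwdef, hzdef, hmdef]
      push_cast
      convert h using 4 <;> push_cast <;> ring_nf
    have hmb : ∀ k ∈ Finset.Icc k0 N, (N:ℝ) * m k ≤ (k:ℝ)+1 := by
      intro k hk
      have h1 : m k ≤ ((k:ℝ)+1)/N := hsup _ (by positivity)
      calc (N:ℝ) * m k ≤ (N:ℝ) * (((k:ℝ)+1)/N) := mul_le_mul_of_nonneg_left h1 (le_of_lt hNR)
        _ = (k:ℝ)+1 := by field_simp
    have hsum : ∑ k ∈ Finset.Icc k0 N, ((N:ℝ)/k) * (w k - z k) ≤ 1 + εR :=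
      sum_bound w z m εR hεR hkε hposk hz0 hzw hwm hm0 hmm hkey2 hmb
    calc (∫⁻ ω, ENNReal.ofReal (if p ω i ≤ min (g (p ω)) 1 ∧ 1/((j:ℝ)+1) ≤ min (g (p ω)) 1
          then (min (g (p ω)) 1)⁻¹ else 0) ∂μ)
        ≤ ∫⁻ ω, ∑ k ∈ Finset.Icc k0 N, (Cset k).indicator
            (fun _ => ENNReal.ofReal ((N:ℝ)/k)) ω ∂μ := lintegral_mono hpt
      _ = ∑ k ∈ Finset.Icc k0 N, ENNReal.ofReal ((N:ℝ)/k) * μ (Cset k) := by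
          rw [lintegral_finset_sum _ (fun k _ => measurable_const.indicator (hCm k))]
          exact Finset.sum_congr rfl fun k _ => lintegral_indicator_const (hCm k) _
      _ = ∑ k ∈ Finset.Icc k0 N, ENNReal.ofReal (((N:ℝ)/k) * (w k - z k)) := by
          refine Finset.sum_congr rfl fun k _ => ?_
          rw [← hCtoReal k, ENNReal.ofReal_mul (by positivity),
            ENNReal.ofReal_toReal (measure_ne_top μ _)]
      _ = ENNReal.ofReal (∑ k ∈ Finset.Icc k0 N, ((N:ℝ)/k) * (w k - z k)) := by
          rw [ENNReal.ofReal_sum_of_nonneg]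
          intro k hk
          rw [← hCtoReal k]
          positivity
      _ ≤ ENNReal.ofReal (1 + εR) := ENNReal.ofReal_le_ofReal hsum
      _ = 1 + (ε:ℝ≥0∞) := by
          rw [ENNReal.ofReal_add zero_le_one (le_of_lt hεR), ENNReal.ofReal_one,
            hεRdef, ENNReal.ofReal_coe_nnreal]
  -- conclusion
  classical
  have hGm : Measurable fun ω => min (g (p ω)) 1 := (hgm.comp hp).min measurable_const
  have hfm : Measurable fun ω => (if p ω i ≤ g (p ω) then (g (p ω))⁻¹ else 0 : ℝ) := by
    refine Measurable.ite ?_ (hgm.comp hp).inv measurable_const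
    exact measurableSet_le ((measurable_pi_apply i).comp hp) (hgm.comp hp)
  have hfnn : ∀ ω, 0 ≤ (if p ω i ≤ g (p ω) then (g (p ω))⁻¹ else 0 : ℝ) := by
    intro ω
    split
    · exact inv_nonneg.2 (hg0 _)
    · exact le_refl 0
  rw [integral_eq_lintegral_of_nonneg_ae (Filter.Eventually.of_forall hfnn)
    hfm.aestronglyMeasurable]
  set F : ℕ → Ω → ℝ≥0∞ := fun j ω =>
    ENNReal.ofReal (if p ω i ≤ min (g (p ω)) 1 ∧ 1/((j:ℝ)+1) ≤ min (g (p ω)) 1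
      then (min (g (p ω)) 1)⁻¹ else 0) with hFdef
  have hFmeas : ∀ j, Measurable (F j) := by
    intro j
    apply ENNReal.measurable_ofReal.comp
    refine Measurable.ite ?_ hGm.inv measurable_const
    exact ((measurableSet_le ((measurable_pi_apply i).comp hp) hGm)).inter
      (measurableSet_le measurable_const hGm)
  have hFmono : Monotone F := by
    intro j j' hjj ω
    simp only [hFdef]
    apply ENNReal.ofReal_le_ofReal
    by_cases hc : p ω i ≤ min (g (p ω)) 1 ∧ 1/((j:ℝ)+1) ≤ min (g (p ω)) 1
    · have hc' : p ω i ≤ min (g (p ω)) 1 ∧ 1/((j':ℝ)+1) ≤ min (g (p ω)) 1 := by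
        refine ⟨hc.1, le_trans ?_ hc.2⟩
        apply one_div_le_one_div_of_le (by positivity)
        have : (j:ℝ) ≤ (j':ℝ) := by exact_mod_cast hjj
        linarith
      rw [if_pos hc, if_pos hc']
    · rw [if_neg hc]
      split
      · exact inv_nonneg.2 (le_min (hg0 _) zero_le_one)
      · exact le_refl 0
  have hpt : ∀ ω, ENNReal.ofReal (if p ω i ≤ g (p ω) then (g (p ω))⁻¹ else 0)
      ≤ ⨆ j, F j ω := by
    intro ω
    by_cases hc : p ω i ≤ g (p ω)
    · rw [if_pos hc]
      by_cases hgpos : 0 < g (p ω)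
      · have hGpos : 0 < min (g (p ω)) 1 := lt_min hgpos one_pos
        set j : ℕ := ⌈(min (g (p ω)) 1)⁻¹⌉₊ with hjdef
        have h2 : 1/((j:ℝ)+1) ≤ min (g (p ω)) 1 := by
          have hle : (min (g (p ω)) 1)⁻¹ ≤ (j:ℝ)+1 :=
            le_trans (Nat.le_ceil _) (by linarith)
          calc 1/((j:ℝ)+1) ≤ 1/(min (g (p ω)) 1)⁻¹ :=
                one_div_le_one_div_of_le (by positivity) hle
            _ = min (g (p ω)) 1 := by rw [one_div, inv_inv]
        have h1 : p ω i ≤ min (g (p ω)) 1 := le_min hc (hrange ω i).2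
        refine le_trans ?_ (le_iSup (fun j => F j ω) j)
        have hFj : F j ω = ENNReal.ofReal ((min (g (p ω)) 1)⁻¹) := by
          simp only [hFdef]
          rw [if_pos]
          exact ⟨h1, h2⟩
        rw [hFj]
        exact ENNReal.ofReal_le_ofReal (inv_anti₀ hGpos (min_le_left _ _))
      · have hg0' : g (p ω) = 0 := le_antisymm (not_lt.1 hgpos) (hg0 _)
        simp [hg0']
    · rw [if_neg hc]
      simp
  have hlim : (∫⁻ ω, ENNReal.ofReal (if p ω i ≤ g (p ω) then (g (p ω))⁻¹ else 0) ∂μ) ≤ 1 := by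
    calc (∫⁻ ω, ENNReal.ofReal (if p ω i ≤ g (p ω) then (g (p ω))⁻¹ else 0) ∂μ)
        ≤ ∫⁻ ω, ⨆ j, F j ω ∂μ := lintegral_mono hpt
      _ = ⨆ j, ∫⁻ ω, F j ω ∂μ := lintegral_iSup hFmeas hFmono
      _ ≤ 1 := iSup_le hj
  calc (∫⁻ ω, ENNReal.ofReal (if p ω i ≤ g (p ω) then (g (p ω))⁻¹ else 0) ∂μ).toReal
      ≤ (1:ℝ≥0∞).toReal := ENNReal.toReal_mono ENNReal.one_ne_top hlim
    _ = 1 := by simp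
end
end

section
/- Consider a step-up multiple testing procedure with thresholds Δ(i,r) = α·w_i·β(r)/m for a nondecreasing shape function β: it rejects the set L_Δ(r̂) where L_Δ(r) = {i : p_i ≤ Δ(i,r)} and r̂ = max{r ≥ 0 : |L_Δ(r)|_v ≥ r}, with |A|_v = Σ_{i∈A} v_i. Then: (a) the procedure is self-consistent, i.e., R ⊆ L_Δ(|R|_v), and in fact |L_Δ(r̂)|_v = r̂; (b) |R(p)|_v is nonincreasing in each p-value; (c) the procedure is stable: for each i ∈ R, fixing p^{-i} and varying p_i while i remains rejected does not change R, and R^{-i}(p^{-i}) = {i} ∪ L_Δ^{(i)}(r̂^{(i)}) where L_Δ^{(i)}(r) = {j ≠ i : p_j ≤ Δ(j,r)} and r̂^{(i)} = max{r : |L_Δ^{(i)}(r)|_v ≥ r − v_i}; (d) the procedure is concordant: |R^{-i}(p^{-i})|_v is nonincreasing in each coordinate of p^{-i}. -/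
open scoped Classical

noncomputable section

/-- `|A|_v = Σ_{i ∈ A} v_i`. -/
def vol {m : ℕ} (v : Fin m → ℝ) (A : Finset (Fin m)) : ℝ := ∑ i ∈ A, v i

/-- `L_Δ(r) = {i : p_i ≤ α·w_i·β(r)/m}`. -/
def Lset {m : ℕ} (α : ℝ) (w : Fin m → ℝ) (β : ℝ → ℝ) (p : Fin m → ℝ) (r : ℝ) :
    Finset (Fin m) :=
  Finset.univ.filter fun i => p i ≤ α * w i * β r / m

/-- `r̂ = max{r : |L_Δ(r)|_v ≥ r}`, over the achievable values `{|A|_v : A}` (which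
contain `0`). -/
def rhat {m : ℕ} (α : ℝ) (w v : Fin m → ℝ) (β : ℝ → ℝ) (p : Fin m → ℝ) : ℝ :=
  sSup {r : ℝ | (∃ A : Finset (Fin m), r = vol v A) ∧ r ≤ vol v (Lset α w β p r)}

/-- The step-up procedure with thresholds `Δ(i,r) = α·w_i·β(r)/m`. -/
def SU {m : ℕ} (α : ℝ) (w v : Fin m → ℝ) (β : ℝ → ℝ) (p : Fin m → ℝ) : Finset (Fin m) :=
  Lset α w β p (rhat α w v β p)

/-- `L_Δ^{(i)}(r) = {j ≠ i : p_j ≤ α·w_j·β(r)/m}`. -/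
def Lseti {m : ℕ} (α : ℝ) (w : Fin m → ℝ) (β : ℝ → ℝ) (i : Fin m) (p : Fin m → ℝ)
    (r : ℝ) : Finset (Fin m) :=
  Finset.univ.filter fun j => j ≠ i ∧ p j ≤ α * w j * β r / m

/-- `r̂^{(i)} = max{r : |L_Δ^{(i)}(r)|_v ≥ r − v_i}`. -/
def rhati {m : ℕ} (α : ℝ) (w v : Fin m → ℝ) (β : ℝ → ℝ) (i : Fin m) (p : Fin m → ℝ) : ℝ :=
  sSup {r : ℝ | (∃ A : Finset (Fin m), r = vol v A) ∧
    r - v i ≤ vol v (Lseti α w β i p r)}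

/-- `R^{-i} = {i} ∪ L_Δ^{(i)}(r̂^{(i)})`. -/
def Rmi {m : ℕ} (α : ℝ) (w v : Fin m → ℝ) (β : ℝ → ℝ) (i : Fin m) (p : Fin m → ℝ) :
    Finset (Fin m) :=
  insert i (Lseti α w β i p (rhati α w v β i p))

section Aux

variable {m : ℕ} {α : ℝ} {w v : Fin m → ℝ} {β : ℝ → ℝ}

lemma vol_nonneg (hv : ∀ i, 0 < v i) (A : Finset (Fin m)) : 0 ≤ vol v A :=
  Finset.sum_nonneg fun i _ => (hv i).le

lemma vol_mono (hv : ∀ i, 0 < v i) {A B : Finset (Fin m)} (h : A ⊆ B) :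
    vol v A ≤ vol v B :=
  Finset.sum_le_sum_of_subset_of_nonneg h fun i _ _ => (hv i).le

lemma Lset_mono_r (hα : 0 < α) (hw : ∀ i, 0 < w i) (hβ : Monotone β) (p : Fin m → ℝ)
    {r r' : ℝ} (h : r ≤ r') : Lset α w β p r ⊆ Lset α w β p r' := by
  intro i hi
  simp only [Lset, Finset.mem_filter, Finset.mem_univ, true_and] at *
  refine hi.trans ?_
  have h1 : α * w i * β r ≤ α * w i * β r' :=
    mul_le_mul_of_nonneg_left (hβ h) (mul_nonneg hα.le (hw i).le)
  exact div_le_div_of_nonneg_right h1 (Nat.cast_nonneg m)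

lemma Lseti_mono_r (hα : 0 < α) (hw : ∀ i, 0 < w i) (hβ : Monotone β) (i : Fin m)
    (p : Fin m → ℝ) {r r' : ℝ} (h : r ≤ r') :
    Lseti α w β i p r ⊆ Lseti α w β i p r' := by
  intro j hj
  simp only [Lseti, Finset.mem_filter, Finset.mem_univ, true_and] at *
  refine ⟨hj.1, hj.2.trans ?_⟩
  have h1 : α * w j * β r ≤ α * w j * β r' :=
    mul_le_mul_of_nonneg_left (hβ h) (mul_nonneg hα.le (hw j).le)
  exact div_le_div_of_nonneg_right h1 (Nat.cast_nonneg m)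

lemma Lset_anti_p {p q : Fin m → ℝ} (hpq : p ≤ q) (r : ℝ) :
    Lset α w β q r ⊆ Lset α w β p r := by
  intro i hi
  simp only [Lset, Finset.mem_filter, Finset.mem_univ, true_and] at *
  exact (hpq i).trans hi

lemma Lseti_anti_p {i : Fin m} {p q : Fin m → ℝ} (hpq : ∀ j, j ≠ i → p j ≤ q j) (r : ℝ) :
    Lseti α w β i q r ⊆ Lseti α w β i p r := by
  intro j hj
  simp only [Lseti, Finset.mem_filter, Finset.mem_univ, true_and] at *
  exact ⟨hj.1, (hpq j hj.1).trans hj.2⟩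

/-- The defining set of `rhat`. -/
def Sset (α : ℝ) (w v : Fin m → ℝ) (β : ℝ → ℝ) (p : Fin m → ℝ) : Set ℝ :=
  {r : ℝ | (∃ A : Finset (Fin m), r = vol v A) ∧ r ≤ vol v (Lset α w β p r)}

/-- The defining set of `rhati`. -/
def Tset (α : ℝ) (w v : Fin m → ℝ) (β : ℝ → ℝ) (i : Fin m) (p : Fin m → ℝ) : Set ℝ :=
  {r : ℝ | (∃ A : Finset (Fin m), r = vol v A) ∧ r - v i ≤ vol v (Lseti α w β i p r)}

lemma rhat_eq (p : Fin m → ℝ) : rhat α w v β p = sSup (Sset α w v β p) := rfl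

lemma rhati_eq (i : Fin m) (p : Fin m → ℝ) :
    rhati α w v β i p = sSup (Tset α w v β i p) := rfl

lemma Sset_finite (p : Fin m → ℝ) : (Sset α w v β p).Finite := by
  refine Set.Finite.subset (Set.finite_range (vol v)) ?_
  rintro r ⟨⟨A, hA⟩, -⟩
  exact ⟨A, hA.symm⟩

lemma Tset_finite (i : Fin m) (p : Fin m → ℝ) : (Tset α w v β i p).Finite := by
  refine Set.Finite.subset (Set.finite_range (vol v)) ?_
  rintro r ⟨⟨A, hA⟩, -⟩
  exact ⟨A, hA.symm⟩

lemma Sset_zero_mem (hv : ∀ i, 0 < v i) (p : Fin m → ℝ) : (0 : ℝ) ∈ Sset α w v β p :=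
  ⟨⟨∅, by simp [vol]⟩, vol_nonneg hv _⟩

lemma Tset_zero_mem (hv : ∀ i, 0 < v i) (i : Fin m) (p : Fin m → ℝ) :
    (0 : ℝ) ∈ Tset α w v β i p :=
  ⟨⟨∅, by simp [vol]⟩, by
    have := vol_nonneg hv (Lseti α w β i p 0)
    linarith [(hv i)]⟩

lemma rhat_mem (hv : ∀ i, 0 < v i) (p : Fin m → ℝ) :
    rhat α w v β p ∈ Sset α w v β p := by
  rw [rhat_eq]
  exact Set.Nonempty.csSup_mem ⟨0, Sset_zero_mem hv p⟩ (Sset_finite p)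

lemma rhati_mem (hv : ∀ i, 0 < v i) (i : Fin m) (p : Fin m → ℝ) :
    rhati α w v β i p ∈ Tset α w v β i p := by
  rw [rhati_eq]
  exact Set.Nonempty.csSup_mem ⟨0, Tset_zero_mem hv i p⟩ (Tset_finite i p)

lemma le_rhat (hv : ∀ i, 0 < v i) (p : Fin m → ℝ) {r : ℝ} (hr : r ∈ Sset α w v β p) :
    r ≤ rhat α w v β p :=
  le_csSup (Sset_finite p).bddAbove hr

lemma le_rhati (hv : ∀ i, 0 < v i) (i : Fin m) (p : Fin m → ℝ) {r : ℝ}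
    (hr : r ∈ Tset α w v β i p) : r ≤ rhati α w v β i p :=
  le_csSup (Tset_finite i p).bddAbove hr

/-- Key identity (a): `|L(r̂)|_v = r̂`. -/
lemma vol_Lset_rhat (hα : 0 < α) (hw : ∀ i, 0 < w i) (hv : ∀ i, 0 < v i)
    (hβ : Monotone β) (p : Fin m → ℝ) :
    vol v (Lset α w β p (rhat α w v β p)) = rhat α w v β p := by
  have hmem := rhat_mem (α := α) (w := w) (β := β) hv p
  refine le_antisymm ?_ hmem.2
  set r' := vol v (Lset α w β p (rhat α w v β p)) with hr'
  have hle : rhat α w v β p ≤ r' := hmem.2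
  refine le_rhat hv p ⟨⟨_, hr'⟩, ?_⟩
  exact vol_mono hv (Lset_mono_r hα hw hβ p hle)

lemma i_not_mem_Lseti (i : Fin m) (p : Fin m → ℝ) (r : ℝ) : i ∉ Lseti α w β i p r := by
  simp [Lseti]

lemma vol_insert_Lseti (hv : ∀ i, 0 < v i) (i : Fin m) (p : Fin m → ℝ) (r : ℝ) :
    vol v (insert i (Lseti α w β i p r)) = v i + vol v (Lseti α w β i p r) := by
  simp [vol, Finset.sum_insert (i_not_mem_Lseti i p r)]

/-- Key identity for the reduced procedure: `|L^{(i)}(r̂^{(i)})|_v = r̂^{(i)} - v_i`. -/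
lemma vol_Lseti_rhati (hα : 0 < α) (hw : ∀ i, 0 < w i) (hv : ∀ i, 0 < v i)
    (hβ : Monotone β) (i : Fin m) (p : Fin m → ℝ) :
    vol v (Lseti α w β i p (rhati α w v β i p)) = rhati α w v β i p - v i := by
  have hmem := rhati_mem (α := α) (w := w) (β := β) hv i p
  refine le_antisymm ?_ hmem.2
  set r' := v i + vol v (Lseti α w β i p (rhati α w v β i p)) with hr'
  have hach : ∃ A : Finset (Fin m), r' = vol v A :=
    ⟨insert i (Lseti α w β i p (rhati α w v β i p)),
      (vol_insert_Lseti hv i p _).symm⟩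
  have hle : rhati α w v β i p ≤ r' := by
    have := hmem.2; simp only [hr']; linarith
  have hr'mem : r' ∈ Tset α w v β i p := by
    refine ⟨hach, ?_⟩
    have hsub := Lseti_mono_r hα hw hβ i p hle
    have := vol_mono hv hsub
    simp only [hr']; linarith
  have := le_rhati hv i p hr'mem
  simp only [hr'] at this
  linarith

lemma vol_Rmi (hα : 0 < α) (hw : ∀ i, 0 < w i) (hv : ∀ i, 0 < v i)
    (hβ : Monotone β) (i : Fin m) (p : Fin m → ℝ) :
    vol v (Rmi α w v β i p) = rhati α w v β i p := by
  rw [Rmi, vol_insert_Lseti hv, vol_Lseti_rhati hα hw hv hβ]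
  ring

lemma rhat_anti (hv : ∀ i, 0 < v i) {p q : Fin m → ℝ} (hpq : p ≤ q) :
    rhat α w v β q ≤ rhat α w v β p := by
  rw [rhat_eq, rhat_eq]
  refine csSup_le_csSup (Sset_finite p).bddAbove ⟨0, Sset_zero_mem hv q⟩ ?_
  rintro r ⟨hach, hle⟩
  exact ⟨hach, hle.trans (vol_mono hv (Lset_anti_p hpq r))⟩

lemma rhati_anti (hv : ∀ i, 0 < v i) {i : Fin m} {p q : Fin m → ℝ}
    (hpq : ∀ j, j ≠ i → p j ≤ q j) :
    rhati α w v β i q ≤ rhati α w v β i p := by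
  rw [rhati_eq, rhati_eq]
  refine csSup_le_csSup (Tset_finite i p).bddAbove ⟨0, Tset_zero_mem hv i q⟩ ?_
  rintro r ⟨hach, hle⟩
  exact ⟨hach, hle.trans (vol_mono hv (Lseti_anti_p hpq r))⟩

lemma Lset_eq_insert {i : Fin m} {p : Fin m → ℝ} {r : ℝ}
    (hi : p i ≤ α * w i * β r / m) :
    Lset α w β p r = insert i (Lseti α w β i p r) := by
  ext j
  simp only [Lset, Lseti, Finset.mem_filter, Finset.mem_univ, true_and,
    Finset.mem_insert]
  by_cases hj : j = i
  · subst hj; simp [hi]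
  · simp [hj]

lemma Lset_subset_insert (i : Fin m) (p : Fin m → ℝ) (r : ℝ) :
    Lset α w β p r ⊆ insert i (Lseti α w β i p r) := by
  intro j hj
  simp only [Lset, Lseti, Finset.mem_filter, Finset.mem_univ, true_and,
    Finset.mem_insert] at *
  by_cases hji : j = i
  · exact Or.inl hji
  · exact Or.inr ⟨hji, hj⟩

/-- If `i` is rejected then `r̂ = r̂^{(i)}`. -/
lemma rhat_eq_rhati (hα : 0 < α) (hw : ∀ i, 0 < w i) (hv : ∀ i, 0 < v i)
    (hβ : Monotone β) {i : Fin m} {p : Fin m → ℝ}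
    (hi : p i ≤ α * w i * β (rhat α w v β p) / m) :
    rhat α w v β p = rhati α w v β i p := by
  have h1 : rhat α w v β p ≤ rhati α w v β i p := by
    have hmem := rhat_mem (α := α) (w := w) (β := β) hv p
    refine le_rhati hv i p ⟨hmem.1, ?_⟩
    have hsub := Lset_subset_insert (α := α) (w := w) (β := β) i p (rhat α w v β p)
    have := (vol_mono hv hsub).trans_eq (vol_insert_Lseti hv i p _)
    linarith [hmem.2]
  -- converse
  have hi' : p i ≤ α * w i * β (rhati α w v β i p) / m := by
    refine hi.trans ?_
    have h2 : α * w i * β (rhat α w v β p) ≤ α * w i * β (rhati α w v β i p) :=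
      mul_le_mul_of_nonneg_left (hβ h1) (mul_nonneg hα.le (hw i).le)
    exact div_le_div_of_nonneg_right h2 (Nat.cast_nonneg m)
  have heq := Lset_eq_insert (p := p) hi'
  have hmem' := rhati_mem (α := α) (w := w) (β := β) hv i p
  have h2 : rhati α w v β i p ≤ rhat α w v β p := by
    refine le_rhat hv p ⟨hmem'.1, ?_⟩
    rw [heq, vol_insert_Lseti hv]
    linarith [hmem'.2]
  linarith

lemma Lseti_congr {i : Fin m} {p q : Fin m → ℝ} (hpq : ∀ j, j ≠ i → p j = q j) (r : ℝ) :
    Lseti α w β i p r = Lseti α w β i q r := by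
  ext j
  simp only [Lseti, Finset.mem_filter, Finset.mem_univ, true_and]
  constructor
  · rintro ⟨h1, h2⟩; exact ⟨h1, (hpq j h1) ▸ h2⟩
  · rintro ⟨h1, h2⟩; exact ⟨h1, (hpq j h1) ▸ h2⟩

end Aux

/-- The step-up procedure with factorized thresholds is (a) self-consistent with
`|R|_v = r̂`, (b) nonincreasing, (c) stable with `R^{-i} = {i} ∪ L^{(i)}(r̂^{(i)})`
depending only on `p^{-i}`, and (d) concordant. -/
theorem stmt15 {m : ℕ} (hm : 0 < m) (α : ℝ) (hα : 0 < α)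
    (w v : Fin m → ℝ) (hw : ∀ i, 0 < w i) (hv : ∀ i, 0 < v i)
    (β : ℝ → ℝ) (hβ : Monotone β) :
    -- (a) self-consistency
    (∀ p : Fin m → ℝ, SU α w v β p ⊆ Lset α w β p (vol v (SU α w v β p)) ∧
        vol v (SU α w v β p) = rhat α w v β p) ∧
    -- (b) |R(p)|_v is nonincreasing in each p-value
    (∀ p q : Fin m → ℝ, p ≤ q → vol v (SU α w v β q) ≤ vol v (SU α w v β p)) ∧
    -- (c) stability
    (∀ p : Fin m → ℝ, ∀ i ∈ SU α w v β p, SU α w v β p = Rmi α w v β i p) ∧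
    (∀ i : Fin m, ∀ p q : Fin m → ℝ, (∀ j, j ≠ i → p j = q j) →
        Rmi α w v β i p = Rmi α w v β i q) ∧
    -- (d) concordance
    (∀ i : Fin m, ∀ p q : Fin m → ℝ, (∀ j, j ≠ i → p j ≤ q j) →
        vol v (Rmi α w v β i q) ≤ vol v (Rmi α w v β i p)) := by
  have hvolSU : ∀ p : Fin m → ℝ, vol v (SU α w v β p) = rhat α w v β p :=
    fun p => vol_Lset_rhat hα hw hv hβ p
  refine ⟨?_, ?_, ?_, ?_, ?_⟩
  · intro p
    refine ⟨?_, hvolSU p⟩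
    rw [hvolSU p]; exact subset_of_eq rfl
  · intro p q hpq
    rw [hvolSU p, hvolSU q]
    exact rhat_anti hv hpq
  · intro p i hi
    have hi' : p i ≤ α * w i * β (rhat α w v β p) / m := by
      simpa [SU, Lset] using hi
    have heq := rhat_eq_rhati hα hw hv hβ hi'
    have hi'' : p i ≤ α * w i * β (rhati α w v β i p) / m := heq ▸ hi'
    rw [SU, heq, Rmi, Lset_eq_insert hi'']
  · intro i p q hpq
    have hL : ∀ r, Lseti α w β i p r = Lseti α w β i q r := Lseti_congr hpq
    have hr : rhati α w v β i p = rhati α w v β i q := by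
      rw [rhati_eq, rhati_eq]
      congr 1
      ext r
      rw [Tset, Tset]
      simp only [Set.mem_setOf_eq, hL r]
    rw [Rmi, Rmi, hr, hL]
  · intro i p q hpq
    rw [vol_Rmi hα hw hv hβ, vol_Rmi hα hw hv hβ]
    exact rhati_anti hv hpq
end
end

section
/- In the group setting, let p ∈ [0,1]^M be PRDS on the subset of true nulls, with true-null p-values stochastically lower bounded by uniform. Let g be a group with index set A_g, and A ⊆ A_g a subset of size s = n_g − u_g + 1 consisting only of true nulls. Let P[A] be the minimum adjusted p-value (equivalently, the Simes p-value) of the BH procedure applied at unit weights to the p-values in A: P[A] = min_{k=1..s} s·p_{A,(k)}/k. Then for every nonincreasing function f: [0,1]^M → [0,∞) and every c > 0, E[ 1(P[A] ≤ c·f(p)) / f(p) ] ≤ c (with 0/0 := 0); i.e., (P[A], f(p)) satisfies the dependency control condition with the identity shape function. -/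
open MeasureTheory ProbabilityTheory Filter
open scoped Classical ENNReal

noncomputable section

/-- The `u`-th smallest value of `q` among the indices in `A`. -/
noncomputable def orderStatIn {M : ℕ} (A : Finset (Fin M)) (q : Fin M → ℝ) (u : ℕ) : ℝ :=
  sInf {t : ℝ | u ≤ (A.filter fun i => q i ≤ t).card}

/-- The Simes p-value of the p-values in `A` (of size `s`):
`min_{k=1..s} s·p_{A,(k)}/k`. -/
noncomputable def simesP {M : ℕ} (A : Finset (Fin M)) (q : Fin M → ℝ) (s : ℕ) : ℝ :=
  ⨅ k : Fin s, (s : ℝ) * orderStatIn A q (k.1 + 1) / (k.1 + 1)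

lemma orderStat_le_iff {M : ℕ} (A : Finset (Fin M)) (q : Fin M → ℝ) (u : ℕ)
    (hu : 1 ≤ u) (huA : u ≤ A.card) (x : ℝ) :
    orderStatIn A q u ≤ x ↔ u ≤ (A.filter fun i => q i ≤ x).card := by
  have hA : A.Nonempty := Finset.card_pos.mp (lt_of_lt_of_le hu huA)
  have hItop : ((A.image q).max' (hA.image q)) ∈ {t : ℝ | u ≤ (A.filter fun i => q i ≤ t).card} := by
    have : A.filter (fun i => q i ≤ (A.image q).max' (hA.image q)) = A := by
      apply Finset.filter_true_of_mem
      intro i hi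
      exact Finset.le_max' _ _ (Finset.mem_image_of_mem q hi)
    simp [this, huA]
  have hne : {t : ℝ | u ≤ (A.filter fun i => q i ≤ t).card}.Nonempty := ⟨_, hItop⟩
  have hbdd : BddBelow {t : ℝ | u ≤ (A.filter fun i => q i ≤ t).card} := by
    refine ⟨(A.image q).min' (hA.image q), ?_⟩
    intro t ht
    have hcard : 1 ≤ (A.filter fun i => q i ≤ t).card := le_trans hu ht
    obtain ⟨i, hi⟩ := Finset.card_pos.mp hcard
    have hiA := (Finset.mem_filter.mp hi).1
    have hit := (Finset.mem_filter.mp hi).2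
    exact le_trans (Finset.min'_le _ _ (Finset.mem_image_of_mem q hiA)) hit
  constructor
  · intro h
    by_contra hcon
    push_neg at hcon
    -- W : elements with q i > x
    have hWne : (A.filter fun i => x < q i).Nonempty := by
      by_contra hW
      rw [Finset.not_nonempty_iff_eq_empty] at hW
      have : A.filter (fun i => q i ≤ x) = A := by
        apply Finset.filter_true_of_mem
        intro i hi
        by_contra hqi
        push_neg at hqi
        have : i ∈ A.filter fun i => x < q i := Finset.mem_filter.mpr ⟨hi, hqi⟩
        simp [hW] at this
      rw [this] at hcon
      exact absurd huA (not_le.mpr hcon)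
    set W := A.filter fun i => x < q i with hWdef
    set m := (W.image q).min' (hWne.image q) with hm
    have hmx : x < m := by
      obtain ⟨i, hiW, hqi⟩ := Finset.mem_image.mp ((W.image q).min'_mem (hWne.image q))
      have := (Finset.mem_filter.mp hiW).2
      rw [hqi] at this
      exact this
    have hlb : ∀ t ∈ {t : ℝ | u ≤ (A.filter fun i => q i ≤ t).card}, m ≤ t := by
      intro t ht
      simp only [Set.mem_setOf_eq] at ht
      by_contra htm
      push_neg at htm
      have hsub : A.filter (fun i => q i ≤ t) ⊆ A.filter (fun i => q i ≤ x) := by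
        intro i hi
        obtain ⟨hiA, hqt⟩ := Finset.mem_filter.mp hi
        refine Finset.mem_filter.mpr ⟨hiA, ?_⟩
        by_contra hqx
        push_neg at hqx
        have hiW : i ∈ W := Finset.mem_filter.mpr ⟨hiA, hqx⟩
        have : m ≤ q i := Finset.min'_le _ _ (Finset.mem_image_of_mem q hiW)
        linarith
      have := le_trans ht (Finset.card_le_card hsub)
      exact absurd this (not_le.mpr (lt_of_lt_of_le hcon (le_refl _)))
    have : m ≤ orderStatIn A q u := le_csInf hne hlb
    linarith [le_trans this h]
  · intro h
    exact csInf_le hbdd h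

lemma simes_le_iff {M : ℕ} (A : Finset (Fin M)) (q : Fin M → ℝ) (s : ℕ)
    (hs : 1 ≤ s) (hcard : A.card = s) (t : ℝ) :
    simesP A q s ≤ t ↔ ∃ k, 1 ≤ k ∧ k ≤ s ∧
      (k : ℝ) ≤ ((A.filter fun i => q i ≤ (k : ℝ) * t / s).card : ℝ) := by
  have hspos : (0:ℝ) < s := by exact_mod_cast hs
  have key : ∀ k : ℕ, 1 ≤ k → k ≤ s →
      ((s : ℝ) * orderStatIn A q k / k ≤ t ↔
        (k : ℝ) ≤ ((A.filter fun i => q i ≤ (k : ℝ) * t / s).card : ℝ)) := by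
    intro k hk1 hks
    have hkpos : (0:ℝ) < k := by exact_mod_cast hk1
    have : (s : ℝ) * orderStatIn A q k / k ≤ t ↔ orderStatIn A q k ≤ (k:ℝ) * t / s := by
      rw [div_le_iff₀ hkpos, le_div_iff₀ hspos]
      constructor <;> intro h <;> nlinarith
    rw [this, orderStat_le_iff A q k hk1 (hcard ▸ hks)]
    exact_mod_cast Iff.rfl
  constructor
  · intro h
    haveI : Nonempty (Fin s) := ⟨⟨0, hs⟩⟩
    obtain ⟨k₀, hk₀⟩ := Finite.exists_min (fun k : Fin s => (s:ℝ) * orderStatIn A q (k.1+1) / (k.1+1))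
    have hinf : simesP A q s = (s:ℝ) * orderStatIn A q (k₀.1+1) / (k₀.1+1) := by
      apply le_antisymm
      · exact ciInf_le (Set.Finite.bddBelow (Set.finite_range _)) k₀
      · exact le_ciInf hk₀
    refine ⟨k₀.1 + 1, Nat.le_add_left 1 k₀.1, k₀.2, ?_⟩
    rw [← key (k₀.1+1) (Nat.le_add_left 1 k₀.1) k₀.2]
    have hcast : ((k₀.1+1 : ℕ) : ℝ) = (k₀.1 : ℝ) + 1 := by push_cast; ring
    rw [hcast, ← hinf]; exact h
  · rintro ⟨k, hk1, hks, hk⟩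
    have : (s : ℝ) * orderStatIn A q k / k ≤ t := (key k hk1 hks).mpr hk
    calc simesP A q s ≤ (s : ℝ) * orderStatIn A q ((⟨k-1, by omega⟩ : Fin s).1 + 1) / ((⟨k-1, by omega⟩ : Fin s).1 + 1) :=
          ciInf_le (Set.Finite.bddBelow (Set.finite_range _)) _
      _ ≤ t := by
          have hkk : ((⟨k-1, by omega⟩ : Fin s).1 : ℝ) + 1 = (k : ℝ) := by
            have : (⟨k-1, by omega⟩ : Fin s).1 = k - 1 := rfl
            rw [this]; push_cast [Nat.cast_sub hk1]; ring
          rw [hkk]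
          have hkk2 : orderStatIn A q ((⟨k-1, by omega⟩ : Fin s).1 + 1) = orderStatIn A q k := by
            congr 1; simp; omega
          rw [hkk2]; exact this

/-- Ratio lemma: for an upper set `D` and `v ≤ v'`,
`μ(D ∩ {U ≤ v}) * μ{U ≤ v'} ≤ μ(D ∩ {U ≤ v'}) * μ{U ≤ v}`. -/
lemma ratio_lemma {Ω : Type*} [MeasurableSpace Ω] (μ : Measure Ω) [IsProbabilityMeasure μ]
    {M : ℕ} (p : Ω → Fin M → ℝ) (hp : Measurable p)
    (hrange : ∀ ω i, p ω i ∈ Set.Icc (0:ℝ) 1)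
    (T : Set (Fin M)) (hPRDS : PRDSOn μ p T) (j : Fin M) (hj : j ∈ T)
    (D : Set (Fin M → ℝ)) (hD : MeasurableSet D) (hDu : IsUpperSet D)
    (v v' : ℝ) (hv : v ≤ v') :
    (μ ({ω | p ω ∈ D} ∩ {ω | p ω j ≤ v})).toReal * (μ {ω | p ω j ≤ v'}).toReal ≤
    (μ ({ω | p ω ∈ D} ∩ {ω | p ω j ≤ v'})).toReal * (μ {ω | p ω j ≤ v}).toReal := by
  obtain ⟨κ, hκmono, hκver⟩ := hPRDS D hD hDu j hj
  have hU : Measurable (fun ω => p ω j) := (measurable_pi_apply j).comp hp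
  set lam := μ.map (fun ω => p ω j) with hlam
  haveI : IsProbabilityMeasure lam := Measure.isProbabilityMeasure_map hU.aemeasurable
  -- lam values
  have hlam_apply : ∀ s : Set ℝ, MeasurableSet s → lam s = μ ((fun ω => p ω j) ⁻¹' s) := by
    intro s hs; exact Measure.map_apply hU hs
  have hκmeas : Measurable κ := hκmono.measurable
  -- a.e. nonneg coordinate
  have hae : ∀ᵐ x ∂lam, (0:ℝ) ≤ x := by
    rw [ae_iff]
    have : {x : ℝ | ¬ (0:ℝ) ≤ x} = Set.Iio 0 := by ext x; simp [Set.mem_Iio, not_le]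
    rw [this, hlam_apply _ measurableSet_Iio]
    have : (fun ω => p ω j) ⁻¹' Set.Iio 0 = ∅ := by
      ext ω; simp [Set.mem_Iio, not_lt, (hrange ω j).1]
    simp [this]
  -- integrability of κ on any Iic
  have hint : ∀ w : ℝ, IntegrableOn κ (Set.Iic w) lam := by
    intro w
    refine Integrable.mono' (integrable_const (max |κ 0| |κ w|)) hκmeas.aestronglyMeasurable ?_
    rw [ae_restrict_iff' measurableSet_Iic]
    filter_upwards [hae] with x hx hxw
    have h1 : κ 0 ≤ κ x := hκmono hx
    have h2 : κ x ≤ κ w := hκmono hxw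
    rw [Real.norm_eq_abs, abs_le]
    constructor
    · calc -(max |κ 0| |κ w|) ≤ -|κ 0| := by simp [neg_le_neg_iff]
        _ ≤ κ 0 := neg_abs_le _
        _ ≤ κ x := h1
    · calc κ x ≤ κ w := h2
        _ ≤ |κ w| := le_abs_self _
        _ ≤ max |κ 0| |κ w| := le_max_right _ _
  have hintIoc : IntegrableOn κ (Set.Ioc v v') lam :=
    (hint v').mono_set Set.Ioc_subset_Iic_self
  -- version identities
  have hA : ∫ x in Set.Iic v, κ x ∂lam = (μ ({ω | p ω ∈ D} ∩ {ω | p ω j ≤ v})).toReal := by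
    have := hκver (Set.Iic v) measurableSet_Iic
    simpa [Set.preimage, Set.mem_Iic] using this
  have hA' : ∫ x in Set.Iic v', κ x ∂lam = (μ ({ω | p ω ∈ D} ∩ {ω | p ω j ≤ v'})).toReal := by
    have := hκver (Set.Iic v') measurableSet_Iic
    simpa [Set.preimage, Set.mem_Iic] using this
  -- split
  have hsplit : ∫ x in Set.Iic v', κ x ∂lam
      = (∫ x in Set.Iic v, κ x ∂lam) + ∫ x in Set.Ioc v v', κ x ∂lam := by
    rw [← setIntegral_union (Set.Iic_disjoint_Ioc le_rfl) measurableSet_Ioc (hint v) hintIoc,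
      Set.Iic_union_Ioc_eq_Iic hv]
  set a := ∫ x in Set.Iic v, κ x ∂lam
  set b := ∫ x in Set.Ioc v v', κ x ∂lam
  set d := (lam (Set.Iic v)).toReal with hd
  set i := (lam (Set.Ioc v v')).toReal with hi
  have hd_eq : d = (μ {ω | p ω j ≤ v}).toReal := by
    rw [hd, hlam_apply _ measurableSet_Iic]; rfl
  have hd'_eq : (μ {ω | p ω j ≤ v'}).toReal = d + i := by
    have : lam (Set.Iic v') = lam (Set.Iic v) + lam (Set.Ioc v v') := by
      rw [← measure_union (Set.Iic_disjoint_Ioc le_rfl) measurableSet_Ioc,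
        Set.Iic_union_Ioc_eq_Iic hv]
    have h2 : (μ {ω | p ω j ≤ v'}) = lam (Set.Iic v') := by
      rw [hlam_apply _ measurableSet_Iic]; rfl
    rw [h2, this, ENNReal.toReal_add (measure_ne_top _ _) (measure_ne_top _ _)]
  -- bounds
  have hab : a ≤ κ v * d := by
    have : ∫ x in Set.Iic v, κ x ∂lam ≤ ∫ _x in Set.Iic v, κ v ∂lam := by
      apply setIntegral_mono_on (hint v) (integrable_const _) measurableSet_Iic
      intro x hx; exact hκmono hx
    rw [setIntegral_const, smul_eq_mul, mul_comm] at this; exact this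
  have hbb : κ v * i ≤ b := by
    have : ∫ _x in Set.Ioc v v', κ v ∂lam ≤ ∫ x in Set.Ioc v v', κ x ∂lam := by
      apply setIntegral_mono_on (integrable_const _) hintIoc measurableSet_Ioc
      intro x hx; exact hκmono (le_of_lt hx.1)
    rw [setIntegral_const, smul_eq_mul, mul_comm] at this; exact this
  have hd0 : 0 ≤ d := ENNReal.toReal_nonneg
  have hi0 : 0 ≤ i := ENNReal.toReal_nonneg
  -- conclude
  rw [← hA, ← hA', hsplit, hd'_eq, hd_eq.symm]
  have h1 : a * i ≤ κ v * d * i := mul_le_mul_of_nonneg_right hab hi0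
  have h2 : κ v * i * d ≤ b * d := mul_le_mul_of_nonneg_right hbb hd0
  nlinarith

/-- Core: superuniformity lemma for a finitely-valued antitone step function `K/N`. -/
lemma core_lemma {Ω : Type*} [MeasurableSpace Ω] (μ : Measure Ω) [IsProbabilityMeasure μ]
    {M : ℕ} (p : Ω → Fin M → ℝ) (hp : Measurable p)
    (hrange : ∀ ω i, p ω i ∈ Set.Icc (0:ℝ) 1)
    (T : Set (Fin M)) (hPRDS : PRDSOn μ p T)
    (hsuper : ∀ i ∈ T, ∀ t ∈ Set.Icc (0:ℝ) 1, μ {ω | p ω i ≤ t} ≤ ENNReal.ofReal t)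
    (j : Fin M) (hj : j ∈ T)
    (K : (Fin M → ℝ) → ℕ) (hKanti : ∀ q q', q ≤ q' → K q' ≤ K q)
    (hKmeas : Measurable K) (N : ℕ) (hN : 1 ≤ N) (hKN : ∀ q, K q ≤ N) :
    ∫⁻ ω, ENNReal.ofReal
      (if p ω j ≤ (K (p ω) : ℝ)/N then ((K (p ω) : ℝ)/N)⁻¹ else 0) ∂μ ≤ 1 := by
  have hNpos : (0:ℝ) < N := by exact_mod_cast hN
  set U : Ω → ℝ := fun ω => p ω j with hU
  have hUmeas : Measurable U := (measurable_pi_apply j).comp hp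
  -- the events
  set S : ℕ → Set Ω := fun k => {ω | K (p ω) = k} ∩ {ω | U ω ≤ (k:ℝ)/N} with hS
  have hSmeas : ∀ k, MeasurableSet (S k) := by
    intro k
    exact ((hKmeas.comp hp) (measurableSet_singleton k)).inter (hUmeas measurableSet_Iic)
  -- pointwise decomposition
  have hdecomp : (fun ω => ENNReal.ofReal
      (if U ω ≤ (K (p ω) : ℝ)/N then ((K (p ω) : ℝ)/N)⁻¹ else 0))
      = fun ω => ∑ k ∈ Finset.range (N+1),
          Set.indicator (S k) (fun _ => ENNReal.ofReal (((k:ℝ)/N)⁻¹)) ω := by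
    funext ω
    rw [Finset.sum_eq_single (K (p ω))]
    · by_cases h : U ω ≤ (K (p ω) : ℝ)/N
      · rw [if_pos h]
        exact (Set.indicator_of_mem (show ω ∈ S (K (p ω)) from ⟨rfl, h⟩)
          (fun _ => ENNReal.ofReal ((((K (p ω)):ℝ)/N)⁻¹))).symm
      · rw [if_neg h]
        rw [Set.indicator_of_notMem (show ω ∉ S (K (p ω)) from fun hmem => h hmem.2)
          (fun _ => ENNReal.ofReal ((((K (p ω)):ℝ)/N)⁻¹))]
        simp
    · intro k _ hk
      exact Set.indicator_of_notMem (show ω ∉ S k from fun hmem => hk hmem.1.symm)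
        (fun _ => ENNReal.ofReal (((k:ℝ)/N)⁻¹))
    · intro hmem
      exact absurd (Finset.mem_range.mpr (Nat.lt_succ_of_le (hKN (p ω)))) hmem
  rw [hdecomp]
  rw [lintegral_finset_sum _ (fun k _ => Measurable.indicator measurable_const (hSmeas k))]
  have hterm : ∀ k, ∫⁻ ω, Set.indicator (S k) (fun _ => ENNReal.ofReal (((k:ℝ)/N)⁻¹)) ω ∂μ
      = ENNReal.ofReal (((k:ℝ)/N)⁻¹ * (μ (S k)).toReal) := by
    intro k
    rw [lintegral_indicator (hSmeas k), setLIntegral_const,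
      ← ENNReal.ofReal_toReal (measure_ne_top μ (S k)),
      ← ENNReal.ofReal_mul (by positivity), ENNReal.toReal_ofReal ENNReal.toReal_nonneg]
  simp_rw [hterm]
  rw [← ENNReal.ofReal_sum_of_nonneg (fun k _ => by positivity)]
  -- Now a real-number bound
  set C : ℕ → Set (Fin M → ℝ) := fun k => {q | K q ≤ k} with hC
  have hCmeas : ∀ k, MeasurableSet (C k) := fun k => hKmeas measurableSet_Iic
  have hCupper : ∀ k, IsUpperSet (C k) := by
    intro k q q' hqq' hq
    exact le_trans (hKanti q q' hqq') hq
  set a : ℕ → ℝ := fun k => (μ ({ω | p ω ∈ C k} ∩ {ω | U ω ≤ (k:ℝ)/N})).toReal with ha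
  set d : ℕ → ℝ := fun k => (μ {ω | U ω ≤ (k:ℝ)/N}).toReal with hd
  set m : ℕ → ℝ := fun k => a k / d k with hm
  have hd_le : ∀ k, k ≤ N → d k ≤ (k:ℝ)/N := by
    intro k hk
    have h1 : ((k:ℝ)/N) ∈ Set.Icc (0:ℝ) 1 := by
      constructor
      · positivity
      · rw [div_le_one hNpos]; exact_mod_cast hk
    have := hsuper j hj _ h1
    calc d k ≤ (ENNReal.ofReal ((k:ℝ)/N)).toReal := ENNReal.toReal_mono (by simp) this
      _ = (k:ℝ)/N := ENNReal.toReal_ofReal (by positivity)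
  have ha_le_d : ∀ k, a k ≤ d k := by
    intro k
    apply ENNReal.toReal_mono (measure_ne_top _ _)
    exact measure_mono Set.inter_subset_right
  have hd_mono : ∀ k k', k ≤ k' → d k ≤ d k' := by
    intro k k' hkk'
    apply ENNReal.toReal_mono (measure_ne_top _ _)
    apply measure_mono
    intro ω hω
    simp only [Set.mem_setOf_eq] at hω ⊢
    refine le_trans hω ?_
    exact div_le_div_of_nonneg_right (by exact_mod_cast hkk') hNpos.le
  -- reduce to a real-valued estimate
  rw [show (1 : ENNReal) = ENNReal.ofReal (1:ℝ) by simp]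
  apply ENNReal.ofReal_le_ofReal
  -- values of the summands
  set t : ℕ → ℝ := fun k => ((k:ℝ)/N)⁻¹ * (μ (S k)).toReal with ht
  have ht0 : t 0 = 0 := by simp [ht]
  have hterm_le : ∀ i ∈ Finset.range N, t (i+1) ≤ m (i+1) - m i := by
    intro i hi
    have hiN : i + 1 ≤ N := Finset.mem_range.mp hi
    set k := i + 1 with hk
    have hkN : (k:ℝ)/N ∈ Set.Icc (0:ℝ) 1 := by
      constructor
      · positivity
      · rw [div_le_one hNpos]; exact_mod_cast hiN
    have hkpos : (0:ℝ) < (k:ℝ)/N := by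
      apply div_pos ?_ hNpos
      exact_mod_cast Nat.succ_pos i
    -- measure of S k as difference
    set e : ℝ := (μ ({ω | p ω ∈ C i} ∩ {ω | U ω ≤ (k:ℝ)/N})).toReal with he
    have hSdiff : S k = ({ω | p ω ∈ C k} ∩ {ω | U ω ≤ (k:ℝ)/N}) \
        ({ω | p ω ∈ C i} ∩ {ω | U ω ≤ (k:ℝ)/N}) := by
      ext ω
      simp only [hS, hC, Set.mem_inter_iff, Set.mem_diff, Set.mem_setOf_eq]
      constructor
      · rintro ⟨hKeq, hU⟩
        refine ⟨⟨by omega, hU⟩, ?_⟩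
        rintro ⟨hKi, -⟩
        omega
      · rintro ⟨⟨hKk, hU⟩, hnot⟩
        refine ⟨?_, hU⟩
        by_contra hne
        have hKi : K (p ω) ≤ i := by omega
        exact hnot ⟨hKi, hU⟩
    have hsubset : ({ω | p ω ∈ C i} ∩ {ω | U ω ≤ (k:ℝ)/N}) ⊆
        ({ω | p ω ∈ C k} ∩ {ω | U ω ≤ (k:ℝ)/N}) := by
      apply Set.inter_subset_inter_left
      intro q hq
      simp only [hC, Set.mem_setOf_eq] at hq ⊢
      omega
    have hmeas_sub : MeasurableSet ({ω | p ω ∈ C i} ∩ {ω | U ω ≤ (k:ℝ)/N}) :=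
      (hp (hCmeas i)).inter (hUmeas measurableSet_Iic)
    have hμS : (μ (S k)).toReal = a k - e := by
      rw [hSdiff, measure_diff hsubset hmeas_sub.nullMeasurableSet (measure_ne_top _ _)]
      rw [ENNReal.toReal_sub_of_le (measure_mono hsubset) (measure_ne_top _ _)]
    have hea : e ≤ a k := ENNReal.toReal_mono (measure_ne_top _ _) (measure_mono hsubset)
    have hak_le : a k ≤ d k := ha_le_d k
    have he_le : e ≤ d k := by
      apply ENNReal.toReal_mono (measure_ne_top _ _)
      exact measure_mono Set.inter_subset_right
    show ((k:ℝ)/N)⁻¹ * (μ (S k)).toReal ≤ m k - m i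
    rw [hμS]
    by_cases hdk : d k = 0
    · have hak : a k = 0 := le_antisymm (hdk ▸ hak_le) ENNReal.toReal_nonneg
      have hdi : d i = 0 := le_antisymm (hdk ▸ hd_mono i k (by omega)) ENNReal.toReal_nonneg
      have hai : a i = 0 := le_antisymm (hdi ▸ ha_le_d i) ENNReal.toReal_nonneg
      have he0 : e = 0 := le_antisymm (hdk ▸ he_le) ENNReal.toReal_nonneg
      simp [hm, hak, hai, hdi, hdk, he0]
    · have hdkpos : 0 < d k := lt_of_le_of_ne ENNReal.toReal_nonneg (Ne.symm hdk)
      have hinv : ((k:ℝ)/N)⁻¹ ≤ (d k)⁻¹ := inv_anti₀ hdkpos (hd_le k hiN)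
      have h1 : ((k:ℝ)/N)⁻¹ * (a k - e) ≤ (a k - e) / d k := by
        have hdq : (a k - e) / d k = (a k - e) * (d k)⁻¹ := div_eq_mul_inv _ _
        rw [hdq]
        nlinarith [sub_nonneg.mpr hea]
      refine le_trans h1 ?_
      rw [sub_div]
      have h2 : m i ≤ e / d k := by
        have hratio := ratio_lemma μ p hp hrange T hPRDS j hj (C i) (hCmeas i)
          (hCupper i) ((i:ℝ)/N) ((k:ℝ)/N)
          (div_le_div_of_nonneg_right (by exact_mod_cast Nat.le_succ i) hNpos.le)
        by_cases hdi : d i = 0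
        · have hai : a i = 0 := le_antisymm (hdi ▸ ha_le_d i) ENNReal.toReal_nonneg
          rw [hm]
          simp only [hai, zero_div]
          positivity
        · have hdipos : 0 < d i := lt_of_le_of_ne ENNReal.toReal_nonneg (Ne.symm hdi)
          rw [hm, div_le_div_iff₀ hdipos hdkpos]
          exact hratio
      rw [hm]
      linarith
  calc ∑ k ∈ Finset.range (N+1), t k
      = t 0 + ∑ i ∈ Finset.range N, t (i+1) := by
        rw [Finset.sum_range_succ']
        ring
    _ = ∑ i ∈ Finset.range N, t (i+1) := by rw [ht0, zero_add]
    _ ≤ ∑ i ∈ Finset.range N, (m (i+1) - m i) := Finset.sum_le_sum hterm_le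
    _ = m N - m 0 := Finset.sum_range_sub m N
    _ ≤ m N := by
        have : 0 ≤ m 0 := by
          rw [hm]
          positivity
        linarith
    _ ≤ 1 := by
        rw [hm]
        by_cases hdN : d N = 0
        · have : a N ≤ d N := ha_le_d N
          have haN : a N = 0 := le_antisymm (hdN ▸ this) ENNReal.toReal_nonneg
          simp [haN]
        · rw [div_le_one (lt_of_le_of_ne ENNReal.toReal_nonneg (Ne.symm hdN))]
          exact ha_le_d N

/-- Superuniformity lemma under PRDS: for any antitone nonnegative `g`. -/
lemma su_lemma {Ω : Type*} [MeasurableSpace Ω] (μ : Measure Ω) [IsProbabilityMeasure μ]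
    {M : ℕ} (p : Ω → Fin M → ℝ) (hp : Measurable p)
    (hrange : ∀ ω i, p ω i ∈ Set.Icc (0:ℝ) 1)
    (T : Set (Fin M)) (hPRDS : PRDSOn μ p T)
    (hsuper : ∀ i ∈ T, ∀ t ∈ Set.Icc (0:ℝ) 1, μ {ω | p ω i ≤ t} ≤ ENNReal.ofReal t)
    (j : Fin M) (hj : j ∈ T)
    (g : (Fin M → ℝ) → ℝ) (hganti : Antitone g) (hg0 : ∀ q, 0 ≤ g q)
    (hgm : Measurable g) :
    ∫⁻ ω, ENNReal.ofReal
      (if p ω j ≤ g (p ω) then (g (p ω))⁻¹ else 0) ∂μ ≤ 1 := by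
  set g' : (Fin M → ℝ) → ℝ := fun q => min (g q) 1 with hg'
  have hg'anti : Antitone g' := fun q q' hqq' => min_le_min (hganti hqq') le_rfl
  have hg'0 : ∀ q, 0 ≤ g' q := fun q => le_min (hg0 q) zero_le_one
  have hg'le1 : ∀ q, g' q ≤ 1 := fun q => min_le_right _ _
  have hg'm : Measurable g' := hgm.min measurable_const
  -- step 1 : reduce to g'
  have hstep1 : ∀ ω, ENNReal.ofReal (if p ω j ≤ g (p ω) then (g (p ω))⁻¹ else 0)
      ≤ ENNReal.ofReal (if p ω j ≤ g' (p ω) then (g' (p ω))⁻¹ else 0) := by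
    intro ω
    by_cases h : p ω j ≤ g (p ω)
    · have h2 : p ω j ≤ g' (p ω) := le_min h (hrange ω j).2
      rw [if_pos h, if_pos h2]
      apply ENNReal.ofReal_le_ofReal
      rcases eq_or_lt_of_le (hg'0 (p ω)) with heq | hpos
      · have h0 : min (g (p ω)) 1 = 0 := heq.symm
        have hgz : g (p ω) = 0 := by
          rcases min_eq_iff.mp h0 with h1 | h1
          · exact h1.1
          · exact absurd h1.1 one_ne_zero
        rw [hgz, ← heq]
      · exact inv_anti₀ hpos (min_le_left _ _)
    · rw [if_neg h]
      simp
  refine le_trans (lintegral_mono hstep1) ?_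
  -- step 2 : dyadic approximation
  set Kn : ℕ → (Fin M → ℝ) → ℕ := fun n q => ⌈(2^n : ℝ) * g' q⌉₊ with hKn
  have hKanti : ∀ n q q', q ≤ q' → Kn n q' ≤ Kn n q := by
    intro n q q' hqq'
    exact Nat.ceil_mono (mul_le_mul_of_nonneg_left (hg'anti hqq') (by positivity))
  have hKmeas : ∀ n, Measurable (Kn n) :=
    fun n => (measurable_const.mul hg'm).nat_ceil
  have hKN : ∀ n q, Kn n q ≤ 2^n := by
    intro n q
    apply Nat.ceil_le.mpr
    calc (2^n : ℝ) * g' q ≤ (2^n : ℝ) * 1 := by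
          apply mul_le_mul_of_nonneg_left (hg'le1 q) (by positivity)
      _ = ((2^n : ℕ) : ℝ) := by push_cast; ring
  have hge : ∀ n q, g' q ≤ (Kn n q : ℝ)/(2^n : ℕ) := by
    intro n q
    rw [le_div_iff₀ (by positivity)]
    calc g' q * ((2^n : ℕ) : ℝ) = (2^n : ℝ) * g' q := by push_cast; ring
      _ ≤ (Kn n q : ℝ) := Nat.le_ceil _
  have hle : ∀ n q, (Kn n q : ℝ)/(2^n : ℕ) ≤ g' q + ((2:ℝ)⁻¹)^n := by
    intro n q
    rw [div_le_iff₀ (by positivity)]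
    have h1 : (Kn n q : ℝ) < (2^n : ℝ) * g' q + 1 := Nat.ceil_lt_add_one (mul_nonneg (by positivity) (hg'0 q))
    have h2 : ((2^n : ℕ) : ℝ) = (2:ℝ)^n := by push_cast; ring
    rw [h2]
    have h3 : ((2:ℝ)⁻¹)^n * (2:ℝ)^n = 1 := by
      rw [← mul_pow]; norm_num
    nlinarith [h1]
  -- cores
  have hcore : ∀ n, ∫⁻ ω, ENNReal.ofReal
      (if p ω j ≤ (Kn n (p ω) : ℝ)/((2^n : ℕ)) then ((Kn n (p ω) : ℝ)/((2^n : ℕ)))⁻¹ else 0) ∂μ ≤ 1 :=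
    fun n => core_lemma μ p hp hrange T hPRDS hsuper j hj (Kn n) (hKanti n) (hKmeas n)
      (2^n) Nat.one_le_two_pow (hKN n)
  -- pointwise liminf bound
  have hptwise : ∀ ω, ENNReal.ofReal (if p ω j ≤ g' (p ω) then (g' (p ω))⁻¹ else 0)
      ≤ atTop.liminf (fun n => ENNReal.ofReal
        (if p ω j ≤ (Kn n (p ω) : ℝ)/((2^n : ℕ)) then ((Kn n (p ω) : ℝ)/((2^n : ℕ)))⁻¹ else 0)) := by
    intro ω
    by_cases hU : p ω j ≤ g' (p ω)
    · rcases eq_or_lt_of_le (hg'0 (p ω)) with heq | hpos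
      · -- g' = 0
        rw [if_pos hU, ← heq]
        simp
      · -- g' > 0 : the sequence converges to the value
        have hUn : ∀ n, p ω j ≤ (Kn n (p ω) : ℝ)/((2^n : ℕ)) :=
          fun n => le_trans hU (hge n (p ω))
        have htend : Tendsto (fun n => (Kn n (p ω) : ℝ)/((2^n : ℕ))) atTop (nhds (g' (p ω))) := by
          apply tendsto_of_tendsto_of_tendsto_of_le_of_le
            (tendsto_const_nhds) ?_ (fun n => hge n (p ω)) (fun n => hle n (p ω))
          have h9 : Tendsto (fun n : ℕ => ((2:ℝ)⁻¹)^n) atTop (nhds 0) := by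
            apply tendsto_pow_atTop_nhds_zero_of_lt_one (by norm_num) (by norm_num)
          have h10 : Tendsto (fun n : ℕ => g' (p ω) + ((2:ℝ)⁻¹)^n) atTop
              (nhds (g' (p ω) + 0)) := tendsto_const_nhds.add h9
          simpa using h10
        have htend2 : Tendsto (fun n => ENNReal.ofReal (((Kn n (p ω) : ℝ)/((2^n : ℕ)))⁻¹))
            atTop (nhds (ENNReal.ofReal ((g' (p ω))⁻¹))) := by
          apply ENNReal.continuous_ofReal.continuousAt.tendsto.comp
          exact htend.inv₀ (ne_of_gt hpos)
        have heqn : (fun n => ENNReal.ofReal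
            (if p ω j ≤ (Kn n (p ω) : ℝ)/((2^n : ℕ)) then ((Kn n (p ω) : ℝ)/((2^n : ℕ)))⁻¹ else 0))
            = fun n => ENNReal.ofReal (((Kn n (p ω) : ℝ)/((2^n : ℕ)))⁻¹) := by
          funext n; rw [if_pos (hUn n)]
        rw [heqn, htend2.liminf_eq, if_pos hU]
    · rw [if_neg hU]
      simp
  refine le_trans (lintegral_mono hptwise) ?_
  refine le_trans (lintegral_liminf_le ?_) ?_
  · intro n
    apply Measurable.ennreal_ofReal
    have hmc : Measurable fun ω => (Kn n (p ω) : ℝ)/((2^n : ℕ)) := by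
      apply Measurable.div_const
      exact (measurable_from_top.comp ((hKmeas n).comp hp))
    have hU : Measurable fun ω => p ω j := (measurable_pi_apply j).comp hp
    exact Measurable.ite (measurableSet_le hU hmc) hmc.inv measurable_const
  · calc atTop.liminf (fun n => ∫⁻ ω, ENNReal.ofReal
        (if p ω j ≤ (Kn n (p ω) : ℝ)/((2^n : ℕ)) then ((Kn n (p ω) : ℝ)/((2^n : ℕ)))⁻¹ else 0) ∂μ)
        ≤ atTop.liminf (fun _ => (1 : ENNReal)) :=
          liminf_le_liminf (Eventually.of_forall hcore)
      _ = 1 := liminf_const 1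

/-- Under PRDS on the true nulls, the Simes p-value of an all-null subgroup `A ⊆ A_g`
satisfies the dependency control condition with the identity shape function against any
nonincreasing nonnegative function `f` of all the p-values. -/
theorem stmt16 {Ω : Type*} [MeasurableSpace Ω] (μ : Measure Ω) [IsProbabilityMeasure μ]
    {M : ℕ} (p : Ω → Fin M → ℝ) (hp : Measurable p)
    (hrange : ∀ ω i, p ω i ∈ Set.Icc (0:ℝ) 1)
    (T : Set (Fin M)) (hPRDS : PRDSOn μ p T)
    (hsuper : ∀ i ∈ T, ∀ t ∈ Set.Icc (0:ℝ) 1, μ {ω | p ω i ≤ t} ≤ ENNReal.ofReal t)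
    (Ag A : Finset (Fin M)) (hAAg : A ⊆ Ag) (hAT : ∀ i ∈ A, i ∈ T)
    (s : ℕ) (hs : 1 ≤ s) (hcard : A.card = s)
    (f : (Fin M → ℝ) → ℝ) (hf : Antitone f) (hf0 : ∀ q, 0 ≤ f q)
    (hfm : Measurable f) :
    ∀ c : ℝ, 0 < c →
      ∫ ω, (if simesP A (p ω) s ≤ c * f (p ω) then (f (p ω))⁻¹ else 0) ∂μ ≤ c := by
  intro c hc
  have hspos : (0:ℝ) < s := by exact_mod_cast hs
  -- the BH rejection-count function
  set P : (Fin M → ℝ) → ℕ → Prop := fun q k =>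
    (k:ℝ) ≤ ((A.filter fun i => q i ≤ (k:ℝ) * (c * f q) / s).card : ℝ) with hP
  set R : (Fin M → ℝ) → ℕ := fun q => Nat.findGreatest (P q) s with hR
  -- the (k:ℝ) cast of the filter-card as a measurable sum
  have hcardsum : ∀ (k : ℕ) (q : Fin M → ℝ),
      ((A.filter fun i => q i ≤ (k:ℝ) * (c * f q) / s).card : ℝ)
      = ∑ i ∈ A, (if q i ≤ (k:ℝ) * (c * f q) / s then (1:ℝ) else 0) := by
    intro k q
    rw [Finset.card_filter]
    push_cast
    rfl
  have hPmeas : ∀ k : ℕ, MeasurableSet {q : Fin M → ℝ | P q k} := by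
    intro k
    have hF : Measurable fun q : Fin M → ℝ =>
        ∑ i ∈ A, (if q i ≤ (k:ℝ) * (c * f q) / s then (1:ℝ) else 0) := by
      apply Finset.measurable_sum
      intro i _
      have hthr : Measurable fun q : Fin M → ℝ => (k:ℝ) * (c * f q) / s :=
        ((hfm.const_mul c).const_mul (k:ℝ)).div_const s
      exact Measurable.ite (measurableSet_le (measurable_pi_apply i) hthr)
        measurable_const measurable_const
    have : {q : Fin M → ℝ | P q k} = {q | (k:ℝ) ≤
        ∑ i ∈ A, (if q i ≤ (k:ℝ) * (c * f q) / s then (1:ℝ) else 0)} := by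
      ext q; simp only [hP, Set.mem_setOf_eq, hcardsum k q]
    rw [this]
    exact measurableSet_le measurable_const hF
  have hRmeas : Measurable R := by
    apply measurable_to_countable'
    intro n
    have hset : R ⁻¹' {n} = {q | n ≤ s} ∩ ({q | n ≠ 0 → P q n} ∩
        ⋂ m : ℕ, {q | n < m → m ≤ s → ¬ P q m}) := by
      ext q
      simp only [Set.mem_preimage, Set.mem_singleton_iff, Set.mem_inter_iff,
        Set.mem_iInter, Set.mem_setOf_eq, hR]
      rw [Nat.findGreatest_eq_iff]
    rw [hset]
    apply MeasurableSet.inter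
    · by_cases hn : n ≤ s
      · have : {q : Fin M → ℝ | n ≤ s} = Set.univ := by ext q; simp [hn]
        rw [this]; exact MeasurableSet.univ
      · have : {q : Fin M → ℝ | n ≤ s} = ∅ := by ext q; simp [hn]
        rw [this]; exact MeasurableSet.empty
    apply MeasurableSet.inter
    · by_cases hn : n = 0
      · have : {q : Fin M → ℝ | n ≠ 0 → P q n} = Set.univ := by ext q; simp [hn]
        rw [this]; exact MeasurableSet.univ
      · have : {q : Fin M → ℝ | n ≠ 0 → P q n} = {q | P q n} := by ext q; simp [hn]
        rw [this]; exact hPmeas n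
    · apply MeasurableSet.iInter
      intro m
      by_cases hm : n < m ∧ m ≤ s
      · have : {q : Fin M → ℝ | n < m → m ≤ s → ¬ P q m} = {q | P q m}ᶜ := by
          ext q; simp [hm.1, hm.2]
        rw [this]; exact (hPmeas m).compl
      · have : {q : Fin M → ℝ | n < m → m ≤ s → ¬ P q m} = Set.univ := by
          ext q
          simp only [Set.mem_setOf_eq, Set.mem_univ, iff_true]
          intro h1 h2
          exact absurd ⟨h1, h2⟩ hm
        rw [this]; exact MeasurableSet.univ
  -- the dependency function g
  set g : (Fin M → ℝ) → ℝ := fun q => (R q : ℝ) * (c * f q) / s with hg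
  have hganti : Antitone g := by
    intro q q' hqq'
    have hRle : R q' ≤ R q := by
      apply Nat.findGreatest_mono_left
      intro k hk
      refine le_trans hk ?_
      have hsub : (A.filter fun i => q' i ≤ (k:ℝ) * (c * f q') / s) ⊆
          (A.filter fun i => q i ≤ (k:ℝ) * (c * f q) / s) := by
        intro i hi
        obtain ⟨hiA, hile⟩ := Finset.mem_filter.mp hi
        refine Finset.mem_filter.mpr ⟨hiA, ?_⟩
        have h1 : q i ≤ q' i := hqq' i
        have h2 : f q' ≤ f q := hf hqq'
        have h3 : (k:ℝ) * (c * f q') / s ≤ (k:ℝ) * (c * f q) / s := by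
          apply div_le_div_of_nonneg_right ?_ hspos.le
          apply mul_le_mul_of_nonneg_left ?_ (by positivity)
          exact mul_le_mul_of_nonneg_left h2 hc.le
        linarith
      exact_mod_cast Finset.card_le_card hsub
    have h2 : f q' ≤ f q := hf hqq'
    apply div_le_div_of_nonneg_right ?_ hspos.le
    apply mul_le_mul
    · exact_mod_cast hRle
    · exact mul_le_mul_of_nonneg_left h2 hc.le
    · exact mul_nonneg hc.le (hf0 q')
    · positivity
  have hg0 : ∀ q, 0 ≤ g q := fun q => by
    have := hf0 q
    positivity
  have hgm : Measurable g := by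
    apply Measurable.div_const
    exact (measurable_from_top.comp hRmeas).mul (hfm.const_mul c)
  -- the simes event in terms of R
  have hsimes_iff : ∀ q, (simesP A q s ≤ c * f q ↔ 1 ≤ R q) := by
    intro q
    rw [simes_le_iff A q s hs hcard]
    constructor
    · rintro ⟨k, hk1, hks, hkcard⟩
      exact le_trans hk1 (Nat.le_findGreatest hks hkcard)
    · intro h1
      obtain ⟨n, hn0, hns, hPn⟩ := Nat.findGreatest_pos.mp h1
      exact ⟨n, hn0, hns, hPn⟩
  -- rewrite the integrand
  have hinteq : (fun ω => if simesP A (p ω) s ≤ c * f (p ω) then (f (p ω))⁻¹ else 0)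
      = fun ω => if 1 ≤ R (p ω) then (f (p ω))⁻¹ else 0 := by
    funext ω
    by_cases h : simesP A (p ω) s ≤ c * f (p ω)
    · rw [if_pos h, if_pos ((hsimes_iff (p ω)).mp h)]
    · rw [if_neg h, if_neg (fun h2 => h ((hsimes_iff (p ω)).mpr h2))]
  rw [hinteq]
  -- measurability of the new integrand
  have hImeas : Measurable fun ω => if 1 ≤ R (p ω) then (f (p ω))⁻¹ else 0 := by
    have h1 : MeasurableSet {ω | 1 ≤ R (p ω)} := by
      have : {ω | 1 ≤ R (p ω)} = p ⁻¹' (R ⁻¹' (Set.Ici 1)) := rfl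
      rw [this]
      exact hp (hRmeas (measurableSet_Ici))
    exact Measurable.ite h1 ((hfm.comp hp).inv) measurable_const
  -- pass to lintegral
  rw [integral_eq_lintegral_of_nonneg_ae
    (Filter.Eventually.of_forall (fun ω => by
      split
      · exact inv_nonneg.mpr (hf0 (p ω))
      · exact le_rfl))
    hImeas.aestronglyMeasurable]
  -- pointwise bound
  have hptwise : ∀ ω, ENNReal.ofReal (if 1 ≤ R (p ω) then (f (p ω))⁻¹ else 0)
      ≤ ∑ j ∈ A, ENNReal.ofReal ((c/s) * (if p ω j ≤ g (p ω) then (g (p ω))⁻¹ else 0)) := by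
    intro ω
    set q := p ω with hq
    rw [← ENNReal.ofReal_sum_of_nonneg (fun j _ => by
      have h1 : (0:ℝ) ≤ (if q j ≤ g q then (g q)⁻¹ else 0) := by
        split
        · exact inv_nonneg.mpr (hg0 q)
        · exact le_rfl
      positivity)]
    apply ENNReal.ofReal_le_ofReal
    by_cases h : 1 ≤ R q
    · rw [if_pos h]
      by_cases hfq : f q = 0
      · rw [hfq]
        simp only [inv_zero]
        apply Finset.sum_nonneg
        intro j _
        have h1 : (0:ℝ) ≤ (if q j ≤ g q then (g q)⁻¹ else 0) := by
          split
          · exact inv_nonneg.mpr (hg0 q)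
          · exact le_rfl
        positivity
      · have hfqpos : 0 < f q := lt_of_le_of_ne (hf0 q) (Ne.symm hfq)
        have hRpos : (0:ℝ) < (R q : ℝ) := by exact_mod_cast h
        have hgqpos : 0 < g q := by
          rw [hg]
          positivity
        -- self-consistency
        obtain ⟨n, hn0, hns, hPn⟩ := Nat.findGreatest_pos.mp h
        have hcons : P q (R q) := Nat.findGreatest_spec hns hPn
        have hconsR : (R q : ℝ) ≤
            ((A.filter fun i => q i ≤ g q).card : ℝ) := by
          have : (R q : ℝ) * (c * f q) / s = g q := rfl
          rw [← this]
          exact hcons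
        -- sum computation
        have hsum_eq : ∑ j ∈ A, ((c/s) * (if q j ≤ g q then (g q)⁻¹ else 0))
            = (c/s) * (g q)⁻¹ * ((A.filter fun i => q i ≤ g q).card : ℝ) := by
          rw [Finset.card_filter]
          push_cast
          rw [Finset.mul_sum]
          apply Finset.sum_congr rfl
          intro j _
          by_cases hj : q j ≤ g q
          · rw [if_pos hj, if_pos hj]; ring
          · rw [if_neg hj, if_neg hj]; ring
        rw [hsum_eq]
        have hkey : (f q)⁻¹ = (c/s) * (g q)⁻¹ * (R q : ℝ) := by
          rw [hg]
          field_simp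
        rw [hkey]
        apply mul_le_mul_of_nonneg_left hconsR (by positivity)
    · rw [if_neg h]
      apply Finset.sum_nonneg
      intro j _
      have h1 : (0:ℝ) ≤ (if q j ≤ g q then (g q)⁻¹ else 0) := by
        split
        · exact inv_nonneg.mpr (hg0 q)
        · exact le_rfl
      positivity
  -- integrate the bound
  have hGmeas : ∀ j : Fin M, Measurable fun ω =>
      ENNReal.ofReal ((c/s) * (if p ω j ≤ g (p ω) then (g (p ω))⁻¹ else 0)) := by
    intro j
    apply Measurable.ennreal_ofReal
    apply Measurable.const_mul
    exact Measurable.ite (measurableSet_le ((measurable_pi_apply j).comp hp) (hgm.comp hp))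
      ((hgm.comp hp).inv) measurable_const
  have hmain : ∫⁻ ω, ENNReal.ofReal (if 1 ≤ R (p ω) then (f (p ω))⁻¹ else 0) ∂μ
      ≤ ENNReal.ofReal c := by
    refine le_trans (lintegral_mono hptwise) ?_
    rw [lintegral_finset_sum _ (fun j _ => hGmeas j)]
    have hterm : ∀ j ∈ A, ∫⁻ ω, ENNReal.ofReal
        ((c/s) * (if p ω j ≤ g (p ω) then (g (p ω))⁻¹ else 0)) ∂μ ≤ ENNReal.ofReal (c/s) := by
      intro j hj
      have heq : ∀ ω, ENNReal.ofReal ((c/s) * (if p ω j ≤ g (p ω) then (g (p ω))⁻¹ else 0))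
          = ENNReal.ofReal (c/s) * ENNReal.ofReal (if p ω j ≤ g (p ω) then (g (p ω))⁻¹ else 0) := by
        intro ω
        rw [← ENNReal.ofReal_mul (by positivity)]
      simp_rw [heq]
      rw [lintegral_const_mul _ (by
        exact Measurable.ennreal_ofReal (Measurable.ite
          (measurableSet_le ((measurable_pi_apply j).comp hp) (hgm.comp hp))
          ((hgm.comp hp).inv) measurable_const))]
      calc ENNReal.ofReal (c/s) * ∫⁻ ω, ENNReal.ofReal
            (if p ω j ≤ g (p ω) then (g (p ω))⁻¹ else 0) ∂μ
          ≤ ENNReal.ofReal (c/s) * 1 := by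
            apply mul_le_mul_right
            exact su_lemma μ p hp hrange T hPRDS hsuper j (hAT j hj) g hganti hg0 hgm
        _ = ENNReal.ofReal (c/s) := by rw [mul_one]
    calc ∑ j ∈ A, ∫⁻ ω, ENNReal.ofReal
          ((c/s) * (if p ω j ≤ g (p ω) then (g (p ω))⁻¹ else 0)) ∂μ
        ≤ ∑ _j ∈ A, ENNReal.ofReal (c/s) := Finset.sum_le_sum hterm
      _ = (A.card : ℝ≥0∞) * ENNReal.ofReal (c/s) := by
          rw [Finset.sum_const, nsmul_eq_mul]
      _ = ENNReal.ofReal c := by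
          rw [hcard]
          rw [show ((s:ℕ) : ℝ≥0∞) = ENNReal.ofReal ((s:ℕ) : ℝ) by
            rw [ENNReal.ofReal_natCast]]
          rw [← ENNReal.ofReal_mul (by positivity)]
          congr 1
          field_simp
  exact ENNReal.toReal_le_of_le_ofReal hc.le hmain
end
end
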